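/- arXiv:1501.00363 — 9 statements merged into one kernel-verified Lean document; each statement's English description precedes it below -/
import Mathlib

section
/- Let d ≥ 2 and 0 ≤ k ≤ d−2 be integers, b > 0, and ν < 0. For β ≥ 0 define the series A(β) = Σ_{n∈ℕ^d} (Π_{i=1}^d β^{n_i}/n_i!) · exp(ν b^k C(n)), where C(n) = 1 + Σ_{∅≠F⊆{1,…,d}, |F|≤d−k} Π_{j∈F} n_j, and B(β) = Σ_{n∈ℕ^d} (Π_{i=1}^d β^{n_i}/n_i!) · exp(ν (2b)^k Σ_{S⊆{1,…,d}, |S|=d−k} Π_{i∈S} n_i). Then lim_{β→∞} β^{d−k} · A(β)/B(β) = 0. -/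
open Filter

lemma real_exp_tsum (x : ℝ) : Real.exp x = ∑' n : ℕ, x ^ n / (n.factorial : ℝ) := by
  rw [Real.exp_eq_exp_ℝ, NormedSpace.exp_eq_tsum_div]

lemma pi_tsum_prod : ∀ (d : ℕ) (g : Fin d → ℕ → ℝ), (∀ i m, 0 ≤ g i m) → (∀ i, Summable (g i)) →
    Summable (fun n : Fin d → ℕ => ∏ i, g i (n i)) ∧
      (∑' n : Fin d → ℕ, ∏ i, g i (n i)) = ∏ i, ∑' m, g i m := by
  intro d
  induction d with
  | zero =>
    intro g _ _
    refine ⟨.of_finite, by simp⟩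
  | succ d ih =>
    intro g hg0 hgs
    obtain ⟨ihS, ihT⟩ := ih (fun i => g i.succ) (fun i m => hg0 _ m) (fun i => hgs _)
    let e : (Fin (d+1) → ℕ) ≃ ℕ × (Fin d → ℕ) :=
      { toFun := fun n => (n 0, fun i => n i.succ)
        invFun := fun p => Fin.cons p.1 p.2
        left_inv := fun n => Fin.cons_self_tail n
        right_inv := fun p => by simp [Fin.cons_zero, Fin.cons_succ] }
    have hFs : Summable (fun p : ℕ × (Fin d → ℕ) => g 0 p.1 * ∏ i, g i.succ (p.2 i)) := by
      apply Summable.mul_of_nonneg (hgs 0) ihS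
      · exact fun m => hg0 0 m
      · exact fun m => Finset.prod_nonneg fun i _ => hg0 _ _
    have key : ∀ n : Fin (d+1) → ℕ,
        (∏ i, g i (n i)) = g 0 ((e n).1) * ∏ i, g i.succ ((e n).2 i) := fun n => by
      rw [Fin.prod_univ_succ]; rfl
    constructor
    · exact ((e.summable_iff
        (f := fun p : ℕ × (Fin d → ℕ) => g 0 p.1 * ∏ i, g i.succ (p.2 i))).mpr hFs).congr
        (fun n => (key n).symm)
    · calc (∑' n : Fin (d+1) → ℕ, ∏ i, g i (n i))
          = ∑' n : Fin (d+1) → ℕ, g 0 ((e n).1) * ∏ i, g i.succ ((e n).2 i) := tsum_congr key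
        _ = ∑' p : ℕ × (Fin d → ℕ), g 0 p.1 * ∏ i, g i.succ (p.2 i) :=
            e.tsum_eq (f := fun p : ℕ × (Fin d → ℕ) => g 0 p.1 * ∏ i, g i.succ (p.2 i))
        _ = (∑' m, g 0 m) * ∑' n : Fin d → ℕ, ∏ i, g i.succ (n i) := by
            refine (tsum_mul_tsum_of_summable_norm (f := g 0)
              (g := fun n : Fin d → ℕ => ∏ i, g i.succ (n i)) ?_ ?_).symm
            · simpa only [Real.norm_eq_abs, abs_of_nonneg (hg0 0 _)] using hgs 0
            · refine ihS.congr fun m => ?_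
              rw [Real.norm_eq_abs, abs_of_nonneg (Finset.prod_nonneg fun i _ => hg0 _ _)]
        _ = ∏ i, ∑' m, g i m := by rw [ihT, ← Fin.prod_univ_succ (fun i => ∑' m, g i m)]

lemma sum_filter_ge_singletons (d k : ℕ) (hdk : 2 ≤ d - k) (n : Fin d → ℕ) :
    (∑ j, (n j : ℝ)) ≤ ∑ F ∈ Finset.univ.powerset.filter
      (fun F : Finset (Fin d) => F.Nonempty ∧ F.card ≤ d - k), ∏ j ∈ F, (n j : ℝ) := by
  have h1 : (∑ j, (n j : ℝ)) =
      ∑ F ∈ Finset.univ.image (fun j : Fin d => ({j} : Finset (Fin d))), ∏ j ∈ F, (n j : ℝ) := by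
    rw [Finset.sum_image (by intro a _ b _ h; exact Finset.singleton_injective h)]
    simp
  rw [h1]
  apply Finset.sum_le_sum_of_subset_of_nonneg
  · intro F hF
    simp only [Finset.mem_image] at hF
    obtain ⟨j, _, rfl⟩ := hF
    simp only [Finset.mem_filter, Finset.mem_powerset]
    exact ⟨Finset.subset_univ _, Finset.singleton_nonempty _, by simpa using by omega⟩
  · intro F _ _
    exact Finset.prod_nonneg fun j _ => Nat.cast_nonneg _

lemma sum_filter_ge_pairs (d k : ℕ) (hdk : 2 ≤ d - k) (n : Fin d → ℕ) (i : Fin d) :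
    (∑ j, (n j : ℝ)) + ∑ j ∈ Finset.univ.erase i, (n i : ℝ) * (n j : ℝ) ≤
    ∑ F ∈ Finset.univ.powerset.filter
      (fun F : Finset (Fin d) => F.Nonempty ∧ F.card ≤ d - k), ∏ j ∈ F, (n j : ℝ) := by
  classical
  set T1 := Finset.univ.image (fun j : Fin d => ({j} : Finset (Fin d))) with hT1
  set T2 := (Finset.univ.erase i).image (fun j : Fin d => ({i, j} : Finset (Fin d))) with hT2
  have hdisj : Disjoint T1 T2 := by
    rw [Finset.disjoint_left]
    intro F hF1 hF2
    simp only [hT1, hT2, Finset.mem_image, Finset.mem_erase] at hF1 hF2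
    obtain ⟨j, _, rfl⟩ := hF1
    obtain ⟨l, ⟨hl, _⟩, hpair⟩ := hF2
    have : ({i, l} : Finset (Fin d)).card = 2 := by
      rw [Finset.card_insert_of_notMem (by simpa using (Ne.symm hl)), Finset.card_singleton]
    rw [hpair] at this
    simp at this
  have hsum1 : ∑ F ∈ T1, ∏ j ∈ F, (n j : ℝ) = ∑ j, (n j : ℝ) := by
    rw [hT1, Finset.sum_image (by intro a _ b _ h; exact Finset.singleton_injective h)]
    simp
  have hsum2 : ∑ F ∈ T2, ∏ j ∈ F, (n j : ℝ) = ∑ j ∈ Finset.univ.erase i, (n i : ℝ) * (n j : ℝ) := by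
    rw [hT2, Finset.sum_image]
    · apply Finset.sum_congr rfl
      intro j hj
      exact Finset.prod_pair (Ne.symm (Finset.mem_erase.mp hj).1)
    · intro a ha b hb h
      have hai : a ≠ i := by simpa using (Finset.mem_erase.mp ha).1
      have : a ∈ ({i, b} : Finset (Fin d)) := (show ({i, a} : Finset (Fin d)) = {i, b} from h) ▸ (by simp)
      simpa [hai] using this
  calc (∑ j, (n j : ℝ)) + ∑ j ∈ Finset.univ.erase i, (n i : ℝ) * (n j : ℝ)
      = ∑ F ∈ T1 ∪ T2, ∏ j ∈ F, (n j : ℝ) := by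
        rw [Finset.sum_union hdisj, hsum1, hsum2]
    _ ≤ _ := by
        apply Finset.sum_le_sum_of_subset_of_nonneg
        · intro F hF
          simp only [Finset.mem_union, hT1, hT2, Finset.mem_image, Finset.mem_erase] at hF
          simp only [Finset.mem_filter, Finset.mem_powerset]
          refine ⟨Finset.subset_univ _, ?_⟩
          rcases hF with ⟨j, _, rfl⟩ | ⟨j, ⟨hj, _⟩, rfl⟩
          · exact ⟨Finset.singleton_nonempty _, by simpa using by omega⟩
          · refine ⟨Finset.insert_nonempty _ _, ?_⟩
            have : ({i, j} : Finset (Fin d)).card = 2 := by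
              rw [Finset.card_insert_of_notMem (by simpa using (Ne.symm hj)),
                Finset.card_singleton]
            omega
        · intro F _ _
          exact Finset.prod_nonneg fun j _ => Nat.cast_nonneg _

set_option maxHeartbeats 2000000 in
/-- For the facet submodel series, `β^(d-k) * A(β)/B(β) → 0` as `β → ∞`. -/
theorem facet_correlation_vanishes
    (d k : ℕ) (hd : 2 ≤ d) (hk : k ≤ d - 2) (b ν : ℝ) (hb : 0 < b) (hν : ν < 0)
    (A B : ℝ → ℝ)
    (hA : ∀ β : ℝ, A β =
      ∑' n : Fin d → ℕ,
        (∏ i, β ^ (n i) / ((n i).factorial : ℝ)) *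
          Real.exp (ν * b ^ k *
            (1 + ∑ F ∈ Finset.univ.powerset.filter
                  (fun F : Finset (Fin d) => F.Nonempty ∧ F.card ≤ d - k),
                ∏ j ∈ F, (n j : ℝ))))
    (hB : ∀ β : ℝ, B β =
      ∑' n : Fin d → ℕ,
        (∏ i, β ^ (n i) / ((n i).factorial : ℝ)) *
          Real.exp (ν * (2 * b) ^ k *
            ∑ S ∈ Finset.univ.powerset.filter
                  (fun S : Finset (Fin d) => S.card = d - k),
              ∏ i ∈ S, (n i : ℝ))) :
    Tendsto (fun β : ℝ => β ^ (d - k) * (A β / B β)) atTop (nhds 0) := by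
  classical
  have hdk2 : 2 ≤ d - k := by omega
  have hc0 : ν * b ^ k < 0 := mul_neg_of_neg_of_pos hν (pow_pos hb k)
  set q : ℝ := Real.exp (ν * b ^ k) with hqdef
  have hq0 : 0 < q := Real.exp_pos _
  have hq1 : q < 1 := Real.exp_lt_one_iff.mpr hc0
  obtain ⟨L, hL⟩ := exists_pow_lt_of_lt_one
    (show (0:ℝ) < (1 - q) / (2 * d) by
      apply div_pos (by linarith) (by positivity)) hq1
  set q2 : ℝ := Real.exp (ν * b ^ k * (L + 2)) with hq2def
  have hq2 : q2 = q ^ (L + 2) := by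
    rw [hq2def, hqdef, show ν * b ^ k * (L + 2) = ((L + 2 : ℕ) : ℝ) * (ν * b ^ k) by
      push_cast; ring, Real.exp_nat_mul]
  have hq20 : 0 < q2 := Real.exp_pos _
  have hqL : (d : ℝ) * q2 ≤ (1 - q) / 2 := by
    have h1 : q ^ (L + 2) ≤ q ^ L :=
      pow_le_pow_of_le_one hq0.le hq1.le (by omega)
    have hd0 : (0:ℝ) < d := by positivity
    rw [hq2]
    calc (d : ℝ) * q ^ (L + 2) ≤ (d : ℝ) * q ^ L := by nlinarith
      _ ≤ (d : ℝ) * ((1 - q) / (2 * d)) := by nlinarith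
      _ = (1 - q) / 2 := by field_simp
  set c' : ℝ := (1 + q) / 2 with hc'def
  have hc'1 : c' < 1 := by rw [hc'def]; linarith
  have hc'0 : 0 < c' := by rw [hc'def]; linarith
  have h1c' : (0:ℝ) < 1 - c' := by linarith
  set N : ℕ := (d - k) + L * d with hNdef
  set C₁ : ℝ := ((L:ℝ) + 1) ^ d * 2 ^ (L * d) with hC₁def
  set C₂ : ℝ := (d : ℝ) / (1 - c') ^ (d - k) with hC₂def
  -- the dominating function
  set V : ℝ → ℝ := fun β => C₁ * (β ^ N * Real.exp (-β)) +
    C₂ * (((1 - c') * β) ^ (d - k) * Real.exp (-((1 - c') * β))) with hVdef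
  have hVtend : Tendsto V atTop (nhds 0) := by
    have t1 : Tendsto (fun β : ℝ => C₁ * (β ^ N * Real.exp (-β))) atTop (nhds 0) := by
      simpa using (Real.tendsto_pow_mul_exp_neg_atTop_nhds_zero N).const_mul C₁
    have t2' : Tendsto (fun β : ℝ => (1 - c') * β) atTop atTop :=
      Tendsto.const_mul_atTop h1c' tendsto_id
    have t2 : Tendsto (fun β : ℝ =>
        C₂ * (((1 - c') * β) ^ (d - k) * Real.exp (-((1 - c') * β)))) atTop (nhds 0) := by
      simpa using ((Real.tendsto_pow_mul_exp_neg_atTop_nhds_zero (d - k)).comp t2').const_mul C₂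
    simpa using t1.add t2
  have main : ∀ β : ℝ, 1 ≤ β →
      0 ≤ β ^ (d - k) * (A β / B β) ∧ β ^ (d - k) * (A β / B β) ≤ V β := by
    intro β hβ
    have hβ0 : (0:ℝ) ≤ β := by linarith
    obtain ⟨hP0s, hP0t⟩ := pi_tsum_prod d (fun _ m => β ^ m / (m.factorial : ℝ))
      (fun i m => by positivity) (fun i => Real.summable_pow_div_factorial β)
    have hprod0 : ∀ n : Fin d → ℕ, 0 ≤ ∏ i, β ^ (n i) / ((n i).factorial : ℝ) :=
      fun n => Finset.prod_nonneg fun i _ => by positivity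
    -- nonnegativity of the A-terms
    have hfA0 : ∀ n : Fin d → ℕ, 0 ≤
        (∏ i, β ^ (n i) / ((n i).factorial : ℝ)) *
          Real.exp (ν * b ^ k *
            (1 + ∑ F ∈ Finset.univ.powerset.filter
                  (fun F : Finset (Fin d) => F.Nonempty ∧ F.card ≤ d - k),
                ∏ j ∈ F, (n j : ℝ))) :=
      fun n => mul_nonneg (hprod0 n) (Real.exp_pos _).le
    have hfB0 : ∀ n : Fin d → ℕ, 0 ≤
        (∏ i, β ^ (n i) / ((n i).factorial : ℝ)) *
          Real.exp (ν * (2 * b) ^ k *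
            ∑ S ∈ Finset.univ.powerset.filter
                  (fun S : Finset (Fin d) => S.card = d - k),
              ∏ i ∈ S, (n i : ℝ)) :=
      fun n => mul_nonneg (hprod0 n) (Real.exp_pos _).le
    -- the A-terms and B-terms are at most the base product
    have hfAle : ∀ n : Fin d → ℕ,
        (∏ i, β ^ (n i) / ((n i).factorial : ℝ)) *
          Real.exp (ν * b ^ k *
            (1 + ∑ F ∈ Finset.univ.powerset.filter
                  (fun F : Finset (Fin d) => F.Nonempty ∧ F.card ≤ d - k),
                ∏ j ∈ F, (n j : ℝ))) ≤ ∏ i, β ^ (n i) / ((n i).factorial : ℝ) := by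
      intro n
      have hs0 : (0:ℝ) ≤ 1 + ∑ F ∈ Finset.univ.powerset.filter
          (fun F : Finset (Fin d) => F.Nonempty ∧ F.card ≤ d - k), ∏ j ∈ F, (n j : ℝ) := by
        have : (0:ℝ) ≤ ∑ F ∈ Finset.univ.powerset.filter
            (fun F : Finset (Fin d) => F.Nonempty ∧ F.card ≤ d - k), ∏ j ∈ F, (n j : ℝ) :=
          Finset.sum_nonneg fun F _ => Finset.prod_nonneg fun j _ => Nat.cast_nonneg _
        linarith
      have : Real.exp (ν * b ^ k *
          (1 + ∑ F ∈ Finset.univ.powerset.filter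
            (fun F : Finset (Fin d) => F.Nonempty ∧ F.card ≤ d - k),
              ∏ j ∈ F, (n j : ℝ))) ≤ 1 :=
        Real.exp_le_one_iff.mpr (mul_nonpos_of_nonpos_of_nonneg hc0.le hs0)
      calc _ ≤ (∏ i, β ^ (n i) / ((n i).factorial : ℝ)) * 1 :=
            mul_le_mul_of_nonneg_left this (hprod0 n)
        _ = _ := mul_one _
    have hfBle : ∀ n : Fin d → ℕ,
        (∏ i, β ^ (n i) / ((n i).factorial : ℝ)) *
          Real.exp (ν * (2 * b) ^ k *
            ∑ S ∈ Finset.univ.powerset.filter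
                  (fun S : Finset (Fin d) => S.card = d - k),
              ∏ i ∈ S, (n i : ℝ)) ≤ ∏ i, β ^ (n i) / ((n i).factorial : ℝ) := by
      intro n
      have hs0 : (0:ℝ) ≤ ∑ S ∈ Finset.univ.powerset.filter
          (fun S : Finset (Fin d) => S.card = d - k), ∏ i ∈ S, (n i : ℝ) :=
        Finset.sum_nonneg fun S _ => Finset.prod_nonneg fun j _ => Nat.cast_nonneg _
      have hc0' : ν * (2 * b) ^ k ≤ 0 :=
        (mul_neg_of_neg_of_pos hν (pow_pos (by linarith) k)).le
      have : Real.exp (ν * (2 * b) ^ k *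
          ∑ S ∈ Finset.univ.powerset.filter
            (fun S : Finset (Fin d) => S.card = d - k), ∏ i ∈ S, (n i : ℝ)) ≤ 1 :=
        Real.exp_le_one_iff.mpr (mul_nonpos_of_nonpos_of_nonneg hc0' hs0)
      calc _ ≤ (∏ i, β ^ (n i) / ((n i).factorial : ℝ)) * 1 :=
            mul_le_mul_of_nonneg_left this (hprod0 n)
        _ = _ := mul_one _
    have hfAs : Summable (fun n : Fin d → ℕ =>
        (∏ i, β ^ (n i) / ((n i).factorial : ℝ)) *
          Real.exp (ν * b ^ k *
            (1 + ∑ F ∈ Finset.univ.powerset.filter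
                  (fun F : Finset (Fin d) => F.Nonempty ∧ F.card ≤ d - k),
                ∏ j ∈ F, (n j : ℝ)))) :=
      Summable.of_nonneg_of_le hfA0 hfAle hP0s
    have hfBs : Summable (fun n : Fin d → ℕ =>
        (∏ i, β ^ (n i) / ((n i).factorial : ℝ)) *
          Real.exp (ν * (2 * b) ^ k *
            ∑ S ∈ Finset.univ.powerset.filter
                  (fun S : Finset (Fin d) => S.card = d - k),
              ∏ i ∈ S, (n i : ℝ))) :=
      Summable.of_nonneg_of_le hfB0 hfBle hP0s
    -- lower bound for B
    have hBlb : Real.exp β ≤ B β := by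
      rw [hB β, real_exp_tsum β]
      have hd0 : 0 < d := by omega
      set i0 : Fin d := ⟨0, hd0⟩ with hi0
      apply Summable.tsum_le_tsum_of_inj (fun m : ℕ => fun i : Fin d => if i = i0 then m else 0)
      · intro a a' haa'
        have := congrFun haa' i0
        simpa using this
      · intro n _
        exact hfB0 n
      · intro m
        have hS0 : ∑ S ∈ Finset.univ.powerset.filter
            (fun S : Finset (Fin d) => S.card = d - k),
              ∏ i ∈ S, (((if i = i0 then m else 0) : ℕ) : ℝ) = 0 := by
          apply Finset.sum_eq_zero
          intro S hS
          have hcard : 1 < S.card := by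
            simp only [Finset.mem_filter] at hS
            omega
          obtain ⟨x, hx, y, hy, hxy⟩ := Finset.one_lt_card.mp hcard
          rcases eq_or_ne x i0 with rfl | hxi0
          · refine Finset.prod_eq_zero hy ?_
            rw [if_neg (Ne.symm hxy)]
            simp
          · refine Finset.prod_eq_zero hx ?_
            rw [if_neg hxi0]
            simp
        rw [hS0]
        have hprodm : ∏ i : Fin d, β ^ ((if i = i0 then m else 0) : ℕ) /
            (((if i = i0 then m else 0) : ℕ).factorial : ℝ) = β ^ m / (m.factorial : ℝ) := by
          rw [Finset.prod_eq_single i0]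
          · simp
          · intro j _ hj
            simp [hj]
          · intro h
            exact absurd (Finset.mem_univ i0) h
        rw [hprodm, mul_zero, Real.exp_zero, mul_one]
      · exact Real.summable_pow_div_factorial β
      · exact hfBs
    -- the comparison families
    have hg0nn : ∀ m : ℕ, 0 ≤ (if m ≤ L then (q * β) ^ m / (m.factorial : ℝ) else 0) := by
      intro m; split <;> positivity
    have hg0s : Summable (fun m : ℕ => if m ≤ L then (q * β) ^ m / (m.factorial : ℝ) else 0) := by
      refine Summable.of_nonneg_of_le hg0nn (fun m => ?_) (Real.summable_pow_div_factorial (q * β))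
      split
      · exact le_rfl
      · positivity
    have hhnn : ∀ i j : Fin d, ∀ m : ℕ, 0 ≤ (if j = i then (q * β) ^ m / (m.factorial : ℝ)
        else (q2 * β) ^ m / (m.factorial : ℝ)) := by
      intro i j m; split <;> positivity
    have hhs : ∀ i j : Fin d, Summable (fun m : ℕ => if j = i then
        (q * β) ^ m / (m.factorial : ℝ) else (q2 * β) ^ m / (m.factorial : ℝ)) := by
      intro i j
      split
      · exact Real.summable_pow_div_factorial (q * β)
      · exact Real.summable_pow_div_factorial (q2 * β)
    obtain ⟨hG0s, hG0t⟩ := pi_tsum_prod d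
      (fun _ m => if m ≤ L then (q * β) ^ m / (m.factorial : ℝ) else 0)
      (fun _ m => hg0nn m) (fun _ => hg0s)
    have hH := fun i : Fin d => pi_tsum_prod d
      (fun j m => if j = i then (q * β) ^ m / (m.factorial : ℝ)
        else (q2 * β) ^ m / (m.factorial : ℝ)) (hhnn i) (hhs i)
    -- the pointwise bound
    have hpoint : ∀ n : Fin d → ℕ,
        (∏ i, β ^ (n i) / ((n i).factorial : ℝ)) *
          Real.exp (ν * b ^ k *
            (1 + ∑ F ∈ Finset.univ.powerset.filter
                  (fun F : Finset (Fin d) => F.Nonempty ∧ F.card ≤ d - k),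
                ∏ j ∈ F, (n j : ℝ))) ≤
        (∏ j, if n j ≤ L then (q * β) ^ (n j) / ((n j).factorial : ℝ) else 0) +
          ∑ i, ∏ j, (if j = i then (q * β) ^ (n j) / ((n j).factorial : ℝ)
            else (q2 * β) ^ (n j) / ((n j).factorial : ℝ)) := by
      intro n
      have hsum_nonneg : (0:ℝ) ≤ ∑ i, ∏ j, (if j = i then (q * β) ^ (n j) / ((n j).factorial : ℝ)
          else (q2 * β) ^ (n j) / ((n j).factorial : ℝ)) :=
        Finset.sum_nonneg fun i _ => Finset.prod_nonneg fun j _ => hhnn i j (n j)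
      by_cases hall : ∀ j, n j ≤ L
      · -- small case
        have h1 : Real.exp (ν * b ^ k *
            (1 + ∑ F ∈ Finset.univ.powerset.filter
              (fun F : Finset (Fin d) => F.Nonempty ∧ F.card ≤ d - k), ∏ j ∈ F, (n j : ℝ))) ≤
            Real.exp (ν * b ^ k * ∑ j, (n j : ℝ)) := by
          apply Real.exp_le_exp.mpr
          apply mul_le_mul_of_nonpos_left ?_ hc0.le
          have := sum_filter_ge_singletons d k hdk2 n
          linarith
        have h2 : Real.exp (ν * b ^ k * ∑ j, (n j : ℝ)) = ∏ j, q ^ (n j) := by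
          rw [Finset.mul_sum, Real.exp_sum]
          apply Finset.prod_congr rfl
          intro j _
          rw [mul_comm (ν * b ^ k), Real.exp_nat_mul]
        have h3 : (∏ i, β ^ (n i) / ((n i).factorial : ℝ)) * ∏ j, q ^ (n j) =
            ∏ j, if n j ≤ L then (q * β) ^ (n j) / ((n j).factorial : ℝ) else 0 := by
          rw [← Finset.prod_mul_distrib]
          apply Finset.prod_congr rfl
          intro j _
          rw [if_pos (hall j), mul_pow]
          ring
        calc _ ≤ (∏ i, β ^ (n i) / ((n i).factorial : ℝ)) *
              Real.exp (ν * b ^ k * ∑ j, (n j : ℝ)) :=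
              mul_le_mul_of_nonneg_left h1 (hprod0 n)
          _ = ∏ j, if n j ≤ L then (q * β) ^ (n j) / ((n j).factorial : ℝ) else 0 := by
              rw [h2, h3]
          _ ≤ _ := le_add_of_nonneg_right hsum_nonneg
      · -- large case
        push_neg at hall
        obtain ⟨i, hi⟩ := hall
        have hni : (L : ℝ) + 1 ≤ (n i : ℝ) := by exact_mod_cast hi
        have hstep1 : (n i : ℝ) + ((L : ℝ) + 2) * ∑ j ∈ Finset.univ.erase i, (n j : ℝ) ≤
            (∑ j, (n j : ℝ)) + ∑ j ∈ Finset.univ.erase i, (n i : ℝ) * (n j : ℝ) := by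
          rw [← Finset.add_sum_erase _ _ (Finset.mem_univ i)]
          rw [Finset.mul_sum, add_assoc]
          apply add_le_add_right
          rw [← Finset.sum_add_distrib]
          apply Finset.sum_le_sum
          intro j _
          have hnj : (0:ℝ) ≤ (n j : ℝ) := Nat.cast_nonneg _
          nlinarith
        have h1 : Real.exp (ν * b ^ k *
            (1 + ∑ F ∈ Finset.univ.powerset.filter
              (fun F : Finset (Fin d) => F.Nonempty ∧ F.card ≤ d - k), ∏ j ∈ F, (n j : ℝ))) ≤
            Real.exp (ν * b ^ k * ((n i : ℝ) +
              ((L : ℝ) + 2) * ∑ j ∈ Finset.univ.erase i, (n j : ℝ))) := by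
          apply Real.exp_le_exp.mpr
          apply mul_le_mul_of_nonpos_left ?_ hc0.le
          have := sum_filter_ge_pairs d k hdk2 n i
          linarith
        have h2 : Real.exp (ν * b ^ k * ((n i : ℝ) +
            ((L : ℝ) + 2) * ∑ j ∈ Finset.univ.erase i, (n j : ℝ))) =
            q ^ (n i) * ∏ j ∈ Finset.univ.erase i, q2 ^ (n j) := by
          rw [mul_add, Real.exp_add]
          congr 1
          · rw [mul_comm (ν * b ^ k), Real.exp_nat_mul]
          · rw [show ν * b ^ k * (((L : ℝ) + 2) * ∑ j ∈ Finset.univ.erase i, (n j : ℝ)) =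
                ∑ j ∈ Finset.univ.erase i, (n j : ℝ) * (ν * b ^ k * ((L:ℝ) + 2)) by
                rw [← Finset.sum_mul]; ring]
            rw [Real.exp_sum]
            apply Finset.prod_congr rfl
            intro j _
            rw [Real.exp_nat_mul]
        have h3 : (∏ i', β ^ (n i') / ((n i').factorial : ℝ)) *
            (q ^ (n i) * ∏ j ∈ Finset.univ.erase i, q2 ^ (n j)) =
            ∏ j, (if j = i then (q * β) ^ (n j) / ((n j).factorial : ℝ)
              else (q2 * β) ^ (n j) / ((n j).factorial : ℝ)) := by
          have hA1 : (∏ i', β ^ (n i') / ((n i').factorial : ℝ)) =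
              β ^ (n i) / ((n i).factorial : ℝ) *
                ∏ j ∈ Finset.univ.erase i, β ^ (n j) / ((n j).factorial : ℝ) :=
            (Finset.mul_prod_erase Finset.univ _ (Finset.mem_univ i)).symm
          have hA2 : (∏ j, (if j = i then (q * β) ^ (n j) / ((n j).factorial : ℝ)
              else (q2 * β) ^ (n j) / ((n j).factorial : ℝ))) =
              (q * β) ^ (n i) / ((n i).factorial : ℝ) *
                ∏ j ∈ Finset.univ.erase i, (q2 * β) ^ (n j) / ((n j).factorial : ℝ) := by
            rw [← Finset.mul_prod_erase Finset.univ _ (Finset.mem_univ i), if_pos rfl]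
            congr 1
            apply Finset.prod_congr rfl
            intro j hj
            rw [if_neg (Finset.mem_erase.mp hj).1]
          have hA3 : ∏ j ∈ Finset.univ.erase i, (q2 * β) ^ (n j) / ((n j).factorial : ℝ) =
              (∏ j ∈ Finset.univ.erase i, β ^ (n j) / ((n j).factorial : ℝ)) *
                ∏ j ∈ Finset.univ.erase i, q2 ^ (n j) := by
            rw [← Finset.prod_mul_distrib]
            apply Finset.prod_congr rfl
            intro j _
            rw [mul_pow]
            ring
          rw [hA1, hA2, hA3, mul_pow]
          ring
        have hfirst : (∏ i', β ^ (n i') / ((n i').factorial : ℝ)) *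
            Real.exp (ν * b ^ k *
              (1 + ∑ F ∈ Finset.univ.powerset.filter
                (fun F : Finset (Fin d) => F.Nonempty ∧ F.card ≤ d - k),
                  ∏ j ∈ F, (n j : ℝ))) ≤
            ∏ j, (if j = i then (q * β) ^ (n j) / ((n j).factorial : ℝ)
              else (q2 * β) ^ (n j) / ((n j).factorial : ℝ)) := by
          calc _ ≤ (∏ i', β ^ (n i') / ((n i').factorial : ℝ)) *
                Real.exp (ν * b ^ k * ((n i : ℝ) +
                  ((L : ℝ) + 2) * ∑ j ∈ Finset.univ.erase i, (n j : ℝ))) :=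
                mul_le_mul_of_nonneg_left h1 (hprod0 n)
            _ = _ := by rw [h2, h3]
        refine hfirst.trans ?_
        have hG0nn : (0:ℝ) ≤ ∏ j, if n j ≤ L then (q * β) ^ (n j) / ((n j).factorial : ℝ)
            else 0 := Finset.prod_nonneg fun j _ => hg0nn (n j)
        refine le_add_of_nonneg_left hG0nn |>.trans ?_
        apply add_le_add_right
        apply Finset.single_le_sum (f := fun i' => ∏ j,
          (if j = i' then (q * β) ^ (n j) / ((n j).factorial : ℝ)
            else (q2 * β) ^ (n j) / ((n j).factorial : ℝ)))
          (fun i' _ => Finset.prod_nonneg fun j _ => hhnn i' j (n j)) (Finset.mem_univ i)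
    -- summing up
    have hsumH : Summable (fun n : Fin d → ℕ => ∑ i, ∏ j,
        (if j = i then (q * β) ^ (n j) / ((n j).factorial : ℝ)
          else (q2 * β) ^ (n j) / ((n j).factorial : ℝ))) :=
      summable_sum (fun i _ => (hH i).1)
    have hAub1 : A β ≤
        (∑' n : Fin d → ℕ, ∏ j, (if n j ≤ L then (q * β) ^ (n j) / ((n j).factorial : ℝ) else 0)) +
          ∑ i, ∑' n : Fin d → ℕ, ∏ j, (if j = i then (q * β) ^ (n j) / ((n j).factorial : ℝ)
            else (q2 * β) ^ (n j) / ((n j).factorial : ℝ)) := by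
      rw [hA β]
      calc _ ≤ ∑' n : Fin d → ℕ,
            ((∏ j, (if n j ≤ L then (q * β) ^ (n j) / ((n j).factorial : ℝ) else 0)) +
              ∑ i, ∏ j, (if j = i then (q * β) ^ (n j) / ((n j).factorial : ℝ)
                else (q2 * β) ^ (n j) / ((n j).factorial : ℝ))) :=
            Summable.tsum_le_tsum hpoint hfAs (hG0s.add hsumH)
        _ = _ := by rw [Summable.tsum_add hG0s hsumH, Summable.tsum_finsetSum (fun i _ => (hH i).1)]
    have htg0 : (∑' m : ℕ, (if m ≤ L then (q * β) ^ m / (m.factorial : ℝ) else 0)) ≤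
        ((L : ℝ) + 1) * (1 + β) ^ L := by
      rw [tsum_eq_sum (s := Finset.range (L + 1))
        (by intro m hm; rw [if_neg]; simp only [Finset.mem_range] at hm; omega)]
      have hb1 : ∀ m ∈ Finset.range (L + 1),
          (if m ≤ L then (q * β) ^ m / (m.factorial : ℝ) else 0) ≤ (1 + β) ^ L := by
        intro m hm
        simp only [Finset.mem_range] at hm
        rw [if_pos (by omega)]
        have h1 : (q * β) ^ m / (m.factorial : ℝ) ≤ (q * β) ^ m :=
          div_le_self (by positivity) (by exact_mod_cast m.factorial_pos)
        have h2 : (q * β) ^ m ≤ (1 + β) ^ m :=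
          pow_le_pow_left₀ (by positivity)
            (by have hq' : q * β ≤ 1 * β := mul_le_mul_of_nonneg_right hq1.le hβ0; linarith) m
        have h3 : (1 + β) ^ m ≤ (1 + β) ^ L :=
          pow_le_pow_right₀ (by linarith) (by omega)
        linarith
      calc _ ≤ ∑ _m ∈ Finset.range (L + 1), (1 + β) ^ L := Finset.sum_le_sum hb1
        _ = ((L : ℝ) + 1) * (1 + β) ^ L := by
            rw [Finset.sum_const, Finset.card_range, nsmul_eq_mul]
            push_cast
            ring
    have hG0bound : (∑' n : Fin d → ℕ,
        ∏ j, (if n j ≤ L then (q * β) ^ (n j) / ((n j).factorial : ℝ) else 0)) ≤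
        (((L : ℝ) + 1) * (1 + β) ^ L) ^ d := by
      rw [hG0t, Finset.prod_const, Finset.card_univ, Fintype.card_fin]
      exact pow_le_pow_left₀ (tsum_nonneg hg0nn) htg0 d
    have hHbound : ∀ i : Fin d, (∑' n : Fin d → ℕ,
        ∏ j, (if j = i then (q * β) ^ (n j) / ((n j).factorial : ℝ)
          else (q2 * β) ^ (n j) / ((n j).factorial : ℝ))) ≤ Real.exp (c' * β) := by
      intro i
      rw [(hH i).2]
      have hti : ∀ j : Fin d, (∑' m : ℕ, (if j = i then (q * β) ^ m / (m.factorial : ℝ)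
          else (q2 * β) ^ m / (m.factorial : ℝ))) =
          if j = i then Real.exp (q * β) else Real.exp (q2 * β) := by
        intro j
        by_cases hji : j = i
        · simp only [if_pos hji]
          exact (real_exp_tsum (q * β)).symm
        · simp only [if_neg hji]
          exact (real_exp_tsum (q2 * β)).symm
      calc ∏ j, (∑' m : ℕ, (if j = i then (q * β) ^ m / (m.factorial : ℝ)
            else (q2 * β) ^ m / (m.factorial : ℝ)))
          = ∏ j, (if j = i then Real.exp (q * β) else Real.exp (q2 * β)) :=
            Finset.prod_congr rfl (fun j _ => hti j)
        _ = Real.exp (q * β) * Real.exp (q2 * β) ^ (d - 1) := by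
            rw [← Finset.mul_prod_erase Finset.univ _ (Finset.mem_univ i), if_pos rfl]
            congr 1
            rw [Finset.prod_congr rfl (fun j hj => if_neg (Finset.mem_erase.mp hj).1),
              Finset.prod_const, Finset.card_erase_of_mem (Finset.mem_univ i),
              Finset.card_univ, Fintype.card_fin]
        _ ≤ Real.exp (c' * β) := by
            rw [← Real.exp_nat_mul, ← Real.exp_add]
            apply Real.exp_le_exp.mpr
            have hcast : ((d - 1 : ℕ) : ℝ) ≤ (d : ℝ) := by
              have h := Nat.sub_le d 1
              exact_mod_cast h
            have h5 : ((d - 1 : ℕ) : ℝ) * (q2 * β) ≤ (d : ℝ) * (q2 * β) :=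
              mul_le_mul_of_nonneg_right hcast (by positivity)
            have h6 : (d : ℝ) * (q2 * β) ≤ (1 - q) / 2 * β := by
              calc (d : ℝ) * (q2 * β) = ((d : ℝ) * q2) * β := by ring
                _ ≤ (1 - q) / 2 * β := mul_le_mul_of_nonneg_right hqL hβ0
            have h7 : c' * β = q * β + (1 - q) / 2 * β := by rw [hc'def]; ring
            linarith
    have hAub : A β ≤ (((L : ℝ) + 1) * (1 + β) ^ L) ^ d + (d : ℝ) * Real.exp (c' * β) := by
      refine hAub1.trans (add_le_add hG0bound ?_)
      calc _ ≤ ∑ _i : Fin d, Real.exp (c' * β) := Finset.sum_le_sum (fun i _ => hHbound i)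
        _ = (d : ℝ) * Real.exp (c' * β) := by
            rw [Finset.sum_const, Finset.card_univ, Fintype.card_fin, nsmul_eq_mul]
    have hA0 : 0 ≤ A β := by
      rw [hA β]
      exact tsum_nonneg hfA0
    have hB0 : 0 < B β := lt_of_lt_of_le (Real.exp_pos β) hBlb
    constructor
    · exact mul_nonneg (pow_nonneg hβ0 _) (div_nonneg hA0 hB0.le)
    · have hdiv : A β / B β ≤
          ((((L : ℝ) + 1) * (1 + β) ^ L) ^ d + (d : ℝ) * Real.exp (c' * β)) / Real.exp β :=
        div_le_div₀ (by positivity) hAub (Real.exp_pos β) hBlb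
      have hstep : β ^ (d - k) * (A β / B β) ≤
          β ^ (d - k) * (((((L : ℝ) + 1) * (1 + β) ^ L) ^ d + (d : ℝ) * Real.exp (c' * β)) /
            Real.exp β) :=
        mul_le_mul_of_nonneg_left hdiv (pow_nonneg hβ0 _)
      refine hstep.trans ?_
      have e1 : β ^ (d - k) * (((L : ℝ) + 1) * (1 + β) ^ L) ^ d ≤ C₁ * β ^ N := by
        calc β ^ (d - k) * (((L : ℝ) + 1) * (1 + β) ^ L) ^ d
            ≤ β ^ (d - k) * (((L : ℝ) + 1) * (2 * β) ^ L) ^ d := by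
              gcongr
              linarith
          _ = C₁ * β ^ N := by
              rw [hC₁def, hNdef, mul_pow ((L : ℝ) + 1) ((2 * β) ^ L) d, ← pow_mul (2 * β) L d,
                mul_pow 2 β (L * d), pow_add β (d - k) (L * d)]
              ring
      calc β ^ (d - k) * (((((L : ℝ) + 1) * (1 + β) ^ L) ^ d + (d : ℝ) * Real.exp (c' * β)) /
            Real.exp β)
          = β ^ (d - k) * (((L : ℝ) + 1) * (1 + β) ^ L) ^ d / Real.exp β +
            β ^ (d - k) * ((d : ℝ) * Real.exp (c' * β)) / Real.exp β := by ring
        _ ≤ C₁ * β ^ N / Real.exp β +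
            β ^ (d - k) * ((d : ℝ) * Real.exp (c' * β)) / Real.exp β := by
            apply add_le_add_left
            exact (div_le_div_iff_of_pos_right (Real.exp_pos β)).mpr e1
        _ = V β := by
            simp only [hVdef]
            have h3 : Real.exp (-((1 - c') * β)) = Real.exp (c' * β) / Real.exp β := by
              rw [← Real.exp_sub]
              ring_nf
            rw [h3, Real.exp_neg, hC₂def, mul_pow]
            have hpow : ((1:ℝ) - c') ^ (d - k) ≠ 0 := ne_of_gt (pow_pos h1c' (d - k))
            field_simp



  apply squeeze_zero' (t₀ := atTop) (g := V) ?_ ?_ hVtend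
  · filter_upwards [eventually_ge_atTop (1:ℝ)] with β hβ
    exact (main β hβ).1
  · filter_upwards [eventually_ge_atTop (1:ℝ)] with β hβ
    exact (main β hβ).2
end

section
/- Let d ≥ 2 and 0 ≤ k ≤ d−2 be integers, b > 0, and ν < 0. For β ≥ 0 define A(β) = Σ_{n∈ℕ^d} (Π_{i=1}^d β^{n_i}/n_i!) · exp(ν b^k C(n)), where C(n) = 1 + Σ_{∅≠F⊆{1,…,d}, |F|≤d−k} Π_{j∈F} n_j, and B(β) = Σ_{n∈ℕ^d} (Π_{i=1}^d β^{n_i}/n_i!) · exp(ν (2b)^k Σ_{S⊆{1,…,d}, |S|=d−k} Π_{i∈S} n_i). Then there exist a constant R < 0 and β₀ ≥ 0 such that A(β)/B(β) ≤ e^{Rβ} for all β ≥ β₀. -/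
set_option maxHeartbeats 1000000

open Finset Filter Real

private lemma hasSum_exp_series (x : ℝ) :
    HasSum (fun m : ℕ => x ^ m / (m.factorial : ℝ)) (Real.exp x) := by
  rw [Real.exp_eq_exp_ℝ]
  exact NormedSpace.expSeries_div_hasSum_exp x

private lemma hasSum_pi_prod : ∀ (d : ℕ) (f : Fin d → ℕ → ℝ) (a : Fin d → ℝ),
    (∀ i n, 0 ≤ f i n) → (∀ i, HasSum (f i) (a i)) →
    HasSum (fun n : Fin d → ℕ => ∏ i, f i (n i)) (∏ i, a i) := by
  intro d
  induction d with
  | zero =>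
      intro f a _ _
      have h1 : (fun n : Fin 0 → ℕ => ∏ i, f i (n i)) = fun _ => 1 := by
        funext n; simp
      rw [h1]
      simpa using hasSum_fintype (fun _ : Fin 0 → ℕ => (1:ℝ))
  | succ d ih =>
      intro f a hpos hsum
      have h0 : HasSum (f 0) (a 0) := hsum 0
      have ht : HasSum (fun n : Fin d → ℕ => ∏ i : Fin d, f (Fin.succ i) (n i))
          (∏ i : Fin d, a (Fin.succ i)) :=
        ih (fun i => f (Fin.succ i)) (fun i => a (Fin.succ i))
          (fun i n => hpos _ _) (fun i => hsum _)
      have hsummable : Summable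
          (fun p : ℕ × (Fin d → ℕ) => f 0 p.1 * ∏ i : Fin d, f (Fin.succ i) (p.2 i)) := by
        apply Summable.mul_of_nonneg h0.summable ht.summable
        · exact fun n => hpos 0 n
        · exact fun n => Finset.prod_nonneg fun i _ => hpos _ _
      have hmul := h0.mul ht hsummable
      have key : ((fun n : Fin (d+1) → ℕ => ∏ i, f i (n i)) ∘
            (Fin.consEquiv (fun _ : Fin (d+1) => ℕ)))
          = fun p : ℕ × (Fin d → ℕ) => f 0 p.1 * ∏ i : Fin d, f (Fin.succ i) (p.2 i) := by
        funext p
        simp [Fin.consEquiv, Fin.prod_univ_succ]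
      rw [Fin.prod_univ_succ]
      exact (Equiv.hasSum_iff _).mp (key ▸ hmul)

/-- There exist `R < 0` and `β₀ ≥ 0` with `A(β)/B(β) ≤ exp(Rβ)` for `β ≥ β₀`. -/
theorem facet_correlation_exponential_bound
    (d k : ℕ) (hd : 2 ≤ d) (hk : k ≤ d - 2) (b ν : ℝ) (hb : 0 < b) (hν : ν < 0)
    (A B : ℝ → ℝ)
    (hA : ∀ β : ℝ, A β =
      ∑' n : Fin d → ℕ,
        (∏ i, β ^ (n i) / ((n i).factorial : ℝ)) *
          Real.exp (ν * b ^ k *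
            (1 + ∑ F ∈ Finset.univ.powerset.filter
                  (fun F : Finset (Fin d) => F.Nonempty ∧ F.card ≤ d - k),
                ∏ j ∈ F, (n j : ℝ))))
    (hB : ∀ β : ℝ, B β =
      ∑' n : Fin d → ℕ,
        (∏ i, β ^ (n i) / ((n i).factorial : ℝ)) *
          Real.exp (ν * (2 * b) ^ k *
            ∑ S ∈ Finset.univ.powerset.filter
                  (fun S : Finset (Fin d) => S.card = d - k),
              ∏ i ∈ S, (n i : ℝ))) :
    ∃ R : ℝ, R < 0 ∧ ∃ β₀ : ℝ, 0 ≤ β₀ ∧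
      ∀ β : ℝ, β₀ ≤ β → A β / B β ≤ Real.exp (R * β) := by
  classical
  have hxneg : ν * b ^ k < 0 := mul_neg_of_neg_of_pos hν (pow_pos hb k)
  set x : ℝ := ν * b ^ k with hxdef
  set c : ℝ := Real.exp x with hcdef
  have hc0 : 0 < c := Real.exp_pos x
  have hc1 : c < 1 := by
    rw [hcdef, ← Real.exp_zero]
    exact Real.exp_lt_exp.mpr hxneg
  have hdk : 2 ≤ d - k := by omega
  obtain ⟨M, hM⟩ : ∃ M : ℕ, (d : ℝ) * c ^ (M + 2) ≤ (1 - c) / 4 := by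
    have h2 : Tendsto (fun m : ℕ => (d:ℝ) * c ^ m) atTop (nhds 0) := by
      simpa using (tendsto_pow_atTop_nhds_zero_of_lt_one hc0.le hc1).const_mul (d:ℝ)
    obtain ⟨M, hM⟩ := (h2.eventually_le_const (by linarith : (0:ℝ) < (1 - c)/4)).exists
    refine ⟨M, le_trans ?_ hM⟩
    have hpow : c ^ (M + 2) ≤ c ^ M := pow_le_pow_of_le_one hc0.le hc1.le (by omega)
    exact mul_le_mul_of_nonneg_left hpow (by positivity)
  set c2 : ℝ := c + (d:ℝ) * c ^ (M + 2) with hc2def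
  have hc2a : 0 < c2 := by positivity
  have hc2b : c2 < 1 := by
    rw [hc2def]; linarith
  set R : ℝ := (c2 - 1)/2 with hRdef
  have hR0 : R < 0 := by rw [hRdef]; linarith
  have hR1 : 0 < 1 + R := by rw [hRdef]; linarith
  -- main per-β estimate
  have main : ∀ β : ℝ, 0 ≤ β →
      A β ≤ (∑ m ∈ Finset.range (M+1), β ^ m / (m.factorial : ℝ)) ^ d
              + (d:ℝ) * Real.exp (c2 * β)
        ∧ Real.exp β ≤ B β := by
    intro β hβ
    set P : (Fin d → ℕ) → ℝ := fun n => ∏ i, β ^ (n i) / ((n i).factorial : ℝ) with hPdef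
    have hP0 : ∀ n, 0 ≤ P n := fun n =>
      Finset.prod_nonneg fun i _ => div_nonneg (pow_nonneg hβ _) (Nat.cast_nonneg _)
    have hPsum : HasSum P (Real.exp β ^ d) := by
      have := hasSum_pi_prod d (fun _ m => β ^ m / (m.factorial : ℝ)) (fun _ => Real.exp β)
        (fun i m => div_nonneg (pow_nonneg hβ _) (Nat.cast_nonneg _))
        (fun i => hasSum_exp_series β)
      rwa [Finset.prod_const, Finset.card_univ, Fintype.card_fin] at this
    constructor
    · -- A bound
      set T : (Fin d → ℕ) → ℝ := fun n => ∑ F ∈ Finset.univ.powerset.filter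
          (fun F : Finset (Fin d) => F.Nonempty ∧ F.card ≤ d - k), ∏ j ∈ F, ((n j : ℝ)) with hTdef
      set Aterm : (Fin d → ℕ) → ℝ := fun n => P n * Real.exp (x * (1 + T n)) with hAtermdef
      have hT0 : ∀ n, 0 ≤ T n := fun n => Finset.sum_nonneg fun F _ =>
        Finset.prod_nonneg fun j _ => Nat.cast_nonneg _
      have hAnn : ∀ n, 0 ≤ Aterm n := fun n => mul_nonneg (hP0 n) (Real.exp_nonneg _)
      set q : ℕ → ℝ := fun m => if m ≤ M then β ^ m / (m.factorial:ℝ) else 0 with hqdef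
      have hq0 : ∀ m, 0 ≤ q m := by
        intro m
        rw [hqdef]
        dsimp only
        split
        · exact div_nonneg (pow_nonneg hβ _) (Nat.cast_nonneg _)
        · exact le_refl 0
      set γ : Fin d → Fin d → ℝ := fun j i => if i = j then c else c ^ (M+2) with hγdef
      have hγpos : ∀ j i, 0 < γ j i := by
        intro j i
        rw [hγdef]
        dsimp only
        split
        · exact hc0
        · exact pow_pos hc0 _
      set G0 : (Fin d → ℕ) → ℝ := fun n => ∏ i, q (n i) with hG0def
      set Gj : Fin d → (Fin d → ℕ) → ℝ :=
        fun j n => ∏ i, (γ j i * β) ^ (n i) / ((n i).factorial : ℝ) with hGjdef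
      -- combinatorial inequality
      have hcomb : ∀ (n : Fin d → ℕ) (j : Fin d), M + 1 ≤ n j →
          (n j : ℝ) + ((M:ℝ) + 2) * ∑ i ∈ Finset.univ.erase j, (n i : ℝ) ≤ 1 + T n := by
        intro n j hj
        have hsub : (Finset.univ.image (fun i : Fin d => ({i} : Finset (Fin d)))) ∪
            (Finset.univ.erase j).image (fun i => ({i, j} : Finset (Fin d)))
            ⊆ Finset.univ.powerset.filter
              (fun F : Finset (Fin d) => F.Nonempty ∧ F.card ≤ d - k) := by
          intro F hF
          simp only [Finset.mem_union, Finset.mem_image] at hF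
          rw [Finset.mem_filter, Finset.mem_powerset]
          rcases hF with ⟨i, -, rfl⟩ | ⟨i, hi, rfl⟩
          · refine ⟨Finset.subset_univ _, Finset.singleton_nonempty i, ?_⟩
            rw [Finset.card_singleton]; omega
          · have hij : i ≠ j := Finset.ne_of_mem_erase hi
            refine ⟨Finset.subset_univ _, Finset.insert_nonempty _ _, ?_⟩
            rw [Finset.card_pair hij]; omega
        have hdisj : Disjoint (Finset.univ.image (fun i : Fin d => ({i} : Finset (Fin d))))
            ((Finset.univ.erase j).image (fun i => ({i, j} : Finset (Fin d)))) := by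
          rw [Finset.disjoint_left]
          rintro F hF1 hF2
          simp only [Finset.mem_image] at hF1 hF2
          obtain ⟨i, -, rfl⟩ := hF1
          obtain ⟨i', hi', hEq⟩ := hF2
          have h1 : ({i', j} : Finset (Fin d)).card = 2 :=
            Finset.card_pair (Finset.ne_of_mem_erase hi')
          rw [hEq, Finset.card_singleton] at h1
          omega
        have hs1 : ∑ F ∈ Finset.univ.image (fun i : Fin d => ({i} : Finset (Fin d))),
            ∏ jj ∈ F, ((n jj : ℝ)) = ∑ i, (n i : ℝ) := by
          rw [Finset.sum_image (fun a _ b _ h => Finset.singleton_injective h)]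
          simp
        have hs2 : ∑ F ∈ (Finset.univ.erase j).image (fun i => ({i, j} : Finset (Fin d))),
            ∏ jj ∈ F, ((n jj : ℝ)) = ∑ i ∈ Finset.univ.erase j, (n i : ℝ) * (n j : ℝ) := by
          rw [Finset.sum_image ?_]
          · refine Finset.sum_congr rfl fun i hi => ?_
            exact Finset.prod_pair (Finset.ne_of_mem_erase hi)
          · intro a ha bb _ h
            have hmem : a ∈ ({bb, j} : Finset (Fin d)) := by
              rw [← show ({a, j} : Finset (Fin d)) = {bb, j} from h]; exact Finset.mem_insert_self a {j}
            rcases Finset.mem_insert.mp hmem with h' | h'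
            · exact h'
            · exact absurd (Finset.mem_singleton.mp h') (Finset.ne_of_mem_erase ha)
        have hTlow : (∑ i, (n i : ℝ)) + ∑ i ∈ Finset.univ.erase j, (n i : ℝ) * (n j : ℝ)
            ≤ T n := by
          rw [← hs1, ← hs2, ← Finset.sum_union hdisj]
          exact Finset.sum_le_sum_of_subset_of_nonneg hsub
            (fun F _ _ => Finset.prod_nonneg fun _ _ => Nat.cast_nonneg _)
        have hsplit : ∑ i, (n i : ℝ) = (n j : ℝ) + ∑ i ∈ Finset.univ.erase j, (n i : ℝ) :=
          (Finset.add_sum_erase _ _ (Finset.mem_univ j)).symm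
        have hs2' : ((M:ℝ) + 1) * ∑ i ∈ Finset.univ.erase j, (n i : ℝ)
            ≤ ∑ i ∈ Finset.univ.erase j, (n i : ℝ) * (n j : ℝ) := by
          rw [Finset.mul_sum]
          refine Finset.sum_le_sum fun i _ => ?_
          have hcast : ((M:ℝ) + 1) ≤ (n j : ℝ) := by exact_mod_cast hj
          nlinarith [Nat.cast_nonneg (α := ℝ) (n i)]
        linarith
      -- pointwise bound
      have hGjnn : ∀ j n, 0 ≤ Gj j n := fun j n => Finset.prod_nonneg fun i _ =>
        div_nonneg (pow_nonneg (mul_nonneg (hγpos _ _).le hβ) _) (Nat.cast_nonneg _)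
      have hG0nn : ∀ n, 0 ≤ G0 n := fun n => Finset.prod_nonneg fun i _ => hq0 _
      have hbound : ∀ n, Aterm n ≤ G0 n + ∑ j, Gj j n := by
        intro n
        by_cases hcase : ∀ i, n i ≤ M
        · have hG0 : G0 n = P n := Finset.prod_congr rfl fun i _ => if_pos (hcase i)
          have hle : x * (1 + T n) ≤ 0 :=
            mul_nonpos_of_nonpos_of_nonneg hxneg.le (by linarith [hT0 n])
          have h1 : Aterm n ≤ P n := by
            calc Aterm n = P n * Real.exp (x * (1 + T n)) := rfl
              _ ≤ P n * 1 := by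
                  refine mul_le_mul_of_nonneg_left ?_ (hP0 n)
                  exact le_trans (Real.exp_le_exp.mpr hle) (le_of_eq Real.exp_zero)
              _ = P n := mul_one _
          have h2 : (0:ℝ) ≤ ∑ j, Gj j n := Finset.sum_nonneg fun j _ => hGjnn j n
          linarith [hG0 ▸ h1]
        · push_neg at hcase
          obtain ⟨j, hj⟩ := hcase
          have hj' : M + 1 ≤ n j := hj
          have hGjeq : Gj j n = (∏ i, γ j i ^ (n i)) * P n := by
            rw [← Finset.prod_mul_distrib]
            exact Finset.prod_congr rfl fun i _ => by rw [mul_pow, mul_div_assoc]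
          have hγexp : (∏ i, γ j i ^ (n i)) =
              Real.exp (x * ((n j : ℝ) + ((M:ℝ) + 2) *
                ∑ i ∈ Finset.univ.erase j, (n i : ℝ))) := by
            rw [← Finset.mul_prod_erase Finset.univ _ (Finset.mem_univ j)]
            have h1 : γ j j ^ (n j) = Real.exp ((n j : ℝ) * x) := by
              have : γ j j = c := if_pos rfl
              rw [this, hcdef, ← Real.exp_nat_mul]
            have h2 : ∀ i ∈ Finset.univ.erase j,
                γ j i ^ (n i) = Real.exp ((((M:ℝ)+2) * (n i : ℝ)) * x) := by
              intro i hi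
              have hij : i ≠ j := Finset.ne_of_mem_erase hi
              have : γ j i = c ^ (M+2) := if_neg hij
              rw [this, hcdef, ← pow_mul, ← Real.exp_nat_mul]
              congr 1
              push_cast
              ring
            rw [h1, Finset.prod_congr rfl h2, ← Real.exp_sum, ← Real.exp_add]
            congr 1
            rw [← Finset.sum_mul, ← Finset.mul_sum]
            ring
          have hmono : Real.exp (x * (1 + T n)) ≤
              Real.exp (x * ((n j : ℝ) + ((M:ℝ)+2) *
                ∑ i ∈ Finset.univ.erase j, (n i : ℝ))) := by
            apply Real.exp_le_exp.mpr
            exact mul_le_mul_of_nonpos_left (hcomb n j hj') hxneg.le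
          have hAGj : Aterm n ≤ Gj j n := by
            calc Aterm n = P n * Real.exp (x * (1 + T n)) := rfl
              _ ≤ P n * Real.exp (x * ((n j : ℝ) + ((M:ℝ)+2) *
                    ∑ i ∈ Finset.univ.erase j, (n i : ℝ))) :=
                  mul_le_mul_of_nonneg_left hmono (hP0 n)
              _ = Gj j n := by rw [hGjeq, hγexp, mul_comm]
          have hsingle : Gj j n ≤ ∑ j', Gj j' n :=
            Finset.single_le_sum (fun j' _ => hGjnn j' n) (Finset.mem_univ j)
          linarith [hG0nn n]
      -- summability and tsum values
      have hq_sum : HasSum q (∑ m ∈ Finset.range (M+1), β ^ m / (m.factorial:ℝ)) := by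
        have h1 : HasSum q (∑ m ∈ Finset.range (M+1), q m) := by
          apply hasSum_sum_of_ne_finset_zero
          intro m hm
          rw [hqdef]
          have : ¬ m ≤ M := by
            simp only [Finset.mem_range] at hm
            omega
          exact if_neg this
        have h2 : ∑ m ∈ Finset.range (M+1), q m
            = ∑ m ∈ Finset.range (M+1), β ^ m / (m.factorial:ℝ) := by
          refine Finset.sum_congr rfl fun m hm => ?_
          rw [hqdef]
          exact if_pos (by simp only [Finset.mem_range] at hm; omega)
        rwa [h2] at h1
      have hQ : HasSum G0 ((∑ m ∈ Finset.range (M+1), β ^ m / (m.factorial:ℝ)) ^ d) := by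
        have := hasSum_pi_prod d (fun _ => q)
          (fun _ => ∑ m ∈ Finset.range (M+1), β ^ m / (m.factorial:ℝ))
          (fun _ m => hq0 m) (fun _ => hq_sum)
        rwa [Finset.prod_const, Finset.card_univ, Fintype.card_fin] at this
      have hGjsum : ∀ j, HasSum (Gj j) (∏ i, Real.exp (γ j i * β)) := fun j =>
        hasSum_pi_prod d (fun i m => (γ j i * β) ^ m / (m.factorial:ℝ))
          (fun i => Real.exp (γ j i * β))
          (fun i m => div_nonneg (pow_nonneg (mul_nonneg (hγpos j i).le hβ) _)
            (Nat.cast_nonneg _))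
          (fun i => hasSum_exp_series _)
      have hGjval : ∀ j, (∏ i, Real.exp (γ j i * β)) ≤ Real.exp (c2 * β) := by
        intro j
        rw [← Real.exp_sum]
        apply Real.exp_le_exp.mpr
        rw [← Finset.sum_mul]
        refine mul_le_mul_of_nonneg_right ?_ hβ
        rw [← Finset.add_sum_erase Finset.univ (γ j) (Finset.mem_univ j)]
        have h1 : γ j j = c := if_pos rfl
        have h2 : ∑ i ∈ Finset.univ.erase j, γ j i ≤ (d:ℝ) * c ^ (M+2) := by
          have heq : ∀ i ∈ Finset.univ.erase j, γ j i = c ^ (M+2) :=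
            fun i hi => if_neg (Finset.ne_of_mem_erase hi)
          rw [Finset.sum_congr rfl heq, Finset.sum_const, nsmul_eq_mul]
          have hcard : (((Finset.univ.erase j).card : ℕ) : ℝ) ≤ (d:ℝ) := by
            have := Finset.card_le_univ (Finset.univ.erase j)
            simp only [Finset.card_univ, Fintype.card_fin] at this
            exact_mod_cast this
          exact mul_le_mul_of_nonneg_right hcard (by positivity)
        rw [hc2def, h1]
        linarith
      have hGjsummable : Summable (fun n => ∑ j, Gj j n) :=
        summable_sum (fun j _ => (hGjsum j).summable)
      have hGsummable : Summable (fun n => G0 n + ∑ j, Gj j n) :=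
        hQ.summable.add hGjsummable
      have hAsummable : Summable Aterm := Summable.of_nonneg_of_le hAnn hbound hGsummable
      have h1 : A β = ∑' n, Aterm n := by
        rw [hA β]
      calc A β = ∑' n, Aterm n := h1
        _ ≤ ∑' n, (G0 n + ∑ j, Gj j n) := Summable.tsum_le_tsum hbound hAsummable hGsummable
        _ = (∑' n, G0 n) + ∑' n, ∑ j, Gj j n := Summable.tsum_add hQ.summable hGjsummable
        _ = (∑' n, G0 n) + ∑ j, ∑' n, Gj j n := by
            rw [Summable.tsum_finsetSum (fun j _ => (hGjsum j).summable)]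
        _ ≤ (∑ m ∈ Finset.range (M+1), β ^ m / (m.factorial:ℝ)) ^ d
              + ∑ j : Fin d, Real.exp (c2 * β) := by
            refine add_le_add (le_of_eq hQ.tsum_eq) (Finset.sum_le_sum fun j _ => ?_)
            exact le_trans (le_of_eq (hGjsum j).tsum_eq) (hGjval j)
        _ = (∑ m ∈ Finset.range (M+1), β ^ m / (m.factorial:ℝ)) ^ d
              + (d:ℝ) * Real.exp (c2 * β) := by
            rw [Finset.sum_const, Finset.card_univ, Fintype.card_fin, nsmul_eq_mul]
    · -- B bound
      set g : (Fin d → ℕ) → ℝ := fun n =>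
        P n * Real.exp (ν * (2*b)^k * ∑ S ∈ Finset.univ.powerset.filter
              (fun S : Finset (Fin d) => S.card = d - k), ∏ i ∈ S, ((n i : ℝ))) with hgdef
      have hgnn : ∀ n, 0 ≤ g n := fun n => mul_nonneg (hP0 n) (Real.exp_nonneg _)
      have hgle : ∀ n, g n ≤ P n := by
        intro n
        have hexp : ν * (2*b)^k * (∑ S ∈ Finset.univ.powerset.filter
              (fun S : Finset (Fin d) => S.card = d - k), ∏ i ∈ S, ((n i : ℝ))) ≤ 0 := by
          apply mul_nonpos_of_nonpos_of_nonneg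
          · exact (mul_neg_of_neg_of_pos hν (pow_pos (by linarith) k)).le
          · exact Finset.sum_nonneg fun S _ => Finset.prod_nonneg fun i _ => Nat.cast_nonneg _
        calc g n = P n * Real.exp _ := rfl
          _ ≤ P n * 1 := by
              refine mul_le_mul_of_nonneg_left ?_ (hP0 n)
              exact le_trans (Real.exp_le_exp.mpr hexp) (le_of_eq Real.exp_zero)
          _ = P n := mul_one _
      have hgsummable : Summable g := Summable.of_nonneg_of_le hgnn hgle hPsum.summable
      set i0 : Fin d := ⟨0, by omega⟩ with hi0def
      set e : ℕ → (Fin d → ℕ) := fun m => Function.update (0 : Fin d → ℕ) i0 m with hedef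
      have hinj : Function.Injective e := by
        intro m m' h
        have := congrFun h i0
        simpa [hedef, Function.update_self] using this
      have hge : ∀ m, β ^ m / (m.factorial : ℝ) = g (e m) := by
        intro m
        have h1 : P (e m) = β ^ m / (m.factorial : ℝ) := by
          have hPe : P (e m) = ∏ i, β ^ (e m i) / ((e m i).factorial : ℝ) := rfl
          rw [hPe]
          rw [Finset.prod_eq_single i0
            (fun i _ hi => by simp [hedef, Function.update_of_ne hi])
            (fun h => absurd (Finset.mem_univ i0) h)]
          simp [hedef]
        have h2 : ∀ S ∈ Finset.univ.powerset.filter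
            (fun S : Finset (Fin d) => S.card = d - k), (∏ i ∈ S, ((e m i : ℕ) : ℝ)) = 0 := by
          intro S hS
          have hcard : S.card = d - k := (Finset.mem_filter.mp hS).2
          obtain ⟨u, hu, v, hv, huv⟩ := Finset.one_lt_card.mp
            (by omega : 1 < S.card)
          obtain ⟨w, hw, hwi⟩ : ∃ w ∈ S, w ≠ i0 := by
            rcases eq_or_ne u i0 with h | h
            · exact ⟨v, hv, fun hv0 => huv (h.trans hv0.symm)⟩
            · exact ⟨u, hu, h⟩
          refine Finset.prod_eq_zero hw ?_
          simp [hedef, Function.update_of_ne hwi]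
        rw [hgdef]
        dsimp only
        rw [Finset.sum_eq_zero h2, mul_zero, Real.exp_zero, mul_one, h1]
      have hf : HasSum (fun m : ℕ => β ^ m / (m.factorial : ℝ)) (Real.exp β) :=
        hasSum_exp_series β
      have hle := Summable.tsum_le_tsum_of_inj e hinj (fun n _ => hgnn n)
        (fun m => le_of_eq (hge m)) hf.summable hgsummable
      rw [hB β]
      calc Real.exp β = ∑' m, β ^ m / (m.factorial:ℝ) := hf.tsum_eq.symm
        _ ≤ ∑' n, g n := hle
        _ = _ := by rw [hgdef]
  -- asymptotic part
  refine ⟨R, hR0, ?_⟩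
  set N : ℕ := M * d with hNdef
  set KK : ℝ := ((M:ℝ)+1)^d with hKKdef
  have hKK0 : 0 < KK := by rw [hKKdef]; positivity
  have t0 : Tendsto (fun β : ℝ => (1+β)^N * Real.exp (-(1+R)*β)) atTop (nhds 0) := by
    have hcomp : Tendsto (fun β : ℝ => (1+R)*(1+β)) atTop atTop := by
      apply Tendsto.const_mul_atTop hR1
      exact tendsto_atTop_add_const_left atTop 1 tendsto_id
    have h := (tendsto_pow_mul_exp_neg_atTop_nhds_zero N).comp hcomp
    have h2 := h.mul_const (Real.exp (1+R) / (1+R)^N)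
    rw [zero_mul] at h2
    apply h2.congr
    intro β
    have hne : ((1+R):ℝ)^N ≠ 0 := by positivity
    have hexp : Real.exp (-((1+R)*(1+β))) = Real.exp (-(1+R)*β) / Real.exp (1+R) := by
      rw [← Real.exp_sub]; congr 1; ring
    simp only [Function.comp_apply]
    rw [mul_pow, hexp]
    field_simp
  have t2 : Tendsto (fun β : ℝ => Real.exp (R*β)) atTop (nhds 0) := by
    apply Real.tendsto_exp_atBot.comp
    exact Tendsto.const_mul_atTop_of_neg hR0 tendsto_id
  have t1 : Tendsto (fun β : ℝ =>
      KK * ((1+β)^N * Real.exp (-(1+R)*β)) + (d:ℝ) * Real.exp (R*β)) atTop (nhds 0) := by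
    have := (t0.const_mul KK).add (t2.const_mul (d:ℝ))
    simpa using this
  have hEv := t1.eventually_le_const (by norm_num : (0:ℝ) < 1)
  obtain ⟨β₁, hβ₁⟩ := Filter.eventually_atTop.mp hEv
  refine ⟨max β₁ 0, le_max_right _ _, ?_⟩
  intro β hβ
  have hβ0 : 0 ≤ β := le_trans (le_max_right _ _) hβ
  have hβ1 : β₁ ≤ β := le_trans (le_max_left _ _) hβ
  obtain ⟨hAb, hBb⟩ := main β hβ0
  have hQle : (∑ m ∈ Finset.range (M+1), β ^ m / (m.factorial:ℝ)) ^ d ≤ KK * (1+β)^N := by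
    have hterm : ∀ m ∈ Finset.range (M+1), β ^ m / (m.factorial:ℝ) ≤ (1+β)^M := by
      intro m hm
      have h1 : β ^ m / (m.factorial:ℝ) ≤ β ^ m :=
        div_le_self (pow_nonneg hβ0 _) (by exact_mod_cast m.factorial_pos)
      have h2 : β ^ m ≤ (1+β)^m := pow_le_pow_left₀ hβ0 (by linarith) m
      have h3 : (1+β)^m ≤ (1+β)^M := by
        apply pow_le_pow_right₀ (by linarith)
        simp only [Finset.mem_range] at hm
        omega
      linarith
    have hsum : ∑ m ∈ Finset.range (M+1), β ^ m / (m.factorial:ℝ)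
        ≤ ((M:ℝ)+1) * (1+β)^M := by
      calc ∑ m ∈ Finset.range (M+1), β ^ m / (m.factorial:ℝ)
          ≤ ∑ _m ∈ Finset.range (M+1), (1+β)^M := Finset.sum_le_sum hterm
        _ = ((M:ℝ)+1) * (1+β)^M := by
            rw [Finset.sum_const, Finset.card_range, nsmul_eq_mul]
            push_cast
            ring
    have hnn : 0 ≤ ∑ m ∈ Finset.range (M+1), β ^ m / (m.factorial:ℝ) :=
      Finset.sum_nonneg fun m _ => div_nonneg (pow_nonneg hβ0 _) (Nat.cast_nonneg _)
    calc (∑ m ∈ Finset.range (M+1), β ^ m / (m.factorial:ℝ)) ^ d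
        ≤ (((M:ℝ)+1) * (1+β)^M) ^ d := pow_le_pow_left₀ hnn hsum d
      _ = KK * (1+β)^N := by rw [mul_pow, ← pow_mul, hKKdef, hNdef]
  have hmain2 : KK * (1+β)^N + (d:ℝ) * Real.exp (c2*β) ≤ Real.exp ((1+R)*β) := by
    have h := hβ₁ β hβ1
    have hepos : (0:ℝ) < Real.exp ((1+R)*β) := Real.exp_pos _
    have hmul := mul_le_mul_of_nonneg_right h hepos.le
    calc KK * (1+β)^N + (d:ℝ) * Real.exp (c2*β)
        = (KK * ((1+β)^N * Real.exp (-(1+R)*β)) + (d:ℝ) * Real.exp (R*β))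
            * Real.exp ((1+R)*β) := by
          have e1 : Real.exp (-(1+R)*β) * Real.exp ((1+R)*β) = 1 := by
            rw [← Real.exp_add]
            have : -(1+R)*β + (1+R)*β = 0 := by ring
            rw [this, Real.exp_zero]
          have e2 : Real.exp (R*β) * Real.exp ((1+R)*β) = Real.exp (c2*β) := by
            rw [← Real.exp_add]
            congr 1
            rw [hRdef]; ring
          linear_combination (-(KK*(1+β)^N)) * e1 - (d:ℝ) * e2
      _ ≤ 1 * Real.exp ((1+R)*β) := hmul
      _ = Real.exp ((1+R)*β) := one_mul _
  have hBpos : 0 < B β := lt_of_lt_of_le (Real.exp_pos β) hBb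
  calc A β / B β ≤ (KK * (1+β)^N + (d:ℝ) * Real.exp (c2*β)) / Real.exp β := by
        apply div_le_div₀ (by positivity)
          (le_trans hAb (add_le_add_left hQle _)) (Real.exp_pos β) hBb
    _ ≤ Real.exp ((1+R)*β) / Real.exp β := by
        exact (div_le_div_iff_of_pos_right (Real.exp_pos β)).mpr hmain2
    _ = Real.exp (R*β) := by rw [← Real.exp_sub]; congr 1; ring
end

section
/- Let d ≥ 2 and 0 ≤ k ≤ d−2 be integers, c ≤ 0 a real number, and β ≥ 0. Then Σ_{n∈ℕ^d} (Π_{i=1}^d β^{n_i}/n_i!) · exp(c · Σ_{S⊆{1,…,d}, |S|=d−k} Π_{i∈S} n_i) ≥ exp(β(d−k−1)), where the inner sum ranges over all subsets S of {1,…,d} of cardinality d−k. -/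
open Finset

set_option maxHeartbeats 1000000

private def piSuccEquiv (m : ℕ) : (Fin (m+1) → ℕ) ≃ ℕ × (Fin m → ℕ) :=
  ⟨fun a => (a 0, fun j => a j.succ), fun p => Fin.cons p.1 p.2,
    fun a => funext fun i => by cases i using Fin.cases <;> simp,
    fun p => by simp⟩

private lemma pi_hasSum_aux (f : ℕ → ℝ) (hf : Summable f) (hf0 : ∀ n, 0 ≤ f n) :
    ∀ m : ℕ, Summable (fun a : Fin m → ℕ => ∏ j, f (a j)) ∧
      (∑' a : Fin m → ℕ, ∏ j, f (a j)) = (∑' n, f n) ^ m := by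
  intro m
  induction m with
  | zero =>
    constructor
    · exact Summable.of_finite
    · simp [tsum_eq_single (fun i : Fin 0 => 0) (fun b hb => absurd (funext fun i => i.elim0) hb)]
  | succ m ih =>
    obtain ⟨ihs, iht⟩ := ih
    have key : ∀ a : Fin (m+1) → ℕ, ∏ j, f (a j) = f (a 0) * ∏ j : Fin m, f (a j.succ) := by
      intro a; exact Fin.prod_univ_succ _
    have hmul : Summable fun p : ℕ × (Fin m → ℕ) => f p.1 * ∏ j, f (p.2 j) := by
      apply Summable.mul_of_nonneg hf ihs
      · exact hf0
      · exact fun a => prod_nonneg fun j _ => hf0 _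
    set e := piSuccEquiv m with he
    have hs : Summable (fun a : Fin (m+1) → ℕ => ∏ j, f (a j)) := by
      refine (hmul.comp_injective e.injective).congr fun a => ?_
      simp [e, piSuccEquiv, (key a).symm]
    refine ⟨hs, ?_⟩
    have := e.tsum_eq (fun p : ℕ × (Fin m → ℕ) => f p.1 * ∏ j, f (p.2 j))
    calc (∑' a : Fin (m+1) → ℕ, ∏ j, f (a j))
        = ∑' p : ℕ × (Fin m → ℕ), f p.1 * ∏ j, f (p.2 j) := by
          rw [← this]; exact tsum_congr fun a => by simp [e, piSuccEquiv]; exact key a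
      _ = (∑' n, f n) * ∑' a : Fin m → ℕ, ∏ j, f (a j) :=
          (Summable.tsum_mul_tsum hf ihs hmul).symm
      _ = (∑' n, f n) ^ (m+1) := by rw [iht, pow_succ, mul_comm]

/-- Lower bound `exp(β(d-k-1))` for the normalizing series of the facet
submodel of order `d-k`. -/
theorem facet_normalizing_series_lower_bound
    (d k : ℕ) (hd : 2 ≤ d) (hk : k ≤ d - 2) (c : ℝ) (hc : c ≤ 0) (β : ℝ) (hβ : 0 ≤ β) :
    Real.exp (β * ((d : ℝ) - k - 1)) ≤
      ∑' n : Fin d → ℕ,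
        (∏ i, β ^ (n i) / ((n i).factorial : ℝ)) *
          Real.exp (c *
            ∑ S ∈ Finset.univ.powerset.filter (fun S : Finset (Fin d) => S.card = d - k),
              ∏ i ∈ S, (n i : ℝ)) := by
  classical
  set m : ℕ := d - k - 1 with hm
  have hk1 : k + 1 ≤ d := by omega
  have hmd : m ≤ d := by omega
  have hdk : d - k = m + 1 := by omega
  set f : ℕ → ℝ := fun n => β ^ n / (n.factorial : ℝ) with hfdef
  have hf0 : ∀ n, 0 ≤ f n := fun n => div_nonneg (pow_nonneg hβ n) (Nat.cast_nonneg _)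
  have hfs : Summable f := Real.summable_pow_div_factorial β
  have hfe : ∑' n, f n = Real.exp β := by
    rw [Real.exp_eq_exp_ℝ, NormedSpace.exp_eq_tsum_div]
  obtain ⟨hsm, htm⟩ := pi_hasSum_aux f hfs hf0 m
  obtain ⟨hsd, _⟩ := pi_hasSum_aux f hfs hf0 d
  set g : (Fin d → ℕ) → ℝ := fun n =>
    (∏ i, β ^ (n i) / ((n i).factorial : ℝ)) *
      Real.exp (c * ∑ S ∈ Finset.univ.powerset.filter
        (fun S : Finset (Fin d) => S.card = d - k), ∏ i ∈ S, (n i : ℝ)) with hgdef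
  have hg0 : ∀ n, 0 ≤ g n := fun n =>
    mul_nonneg (prod_nonneg fun i _ => hf0 _) (Real.exp_pos _).le
  have hgle : ∀ n, g n ≤ ∏ i, f (n i) := by
    intro n
    have h1 : Real.exp (c * ∑ S ∈ Finset.univ.powerset.filter
        (fun S : Finset (Fin d) => S.card = d - k), ∏ i ∈ S, (n i : ℝ)) ≤ 1 := by
      rw [Real.exp_le_one_iff]
      exact mul_nonpos_of_nonpos_of_nonneg hc
        (sum_nonneg fun S _ => prod_nonneg fun i _ => Nat.cast_nonneg _)
    calc g n ≤ (∏ i, f (n i)) * 1 := by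
          apply mul_le_mul_of_nonneg_left h1 (prod_nonneg fun i _ => hf0 _)
      _ = ∏ i, f (n i) := mul_one _
  have hgs : Summable g :=
    Summable.of_nonneg_of_le hg0 hgle hsd
  -- the embedding
  set φ : (Fin m → ℕ) → (Fin d → ℕ) := fun a i =>
    if h : (i : ℕ) < m then a ⟨i, h⟩ else 0 with hφdef
  have hφinj : Function.Injective φ := by
    intro a b hab
    funext j
    have := congrFun hab ⟨j, lt_of_lt_of_le j.2 hmd⟩
    simpa [φ, j.2] using this
  -- for each a, g (φ a) equals the product
  have hkey : ∀ a : Fin m → ℕ, (∏ j, f (a j)) ≤ g (φ a) := by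
    intro a
    have hzero : ∀ S ∈ Finset.univ.powerset.filter
        (fun S : Finset (Fin d) => S.card = d - k), ∏ i ∈ S, ((φ a i : ℕ) : ℝ) = 0 := by
      intro S hS
      rw [mem_filter] at hS
      obtain ⟨-, hcard⟩ := hS
      have : ∃ i ∈ S, ¬ ((i : ℕ) < m) := by
        by_contra h
        push_neg at h
        have hsub : S.image (Fin.val) ⊆ Finset.range m := by
          intro x hx
          simp only [Finset.mem_image] at hx
          obtain ⟨i, hi, rfl⟩ := hx
          exact Finset.mem_range.2 (h i hi)
        have hcle := Finset.card_le_card hsub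
        rw [Finset.card_image_of_injective S Fin.val_injective, Finset.card_range] at hcle
        omega
      obtain ⟨i, hiS, hi⟩ := this
      refine Finset.prod_eq_zero hiS ?_
      simp [φ, hi]
    have hexp : Real.exp (c * ∑ S ∈ Finset.univ.powerset.filter
        (fun S : Finset (Fin d) => S.card = d - k), ∏ i ∈ S, ((φ a i : ℕ) : ℝ)) = 1 := by
      rw [Finset.sum_congr rfl hzero]
      simp
    have hprod : (∏ i, β ^ (φ a i) / ((φ a i).factorial : ℝ)) = ∏ j, f (a j) := by
      rw [← Finset.prod_filter_mul_prod_filter_not Finset.univ (fun i : Fin d => (i : ℕ) < m)]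
      have h2 : ∏ i ∈ Finset.univ.filter (fun i : Fin d => ¬ (i : ℕ) < m),
          β ^ (φ a i) / ((φ a i).factorial : ℝ) = 1 := by
        apply Finset.prod_eq_one
        intro i hi
        rw [mem_filter] at hi
        simp [φ, hi.2]
      rw [h2, mul_one]
      refine Finset.prod_nbij' (fun i => if h : (i : ℕ) < m then (⟨(i : ℕ), h⟩ : Fin m) else ⟨0, by omega⟩)
        (fun j => (⟨(j : ℕ), lt_of_lt_of_le j.2 hmd⟩ : Fin d)) ?_ ?_ ?_ ?_ ?_
      · intro i hi; exact Finset.mem_univ _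
      · intro j hj; simp [j.2]
      · intro i hi
        rw [mem_filter] at hi
        simp [hi.2]
      · intro j hj
        simp [j.2]
      · intro i hi
        rw [mem_filter] at hi
        simp [φ, hi.2, f]
    rw [hgdef]
    simp only []
    rw [hprod, hexp, mul_one]
  have hle : (∑' a : Fin m → ℕ, ∏ j, f (a j)) ≤ ∑' n, g n :=
    Summable.tsum_le_tsum_of_inj φ hφinj (fun n _ => hg0 n) hkey hsm hgs
  refine le_trans ?_ hle
  rw [htm, hfe, ← Real.exp_nat_mul]
  apply le_of_eq
  congr 1
  rw [hm, Nat.cast_sub (show 1 ≤ d - k by omega), Nat.cast_sub (show k ≤ d by omega)]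
  ring
end

section
/- Let m ≥ 1 be an integer, c ≤ 0 a real number, and β ≥ 0. Then Σ_{n∈ℕ^m} (Π_{i=1}^m β^{n_i}/n_i!) · exp(c · n_1 n_2 ⋯ n_m) ≥ exp(β(m−1)). -/
open Real
set_option maxHeartbeats 1000000

lemma exp_tsum_pow_div_factorial (β : ℝ) :
    ∑' n : ℕ, β ^ n / (n.factorial : ℝ) = Real.exp β := by
  rw [Real.exp_eq_exp_ℝ, NormedSpace.exp_eq_tsum_div]

lemma aux_prod (β : ℝ) (hβ : 0 ≤ β) : ∀ k : ℕ,
    Summable (fun n : Fin k → ℕ => ∏ i, β ^ (n i) / ((n i).factorial : ℝ)) ∧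
    (∑' n : Fin k → ℕ, ∏ i, β ^ (n i) / ((n i).factorial : ℝ)) = Real.exp β ^ k := by
  intro k
  induction k with
  | zero =>
      constructor
      · exact Summable.of_finite
      · simp [tsum_eq_single (default : Fin 0 → ℕ) (fun b hb => absurd (Subsingleton.elim b default) hb)]
  | succ k ih =>
      have hh : Summable (fun n : ℕ => β ^ n / (n.factorial : ℝ)) :=
        Real.summable_pow_div_factorial β
      have hnn : ∀ n : ℕ, 0 ≤ β ^ n / (n.factorial : ℝ) := fun n =>
        div_nonneg (pow_nonneg hβ n) (Nat.cast_nonneg _)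
      have hFnn : ∀ n : Fin k → ℕ, 0 ≤ ∏ i, β ^ (n i) / ((n i).factorial : ℝ) := fun n =>
        Finset.prod_nonneg fun i _ => hnn _
      have hmul : Summable (fun p : ℕ × (Fin k → ℕ) =>
          (β ^ p.1 / (p.1.factorial : ℝ)) * ∏ i, β ^ (p.2 i) / ((p.2 i).factorial : ℝ)) :=
        Summable.mul_of_nonneg (f := fun n : ℕ => β ^ n / (n.factorial : ℝ))
          (g := fun n : Fin k → ℕ => ∏ i, β ^ (n i) / ((n i).factorial : ℝ))
          hh ih.1 hnn hFnn
      set e := Fin.consEquiv (fun _ : Fin (k+1) => ℕ) with he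
      have key : ∀ p : ℕ × (Fin k → ℕ),
          (∏ i, β ^ (e p i) / ((e p i).factorial : ℝ)) =
          (β ^ p.1 / (p.1.factorial : ℝ)) * ∏ i, β ^ (p.2 i) / ((p.2 i).factorial : ℝ) := by
        intro p
        have hep : e p = Fin.cons p.1 p.2 := rfl
        rw [hep, Fin.prod_univ_succ]
        simp only [Fin.cons_zero, Fin.cons_succ]
      have hsum : Summable (fun n : Fin (k+1) → ℕ => ∏ i, β ^ (n i) / ((n i).factorial : ℝ)) := by
        rw [← e.summable_iff]
        exact hmul.congr fun p => (key p).symm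
      refine ⟨hsum, ?_⟩
      rw [← e.tsum_eq]
      calc ∑' p : ℕ × (Fin k → ℕ), ∏ i, β ^ (e p i) / ((e p i).factorial : ℝ)
          = ∑' p : ℕ × (Fin k → ℕ),
              (β ^ p.1 / (p.1.factorial : ℝ)) * ∏ i, β ^ (p.2 i) / ((p.2 i).factorial : ℝ) :=
            tsum_congr key
        _ = (∑' a : ℕ, β ^ a / (a.factorial : ℝ)) *
              ∑' b : Fin k → ℕ, ∏ i, β ^ (b i) / ((b i).factorial : ℝ) :=
            (Summable.tsum_mul_tsum (f := fun n : ℕ => β ^ n / (n.factorial : ℝ))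
              (g := fun n : Fin k → ℕ => ∏ i, β ^ (n i) / ((n i).factorial : ℝ))
              hh ih.1 hmul).symm
        _ = Real.exp β ^ (k+1) := by
            rw [ih.2, exp_tsum_pow_div_factorial, pow_succ, mul_comm]

/-- The product-exponent series is bounded below by `exp(β(m-1))`. -/
theorem product_exponent_series_lower_bound
    (m : ℕ) (hm : 1 ≤ m) (c : ℝ) (hc : c ≤ 0) (β : ℝ) (hβ : 0 ≤ β) :
    Real.exp (β * ((m : ℝ) - 1)) ≤
      ∑' n : Fin m → ℕ,
        (∏ i, β ^ (n i) / ((n i).factorial : ℝ)) *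
          Real.exp (c * ∏ i, (n i : ℝ)) := by
  obtain ⟨k, rfl⟩ : ∃ k, m = k + 1 := ⟨m - 1, (Nat.succ_pred_eq_of_pos hm).symm⟩
  have hnn : ∀ n : ℕ, 0 ≤ β ^ n / (n.factorial : ℝ) := fun n =>
    div_nonneg (pow_nonneg hβ n) (Nat.cast_nonneg _)
  have hFnn : ∀ {j : ℕ} (n : Fin j → ℕ), 0 ≤ ∏ i, β ^ (n i) / ((n i).factorial : ℝ) :=
    fun n => Finset.prod_nonneg fun i _ => hnn _
  -- full series is summable
  have hsumfull : Summable (fun n : Fin (k+1) → ℕ =>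
      (∏ i, β ^ (n i) / ((n i).factorial : ℝ)) * Real.exp (c * ∏ i, (n i : ℝ))) := by
    refine Summable.of_nonneg_of_le
      (fun n => mul_nonneg (hFnn n) (Real.exp_nonneg _)) (fun n => ?_) (aux_prod β hβ (k+1)).1
    have h1 : Real.exp (c * ∏ i, (n i : ℝ)) ≤ 1 := by
      rw [Real.exp_le_one_iff]
      exact mul_nonpos_of_nonpos_of_nonneg hc (Finset.prod_nonneg fun i _ => Nat.cast_nonneg _)
    calc (∏ i, β ^ (n i) / ((n i).factorial : ℝ)) * Real.exp (c * ∏ i, (n i : ℝ))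
        ≤ (∏ i, β ^ (n i) / ((n i).factorial : ℝ)) * 1 := by
          exact mul_le_mul_of_nonneg_left h1 (hFnn n)
      _ = _ := mul_one _
  -- injection: n ↦ Fin.cons 0 n
  set ι : (Fin k → ℕ) → (Fin (k+1) → ℕ) := fun n => Fin.cons 0 n with hι
  have hinj : Function.Injective ι := fun a b hab => by
    funext i
    have := congrFun hab i.succ
    simpa [ι] using this
  have hkey : ∀ n : Fin k → ℕ,
      (∏ i, β ^ (n i) / ((n i).factorial : ℝ)) =
      (∏ i, β ^ (ι n i) / ((ι n i).factorial : ℝ)) * Real.exp (c * ∏ i, ((ι n i : ℕ) : ℝ)) := by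
    intro n
    have h0 : (∏ i, ((ι n i : ℕ) : ℝ)) = 0 := by
      rw [Fin.prod_univ_succ]
      simp [ι]
    rw [h0, mul_zero, Real.exp_zero, mul_one, Fin.prod_univ_succ]
    simp [ι]
  have hle : (∑' n : Fin k → ℕ, ∏ i, β ^ (n i) / ((n i).factorial : ℝ)) ≤
      ∑' n : Fin (k+1) → ℕ,
        (∏ i, β ^ (n i) / ((n i).factorial : ℝ)) * Real.exp (c * ∏ i, (n i : ℝ)) := by
    refine Summable.tsum_le_tsum_of_inj ι hinj
      (fun n _ => mul_nonneg (hFnn n) (Real.exp_nonneg _))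
      (fun n => le_of_eq (hkey n)) (aux_prod β hβ k).1 hsumfull
  refine le_trans ?_ hle
  rw [(aux_prod β hβ k).2, ← Real.exp_nat_mul]
  apply le_of_eq
  congr 1
  push_cast
  ring
end

section
/- Let d ≥ 3 and 1 ≤ k ≤ d−1 be integers, let l be an integer with max(d−2k, 0) ≤ l ≤ d−k, and let ν < 0. Then lim_{a→∞} e^{−a(d−1)} · Σ_{n∈ℕ^d} (Π_{i=1}^d a^{n_i}/n_i!) · exp(ν · Σ_{D⊆{1,…,2d−2k−l}} 2^{|D∩{1,…,l}|} Π_{m∈{1,…,d}∖D} n_m) = 2k − d + l. -/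
open Filter



lemma exp_tsum' (a : ℝ) : ∑' n : ℕ, a ^ n / (n.factorial : ℝ) = Real.exp a := by
  rw [Real.exp_eq_exp_ℝ, NormedSpace.exp_eq_tsum_div]

lemma prodkey {d : ℕ} (g : Fin (d+1) → ℕ → ℝ) (p : ℕ × (Fin d → ℕ)) :
    (fun n : Fin (d+1) → ℕ => ∏ i, g i (n i)) (Fin.consEquiv (fun _ => ℕ) p)
      = g 0 p.1 * ∏ i : Fin d, g i.succ (p.2 i) := by
  simp only [Fin.consEquiv_apply, Fin.prod_univ_succ, Fin.cons_zero, Fin.cons_succ]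

lemma summable_pi_prod : ∀ (d : ℕ) (g : Fin d → ℕ → ℝ),
    (∀ i, Summable (fun n => ‖g i n‖)) →
    Summable (fun n : Fin d → ℕ => ∏ i, g i (n i)) := by
  intro d
  induction d with
  | zero => intro g _; exact .of_finite
  | succ d ih =>
    intro g hg
    rw [← (Fin.consEquiv (fun _ => ℕ)).summable_iff]
    apply Summable.congr _ (fun p => (prodkey g p).symm)
    have h2 : Summable (fun n : Fin d → ℕ => ‖∏ i : Fin d, g i.succ (n i)‖) := by
      have := ih (fun i n => ‖g i.succ n‖) (fun i => by simpa using hg i.succ)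
      exact this.congr (fun n => (norm_prod _ _).symm)
    exact summable_mul_of_summable_norm (f := g 0)
      (g := fun n : Fin d → ℕ => ∏ i : Fin d, g i.succ (n i)) (hg 0) h2

lemma tsum_pi_prod : ∀ (d : ℕ) (g : Fin d → ℕ → ℝ),
    (∀ i, Summable (fun n => ‖g i n‖)) →
    ∑' n : Fin d → ℕ, ∏ i, g i (n i) = ∏ i, ∑' x, g i x := by
  intro d
  induction d with
  | zero =>
    intro g _
    simp only [Finset.univ_eq_empty, Finset.prod_empty]
    rw [tsum_eq_single (fun i => i.elim0) (fun b hb =>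
      absurd (funext fun i => i.elim0) (Ne.symm hb))]
  | succ d ih =>
    intro g hg
    rw [← (Fin.consEquiv (fun _ => ℕ)).tsum_eq]
    rw [tsum_congr (fun p => prodkey g p)]
    have h2 : Summable (fun n : Fin d → ℕ => ‖∏ i : Fin d, g i.succ (n i)‖) := by
      have := summable_pi_prod d (fun i n => ‖g i.succ n‖) (fun i => by simpa using hg i.succ)
      exact this.congr (fun n => (norm_prod _ _).symm)
    rw [← tsum_mul_tsum_of_summable_norm (f := g 0)
      (g := fun n : Fin d → ℕ => ∏ i : Fin d, g i.succ (n i)) (hg 0) h2, ih _ (fun i => hg i.succ),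
      Fin.prod_univ_succ]

lemma summable_norm_base (a : ℝ) : Summable (fun n : ℕ => ‖a ^ n / (n.factorial : ℝ)‖) := by
  apply Summable.congr (Real.summable_pow_div_factorial |a|)
  intro n
  rw [norm_div, norm_pow, Real.norm_eq_abs, Real.norm_eq_abs]
  rw [abs_of_nonneg (by positivity : (0:ℝ) ≤ (n.factorial : ℝ))]

lemma tsum_pos_part (a : ℝ) :
    ∑' n : ℕ, (if n = 0 then 0 else a ^ n / (n.factorial : ℝ)) = Real.exp a - 1 := by
  have h1 : ∀ n : ℕ, (if n = 0 then 0 else a ^ n / (n.factorial : ℝ))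
      = a ^ n / (n.factorial : ℝ) - (if n = 0 then (1:ℝ) else 0) := by
    intro n; rcases eq_or_ne n 0 with h | h <;> simp [h]
  rw [tsum_congr h1, Summable.tsum_sub (Real.summable_pow_div_factorial a)
    (summable_of_finite_support (Set.Finite.subset (Set.finite_singleton 0) (by
      intro n hn
      simp only [Function.mem_support] at hn
      simp only [Set.mem_singleton_iff]
      by_contra h
      rw [if_neg h] at hn
      exact hn rfl)))]
  rw [exp_tsum', tsum_ite_eq 0 (fun _ => (1:ℝ))]

lemma tsum_exp_lin (a ν : ℝ) :
    ∑' n : ℕ, a ^ n / (n.factorial : ℝ) * Real.exp (ν * n) = Real.exp (a * Real.exp ν) := by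
  rw [← exp_tsum' (a * Real.exp ν)]
  apply tsum_congr
  intro n
  rw [mul_pow, mul_comm ν (n:ℝ), Real.exp_nat_mul]
  ring

lemma summable_norm_exp_lin (a ν : ℝ) :
    Summable (fun n : ℕ => ‖a ^ n / (n.factorial : ℝ) * Real.exp (ν * n)‖) := by
  apply Summable.congr (summable_norm_base (a * Real.exp ν))
  intro n
  rw [mul_pow, mul_comm ν (n:ℝ), Real.exp_nat_mul]
  congr 1
  ring

lemma tsum_trunc (a : ℝ) (K : ℕ) :
    ∑' n : ℕ, (if n ≤ K then a ^ n / (n.factorial : ℝ) else 0)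
      = ∑ n ∈ Finset.range (K+1), a ^ n / (n.factorial : ℝ) := by
  rw [tsum_eq_sum (s := Finset.range (K+1))]
  · apply Finset.sum_congr rfl
    intro n hn
    rw [if_pos (by simpa [Nat.lt_succ_iff] using hn)]
  · intro n hn
    rw [if_neg (by simpa [Nat.lt_succ_iff] using hn)]

lemma trunc_le (a : ℝ) (K : ℕ) (ha : 1 ≤ a) :
    ∑ n ∈ Finset.range (K+1), a ^ n / (n.factorial : ℝ) ≤ (K+1) * a ^ K := by
  have : ∀ n ∈ Finset.range (K+1), a ^ n / (n.factorial : ℝ) ≤ a ^ K := by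
    intro n hn
    have h1 : a ^ n / (n.factorial : ℝ) ≤ a ^ n := by
      apply div_le_self (pow_nonneg (by linarith) n)
      exact_mod_cast Nat.one_le_iff_ne_zero.mpr (Nat.factorial_ne_zero n)
    exact h1.trans (pow_le_pow_right₀ (by linarith) (by simpa [Nat.lt_succ_iff] using hn))
  calc ∑ n ∈ Finset.range (K+1), a ^ n / (n.factorial : ℝ)
      ≤ ∑ _n ∈ Finset.range (K+1), a ^ K := Finset.sum_le_sum this
    _ = (K+1) * a ^ K := by simp [mul_comm]

lemma card_filter_lt (d T : ℕ) (h : T ≤ d) :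
    (Finset.univ.filter (fun i : Fin d => (i : ℕ) < T)).card = T := by
  have : Finset.univ.filter (fun i : Fin d => (i : ℕ) < T)
      = Finset.map (Fin.castLEEmb h) Finset.univ := by
    ext i
    simp only [Finset.mem_filter, Finset.mem_univ, true_and, Finset.mem_map,
      Fin.castLEEmb_apply]
    constructor
    · intro hi
      exact ⟨⟨(i : ℕ), hi⟩, by ext; simp⟩
    · rintro ⟨j, -, rfl⟩
      simpa using j.isLt
  rw [this, Finset.card_map, Finset.card_univ, Fintype.card_fin]

lemma powerset_sum_eq_prod (d T l : ℕ) (hl : l ≤ T) (n : Fin d → ℕ) :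
    ∑ D ∈ (Finset.univ.filter (fun i : Fin d => (i : ℕ) < T)).powerset,
      (2 : ℝ) ^ (D.filter (fun i : Fin d => (i : ℕ) < l)).card *
        ∏ m ∈ Finset.univ \ D, (n m : ℝ)
    = ∏ i, ((n i : ℝ) + (if (i : ℕ) < l then 2 else if (i : ℕ) < T then 1 else 0)) := by
  classical
  set s := Finset.univ.filter (fun i : Fin d => (i : ℕ) < T) with hs
  set f : Fin d → ℝ := fun i => if (i : ℕ) < l then 2 else 1 with hf
  have step1 : ∀ D ∈ s.powerset,
      (2 : ℝ) ^ (D.filter (fun i : Fin d => (i : ℕ) < l)).card *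
        ∏ m ∈ Finset.univ \ D, (n m : ℝ)
      = ((∏ i ∈ D, f i) * ∏ i ∈ s \ D, (n i : ℝ)) * ∏ i ∈ Finset.univ \ s, (n i : ℝ) := by
    intro D hD
    rw [Finset.mem_powerset] at hD
    have h1 : (∏ i ∈ D, f i) = (2 : ℝ) ^ (D.filter (fun i : Fin d => (i : ℕ) < l)).card := by
      rw [hf, Finset.prod_ite, Finset.prod_const, Finset.prod_const, one_pow, mul_one]
    have hsub : Finset.univ \ s ⊆ Finset.univ \ D := by
      apply Finset.sdiff_subset_sdiff (le_refl _) hD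
    have h2 : ((Finset.univ \ D) \ (Finset.univ \ s)) = s \ D := by
      ext i
      simp only [Finset.mem_sdiff, Finset.mem_univ, true_and, not_not]
      tauto
    rw [← Finset.prod_sdiff hsub, h2, h1]
    ring
  rw [Finset.sum_congr rfl step1, ← Finset.sum_mul, ← Finset.prod_add f (fun i => (n i : ℝ)) s]
  have hsub : s ⊆ Finset.univ := Finset.subset_univ s
  rw [← Finset.prod_sdiff hsub]
  rw [mul_comm]
  congr 1
  · apply Finset.prod_congr rfl
    intro i hi
    rw [hs] at hi
    simp only [Finset.mem_sdiff, Finset.mem_filter, Finset.mem_univ, true_and] at hi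
    have hiT : ¬ ((i:ℕ) < T) := hi
    rw [if_neg (fun hc => hiT (lt_of_lt_of_le hc hl)), if_neg hiT, add_zero]
  · apply Finset.prod_congr rfl
    intro i hi
    rw [hs] at hi
    simp only [Finset.mem_filter, Finset.mem_univ, true_and] at hi
    simp only [hf]
    rcases lt_or_ge (i : ℕ) l with h | h
    · rw [if_pos h, if_pos h]; ring
    · rw [if_neg (not_lt.mpr h), if_neg (not_lt.mpr h), if_pos hi]; ring

lemma B0_formula (a : ℝ) (T j : ℕ) :
    Real.exp (-a * (((T + j : ℕ) : ℝ) - 1)) *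
      (Real.exp (a * ((T + j : ℕ) : ℝ)) - Real.exp (a * (T : ℝ)) * (Real.exp a - 1) ^ j)
    = ∑ i ∈ Finset.range j, (1 - Real.exp (-a)) ^ i := by
  set A := Real.exp a with hA
  set E := Real.exp (-a) with hE
  have hAE : A * E = 1 := by rw [hA, hE, ← Real.exp_add]; simp
  have h1 : Real.exp (-a * (((T + j : ℕ) : ℝ) - 1)) = E ^ (T + j) * A := by
    rw [show -a * (((T + j : ℕ) : ℝ) - 1) = ((T + j : ℕ) : ℝ) * (-a) + a by ring,
      Real.exp_add, Real.exp_nat_mul]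
  have h2 : Real.exp (a * ((T + j : ℕ) : ℝ)) = A ^ (T + j) := by
    rw [mul_comm, Real.exp_nat_mul]
  have h3 : Real.exp (a * (T : ℝ)) = A ^ T := by
    rw [mul_comm, Real.exp_nat_mul]
  rw [h1, h2, h3]
  have e1 : (A - 1) ^ j = A ^ j * (1 - E) ^ j := by
    rw [← mul_pow]
    congr 1
    linear_combination hAE
  have e2 : E ^ (T + j) * A ^ (T + j) = 1 := by rw [← mul_pow, mul_comm E A, hAE, one_pow]
  have lhs_eq : E ^ (T + j) * A * (A ^ (T + j) - A ^ T * (A - 1) ^ j)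
      = A - A * (1 - E) ^ j := by
    rw [e1]
    linear_combination (A - A * (1 - E) ^ j) * e2
  rw [lhs_eq]
  have hg := geom_sum_mul (1 - E) j
  have hj : (1 - E) ^ j = 1 - E * (∑ i ∈ Finset.range j, (1 - E) ^ i) := by
    linear_combination -hg
  rw [hj]
  linear_combination (∑ i ∈ Finset.range j, (1 - E) ^ i) * hAE

lemma geom_tendsto (j : ℕ) :
    Filter.Tendsto (fun a : ℝ => ∑ i ∈ Finset.range j, (1 - Real.exp (-a)) ^ i)
      atTop (nhds (j : ℝ)) := by
  have h : ∀ i ∈ Finset.range j, Filter.Tendsto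
      (fun a : ℝ => (1 - Real.exp (-a)) ^ i) atTop (nhds 1) := by
    intro i _
    have : Filter.Tendsto (fun a : ℝ => 1 - Real.exp (-a)) atTop (nhds 1) := by
      simpa using tendsto_const_nhds.sub Real.tendsto_exp_neg_atTop_nhds_zero
    simpa using this.pow i
  have := tendsto_finset_sum (Finset.range j) h
  simpa using this


lemma summable_norm_pos_part (a : ℝ) :
    Summable (fun x : ℕ => ‖if x = 0 then (0:ℝ) else a ^ x / (x.factorial : ℝ)‖) := by
  apply Summable.of_nonneg_of_le (fun x => norm_nonneg _) _ (summable_norm_base a)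
  intro x
  rcases eq_or_ne x 0 with h | h <;> simp [h]

lemma summable_norm_trunc (a : ℝ) (K : ℕ) :
    Summable (fun x : ℕ => ‖if x ≤ K then a ^ x / (x.factorial : ℝ) else (0:ℝ)‖) := by
  apply Summable.of_nonneg_of_le (fun x => norm_nonneg _) _ (summable_norm_base a)
  intro x
  rcases le_or_gt x K with h | h
  · simp [h]
  · simp only [if_neg (not_le.mpr h), norm_zero]
    positivity

lemma tsum_plain (d : ℕ) (a : ℝ) :
    ∑' n : Fin d → ℕ, ∏ i, a ^ (n i) / ((n i).factorial : ℝ) = Real.exp (a * d) := by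
  rw [tsum_pi_prod d (fun _ x => a ^ x / (x.factorial : ℝ)) (fun _ => summable_norm_base a)]
  simp only [exp_tsum', Finset.prod_const, Finset.card_univ, Fintype.card_fin]
  rw [mul_comm, Real.exp_nat_mul]

lemma summable_plain (d : ℕ) (a : ℝ) :
    Summable (fun n : Fin d → ℕ => ∏ i, a ^ (n i) / ((n i).factorial : ℝ)) :=
  summable_pi_prod d (fun _ x => a ^ x / (x.factorial : ℝ)) (fun _ => summable_norm_base a)

lemma gB_summable_norm (d T : ℕ) (a : ℝ) (i : Fin d) :
    Summable (fun x : ℕ => ‖if (i:ℕ) < T then a ^ x / (x.factorial : ℝ)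
      else (if x = 0 then 0 else a ^ x / (x.factorial : ℝ))‖) := by
  rcases lt_or_ge (i : ℕ) T with h | h
  · simpa [h] using summable_norm_base a
  · simpa [not_lt.mpr h] using summable_norm_pos_part a

lemma tsum_gB (d T : ℕ) (hTd : T ≤ d) (a : ℝ) :
    ∑' n : Fin d → ℕ, ∏ i : Fin d, (if (i:ℕ) < T then a ^ (n i) / ((n i).factorial : ℝ)
        else (if n i = 0 then 0 else a ^ (n i) / ((n i).factorial : ℝ)))
      = Real.exp a ^ T * (Real.exp a - 1) ^ (d - T) := by
  rw [tsum_pi_prod d (fun i x => if (i:ℕ) < T then a ^ x / (x.factorial : ℝ)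
      else (if x = 0 then 0 else a ^ x / (x.factorial : ℝ))) (gB_summable_norm d T a)]
  have : ∀ i : Fin d, (∑' x : ℕ, (if (i:ℕ) < T then a ^ x / (x.factorial : ℝ)
      else (if x = 0 then 0 else a ^ x / (x.factorial : ℝ))))
      = if (i:ℕ) < T then Real.exp a else Real.exp a - 1 := by
    intro i
    rcases lt_or_ge (i : ℕ) T with h | h
    · simp only [if_pos h]; exact exp_tsum' a
    · simp only [if_neg (not_lt.mpr h)]; exact tsum_pos_part a
  rw [Finset.prod_congr rfl (fun i _ => this i), Finset.prod_ite, Finset.prod_const,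
    Finset.prod_const, card_filter_lt d T hTd]
  congr 2
  rw [Finset.filter_not, Finset.card_sdiff_of_subset (Finset.filter_subset _ _), card_filter_lt d T hTd,
    Finset.card_univ, Fintype.card_fin]

lemma summable_gB (d T : ℕ) (a : ℝ) :
    Summable (fun n : Fin d → ℕ => ∏ i : Fin d, (if (i:ℕ) < T then a ^ (n i) / ((n i).factorial : ℝ)
        else (if n i = 0 then 0 else a ^ (n i) / ((n i).factorial : ℝ)))) :=
  summable_pi_prod d (fun i x => if (i:ℕ) < T then a ^ x / (x.factorial : ℝ)
    else (if x = 0 then 0 else a ^ x / (x.factorial : ℝ))) (gB_summable_norm d T a)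

lemma tsum_hprime (d : ℕ) (a μ : ℝ) :
    ∑' n : Fin d → ℕ, ∏ i, (a ^ (n i) / ((n i).factorial : ℝ) * Real.exp (μ * (n i)))
      = Real.exp (a * Real.exp μ) ^ d := by
  rw [tsum_pi_prod d (fun _ x => a ^ x / (x.factorial : ℝ) * Real.exp (μ * x))
    (fun _ => summable_norm_exp_lin a μ)]
  simp only [tsum_exp_lin, Finset.prod_const, Finset.card_univ, Fintype.card_fin]

lemma summable_hprime (d : ℕ) (a μ : ℝ) :
    Summable (fun n : Fin d → ℕ =>
      ∏ i, (a ^ (n i) / ((n i).factorial : ℝ) * Real.exp (μ * (n i)))) :=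
  summable_pi_prod d (fun _ x => a ^ x / (x.factorial : ℝ) * Real.exp (μ * x))
    (fun _ => summable_norm_exp_lin a μ)

lemma hK_summable_norm (d K : ℕ) (a μ : ℝ) (i0 m : Fin d) :
    Summable (fun x : ℕ => ‖if m = i0 then a ^ x / (x.factorial : ℝ) * Real.exp (μ * x)
      else (if x ≤ K then a ^ x / (x.factorial : ℝ) else 0)‖) := by
  rcases eq_or_ne m i0 with h | h
  · simpa [h] using summable_norm_exp_lin a μ
  · simpa [h] using summable_norm_trunc a K

lemma tsum_hK (d K : ℕ) (a μ : ℝ) (i0 : Fin d) :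
    ∑' n : Fin d → ℕ, ∏ m : Fin d, (if m = i0 then a ^ (n m) / ((n m).factorial : ℝ) * Real.exp (μ * (n m))
        else (if n m ≤ K then a ^ (n m) / ((n m).factorial : ℝ) else 0))
      = Real.exp (a * Real.exp μ) *
          (∑ x ∈ Finset.range (K+1), a ^ x / (x.factorial : ℝ)) ^ (d - 1) := by
  rw [tsum_pi_prod d (fun m x => if m = i0 then a ^ x / (x.factorial : ℝ) * Real.exp (μ * x)
      else (if x ≤ K then a ^ x / (x.factorial : ℝ) else 0)) (hK_summable_norm d K a μ i0)]
  have : ∀ m : Fin d, (∑' x : ℕ, (if m = i0 then a ^ x / (x.factorial : ℝ) * Real.exp (μ * x)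
      else (if x ≤ K then a ^ x / (x.factorial : ℝ) else 0)))
      = if m = i0 then Real.exp (a * Real.exp μ)
        else (∑ x ∈ Finset.range (K+1), a ^ x / (x.factorial : ℝ)) := by
    intro m
    rcases eq_or_ne m i0 with h | h
    · simp only [if_pos h]; exact tsum_exp_lin a μ
    · simp only [if_neg h]; exact tsum_trunc a K
  rw [Finset.prod_congr rfl (fun m _ => this m),
    ← Finset.mul_prod_erase Finset.univ _ (Finset.mem_univ i0), if_pos rfl]
  congr 1
  rw [Finset.prod_congr rfl (fun m hm => if_neg (Finset.ne_of_mem_erase hm)),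
    Finset.prod_const, Finset.card_erase_of_mem (Finset.mem_univ i0),
    Finset.card_univ, Fintype.card_fin]

lemma summable_hK (d K : ℕ) (a μ : ℝ) (i0 : Fin d) :
    Summable (fun n : Fin d → ℕ =>
      ∏ m : Fin d, (if m = i0 then a ^ (n m) / ((n m).factorial : ℝ) * Real.exp (μ * (n m))
        else (if n m ≤ K then a ^ (n m) / ((n m).factorial : ℝ) else 0))) :=
  summable_pi_prod d (fun m x => if m = i0 then a ^ x / (x.factorial : ℝ) * Real.exp (μ * x)
    else (if x ≤ K then a ^ x / (x.factorial : ℝ) else 0)) (hK_summable_norm d K a μ i0)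

lemma exp_bound1 (a : ℝ) (d : ℕ) (hd : 3 ≤ d) (ha : 0 ≤ a) (c : ℝ) (hcd : (d:ℝ) * c ≤ 1) :
    Real.exp (-a * ((d:ℝ)-1)) * Real.exp (a * c) ^ d ≤ Real.exp (-a) := by
  rw [← Real.exp_nat_mul, ← Real.exp_add]
  apply Real.exp_le_exp.mpr
  have hd3 : (3:ℝ) ≤ (d:ℝ) := by exact_mod_cast hd
  have h1 : (d:ℝ) * (a * c) = a * ((d:ℝ) * c) := by ring
  have h2 : a * ((d:ℝ) * c) ≤ a * 1 := mul_le_mul_of_nonneg_left hcd ha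
  nlinarith

lemma exp_bound2 (a : ℝ) (d : ℕ) (hd : 3 ≤ d) (ha : 0 ≤ a) (c : ℝ) (hc : c ≤ 1) :
    Real.exp (-a * ((d:ℝ)-1)) * Real.exp (a * c) ≤ Real.exp (-a) := by
  rw [← Real.exp_add]
  apply Real.exp_le_exp.mpr
  have hd3 : (3:ℝ) ≤ (d:ℝ) := by exact_mod_cast hd
  have h2 : a * c ≤ a * 1 := mul_le_mul_of_nonneg_left hc ha
  nlinarith

def wfun (d T l : ℕ) : Fin d → ℝ := fun i => if (i:ℕ) < l then 2 else if (i:ℕ) < T then 1 else 0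

def Sfun (d T l : ℕ) (n : Fin d → ℕ) : ℝ := ∏ i, ((n i : ℝ) + wfun d T l i)

lemma w_nonneg (d T l : ℕ) (i : Fin d) : 0 ≤ wfun d T l i := by
  unfold wfun; split_ifs <;> norm_num

lemma S_nonneg (d T l : ℕ) (n : Fin d → ℕ) : 0 ≤ Sfun d T l n :=
  Finset.prod_nonneg (fun i _ => add_nonneg (Nat.cast_nonneg _) (w_nonneg d T l i))

lemma one_le_factor (d T l : ℕ) (n : Fin d → ℕ) (h : ∀ i : Fin d, T ≤ (i:ℕ) → 1 ≤ n i)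
    (r : Fin d) : 1 ≤ (n r : ℝ) + wfun d T l r := by
  have hnn : (0:ℝ) ≤ (n r : ℝ) := Nat.cast_nonneg _
  unfold wfun
  by_cases h1 : (r:ℕ) < l
  · rw [if_pos h1]; linarith
  · rw [if_neg h1]
    by_cases h2 : (r:ℕ) < T
    · rw [if_pos h2]; linarith
    · rw [if_neg h2, add_zero]
      exact_mod_cast h r (not_lt.mp h2)

lemma S_ge_single (d T l : ℕ) (n : Fin d → ℕ) (h : ∀ i : Fin d, T ≤ (i:ℕ) → 1 ≤ n i)
    (i0 : Fin d) : (n i0 : ℝ) ≤ Sfun d T l n := by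
  classical
  unfold Sfun
  have h1 : (∏ i : Fin d, (if i = i0 then (n i : ℝ) + wfun d T l i else 1))
      ≤ ∏ i : Fin d, ((n i : ℝ) + wfun d T l i) := by
    apply Finset.prod_le_prod
    · intro i _
      split_ifs
      · exact add_nonneg (Nat.cast_nonneg _) (w_nonneg d T l i)
      · norm_num
    · intro i _
      split_ifs
      · exact le_refl _
      · exact one_le_factor d T l n h i
  rw [Finset.prod_ite_eq' Finset.univ i0 (fun i => (n i : ℝ) + wfun d T l i),
    if_pos (Finset.mem_univ i0)] at h1
  have := w_nonneg d T l i0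
  linarith

lemma S_ge_pair (d T l : ℕ) (n : Fin d → ℕ) (h : ∀ i : Fin d, T ≤ (i:ℕ) → 1 ≤ n i)
    (p q : Fin d) (hpq : p ≠ q) : (n p : ℝ) * (n q : ℝ) ≤ Sfun d T l n := by
  classical
  unfold Sfun
  have h1 : (∏ i : Fin d, (if i ∈ ({p, q} : Finset (Fin d)) then (n i : ℝ) + wfun d T l i else 1))
      ≤ ∏ i : Fin d, ((n i : ℝ) + wfun d T l i) := by
    apply Finset.prod_le_prod
    · intro i _
      split_ifs
      · exact add_nonneg (Nat.cast_nonneg _) (w_nonneg d T l i)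
      · norm_num
    · intro i _
      split_ifs
      · exact le_refl _
      · exact one_le_factor d T l n h i
  rw [Finset.prod_ite_mem Finset.univ ({p, q} : Finset (Fin d))
    (fun i => (n i : ℝ) + wfun d T l i), Finset.univ_inter, Finset.prod_pair hpq] at h1
  have hp := w_nonneg d T l p
  have hq := w_nonneg d T l q
  have hnp : (0:ℝ) ≤ (n p : ℝ) := Nat.cast_nonneg _
  have hnq : (0:ℝ) ≤ (n q : ℝ) := Nat.cast_nonneg _
  nlinarith

lemma pointwise_bound (d T l K : ℕ) (hd : 3 ≤ d) (a ν : ℝ) (ha : 0 ≤ a) (hν : ν < 0)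
    (n : Fin d → ℕ) :
    (∏ i : Fin d, (if (i:ℕ) < T then a ^ (n i) / ((n i).factorial : ℝ)
        else (if n i = 0 then 0 else a ^ (n i) / ((n i).factorial : ℝ)))) *
      Real.exp (ν * Sfun d T l n)
    ≤ (∏ i : Fin d, (a ^ (n i) / ((n i).factorial : ℝ) * Real.exp ((ν * K / (d:ℝ)) * (n i))))
      + ∑ i0 : Fin d, ∏ m : Fin d,
          (if m = i0 then a ^ (n m) / ((n m).factorial : ℝ) * Real.exp (ν * (n m))
            else (if n m ≤ K then a ^ (n m) / ((n m).factorial : ℝ) else 0)) := by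
  classical
  have hdR : (0:ℝ) < (d:ℝ) := by exact_mod_cast (by omega : 0 < d)
  have hbase_nn : ∀ x : ℕ, (0:ℝ) ≤ a ^ x / (x.factorial : ℝ) := by
    intro x; positivity
  have hprime_nn : (0:ℝ) ≤ ∏ i : Fin d,
      (a ^ (n i) / ((n i).factorial : ℝ) * Real.exp ((ν * K / (d:ℝ)) * (n i))) :=
    Finset.prod_nonneg (fun i _ => mul_nonneg (hbase_nn _) (Real.exp_pos _).le)
  have hK_nn : ∀ i0 : Fin d, (0:ℝ) ≤ ∏ m : Fin d,
      (if m = i0 then a ^ (n m) / ((n m).factorial : ℝ) * Real.exp (ν * (n m))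
        else (if n m ≤ K then a ^ (n m) / ((n m).factorial : ℝ) else 0)) := by
    intro i0
    apply Finset.prod_nonneg
    intro m _
    split_ifs <;> positivity
  have hKsum_nn : (0:ℝ) ≤ ∑ i0 : Fin d, ∏ m : Fin d,
      (if m = i0 then a ^ (n m) / ((n m).factorial : ℝ) * Real.exp (ν * (n m))
        else (if n m ≤ K then a ^ (n m) / ((n m).factorial : ℝ) else 0)) :=
    Finset.sum_nonneg (fun i0 _ => hK_nn i0)
  by_cases hP : ∀ i : Fin d, T ≤ (i:ℕ) → 1 ≤ n i
  · -- all tail coordinates positive: gB = plain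
    have hgB : (∏ i : Fin d, (if (i:ℕ) < T then a ^ (n i) / ((n i).factorial : ℝ)
        else (if n i = 0 then 0 else a ^ (n i) / ((n i).factorial : ℝ))))
        = ∏ i : Fin d, a ^ (n i) / ((n i).factorial : ℝ) := by
      apply Finset.prod_congr rfl
      intro i _
      by_cases h1 : (i:ℕ) < T
      · rw [if_pos h1]
      · rw [if_neg h1, if_neg (by have := hP i (not_lt.mp h1); omega)]
    rw [hgB]
    have hplain_nn : (0:ℝ) ≤ ∏ i : Fin d, a ^ (n i) / ((n i).factorial : ℝ) :=
      Finset.prod_nonneg (fun i _ => hbase_nn _)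
    by_cases hbig : ∃ p q : Fin d, p ≠ q ∧ K < n p ∧ K < n q
    · -- two big coordinates : bound by hprime term
      obtain ⟨p, q, hpq, hKp, hKq⟩ := hbig
      have hSm : ∀ m : Fin d, (K:ℝ) * (n m : ℝ) ≤ Sfun d T l n := by
        intro m
        rcases eq_or_ne m p with rfl | hmp
        · have h1 := S_ge_pair d T l n hP q m hpq.symm
          have h2 : (K:ℝ) ≤ (n q : ℝ) := by exact_mod_cast hKq.le
          nlinarith [Nat.cast_nonneg (n m) (α := ℝ)]
        · have h1 := S_ge_pair d T l n hP p m (fun hc => hmp hc.symm)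
          have h2 : (K:ℝ) ≤ (n p : ℝ) := by exact_mod_cast hKp.le
          nlinarith [Nat.cast_nonneg (n m) (α := ℝ)]
      have hsum : (K:ℝ) * ∑ m : Fin d, (n m : ℝ) ≤ (d:ℝ) * Sfun d T l n := by
        rw [Finset.mul_sum]
        calc ∑ m : Fin d, (K:ℝ) * (n m : ℝ) ≤ ∑ _m : Fin d, Sfun d T l n :=
              Finset.sum_le_sum (fun m _ => hSm m)
          _ = (d:ℝ) * Sfun d T l n := by
              rw [Finset.sum_const, Finset.card_univ, Fintype.card_fin, nsmul_eq_mul]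
      have hexp : Real.exp (ν * Sfun d T l n)
          ≤ Real.exp ((ν * K / (d:ℝ)) * ∑ m : Fin d, (n m : ℝ)) := by
        apply Real.exp_le_exp.mpr
        rw [div_mul_eq_mul_div, le_div_iff₀ hdR]
        nlinarith [mul_nonneg (neg_nonneg.mpr hν.le) (neg_nonneg.mpr
          (by linarith : (K:ℝ) * ∑ m : Fin d, (n m : ℝ) - (d:ℝ) * Sfun d T l n ≤ 0))]
      have hrw : (∏ i : Fin d, (a ^ (n i) / ((n i).factorial : ℝ)
            * Real.exp ((ν * K / (d:ℝ)) * (n i))))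
          = (∏ i : Fin d, a ^ (n i) / ((n i).factorial : ℝ))
            * Real.exp ((ν * K / (d:ℝ)) * ∑ m : Fin d, (n m : ℝ)) := by
        rw [Finset.prod_mul_distrib, Finset.mul_sum, Real.exp_sum]
      have h3 : (∏ i : Fin d, a ^ (n i) / ((n i).factorial : ℝ)) * Real.exp (ν * Sfun d T l n)
          ≤ (∏ i : Fin d, a ^ (n i) / ((n i).factorial : ℝ))
            * Real.exp ((ν * K / (d:ℝ)) * ∑ m : Fin d, (n m : ℝ)) :=
        mul_le_mul_of_nonneg_left hexp hplain_nn
      rw [hrw]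
      linarith
    · -- at most one big coordinate
      push_neg at hbig
      have hi0 : ∃ i0 : Fin d, ∀ m : Fin d, m ≠ i0 → n m ≤ K := by
        by_cases hx : ∃ i : Fin d, K < n i
        · obtain ⟨i, hi⟩ := hx
          refine ⟨i, fun m hm => ?_⟩
          by_contra hc
          exact absurd hi (not_lt.mpr (hbig m i hm (not_le.mp hc)))
        · push_neg at hx
          exact ⟨⟨0, by omega⟩, fun m _ => hx m⟩
      obtain ⟨i0, hi0⟩ := hi0
      have hexp : Real.exp (ν * Sfun d T l n) ≤ Real.exp (ν * (n i0 : ℝ)) := by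
        apply Real.exp_le_exp.mpr
        exact mul_le_mul_of_nonpos_left (S_ge_single d T l n hP i0) hν.le
      have hKval : (∏ m : Fin d,
          (if m = i0 then a ^ (n m) / ((n m).factorial : ℝ) * Real.exp (ν * (n m))
            else (if n m ≤ K then a ^ (n m) / ((n m).factorial : ℝ) else 0)))
          = (∏ i : Fin d, a ^ (n i) / ((n i).factorial : ℝ)) * Real.exp (ν * (n i0 : ℝ)) := by
        have hfac : ∀ m : Fin d,
            (if m = i0 then a ^ (n m) / ((n m).factorial : ℝ) * Real.exp (ν * (n m))
              else (if n m ≤ K then a ^ (n m) / ((n m).factorial : ℝ) else 0))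
            = a ^ (n m) / ((n m).factorial : ℝ)
              * (if m = i0 then Real.exp (ν * (n m)) else 1) := by
          intro m
          rcases eq_or_ne m i0 with rfl | hm
          · rw [if_pos rfl, if_pos rfl]
          · rw [if_neg hm, if_neg hm, if_pos (hi0 m hm), mul_one]
        rw [Finset.prod_congr rfl (fun m _ => hfac m), Finset.prod_mul_distrib,
          Finset.prod_ite_eq' Finset.univ i0 (fun m => Real.exp (ν * (n m : ℝ))),
          if_pos (Finset.mem_univ i0)]
      have h3 : (∏ i : Fin d, a ^ (n i) / ((n i).factorial : ℝ)) * Real.exp (ν * Sfun d T l n)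
          ≤ (∏ i : Fin d, a ^ (n i) / ((n i).factorial : ℝ)) * Real.exp (ν * (n i0 : ℝ)) :=
        mul_le_mul_of_nonneg_left hexp hplain_nn
      have h4 : (∏ i : Fin d, a ^ (n i) / ((n i).factorial : ℝ)) * Real.exp (ν * (n i0 : ℝ))
          ≤ ∑ i0' : Fin d, ∏ m : Fin d,
            (if m = i0' then a ^ (n m) / ((n m).factorial : ℝ) * Real.exp (ν * (n m))
              else (if n m ≤ K then a ^ (n m) / ((n m).factorial : ℝ) else 0)) := by
        rw [← hKval]
        exact Finset.single_le_sum (fun i _ => hK_nn i) (Finset.mem_univ i0)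
      linarith
  · -- some tail coordinate is zero: gB = 0
    push_neg at hP
    obtain ⟨i, hiT, hni⟩ := hP
    have h0 : (∏ i : Fin d, (if (i:ℕ) < T then a ^ (n i) / ((n i).factorial : ℝ)
        else (if n i = 0 then 0 else a ^ (n i) / ((n i).factorial : ℝ)))) = 0 := by
      apply Finset.prod_eq_zero (Finset.mem_univ i)
      rw [if_neg (not_lt.mpr hiT), if_pos (by omega)]
    rw [h0, zero_mul]
    exact add_nonneg hprime_nn hKsum_nn
lemma gB_eq_plain (d T : ℕ) (a : ℝ) (n : Fin d → ℕ) (hP : ∀ i : Fin d, T ≤ (i:ℕ) → 1 ≤ n i) :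
    (∏ i : Fin d, (if (i:ℕ) < T then a ^ (n i) / ((n i).factorial : ℝ)
        else (if n i = 0 then 0 else a ^ (n i) / ((n i).factorial : ℝ))))
      = ∏ i : Fin d, a ^ (n i) / ((n i).factorial : ℝ) := by
  apply Finset.prod_congr rfl
  intro i _
  by_cases h1 : (i:ℕ) < T
  · rw [if_pos h1]
  · rw [if_neg h1, if_neg (by have := hP i (not_lt.mp h1); omega)]

lemma gB_eq_zero (d T : ℕ) (a : ℝ) (n : Fin d → ℕ) (i : Fin d) (hiT : T ≤ (i:ℕ))
    (h0 : n i = 0) :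
    (∏ i : Fin d, (if (i:ℕ) < T then a ^ (n i) / ((n i).factorial : ℝ)
        else (if n i = 0 then 0 else a ^ (n i) / ((n i).factorial : ℝ)))) = 0 := by
  apply Finset.prod_eq_zero (Finset.mem_univ i)
  rw [if_neg (not_lt.mpr hiT), if_pos h0]

lemma S_eq_zero (d T l : ℕ) (hlT : l ≤ T) (n : Fin d → ℕ) (i : Fin d) (hiT : T ≤ (i:ℕ))
    (h0 : n i = 0) : Sfun d T l n = 0 := by
  unfold Sfun
  apply Finset.prod_eq_zero (Finset.mem_univ i)
  rw [h0]
  unfold wfun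
  rw [if_neg (by omega), if_neg (by omega)]
  norm_num

lemma gB_nonneg (d T : ℕ) (a : ℝ) (ha : 0 ≤ a) (n : Fin d → ℕ) :
    0 ≤ ∏ i : Fin d, (if (i:ℕ) < T then a ^ (n i) / ((n i).factorial : ℝ)
        else (if n i = 0 then 0 else a ^ (n i) / ((n i).factorial : ℝ))) := by
  apply Finset.prod_nonneg
  intro i _
  split_ifs <;> positivity

lemma exp_S_le_one (d T l : ℕ) (ν : ℝ) (hν : ν < 0) (n : Fin d → ℕ) :
    Real.exp (ν * Sfun d T l n) ≤ 1 := by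
  rw [show (1:ℝ) = Real.exp 0 by rw [Real.exp_zero]]
  apply Real.exp_le_exp.mpr
  have h1 := S_nonneg d T l n
  nlinarith

lemma summable_gBexp (d T l : ℕ) (a ν : ℝ) (ha : 0 ≤ a) (hν : ν < 0) :
    Summable (fun n : Fin d → ℕ =>
      (∏ i : Fin d, (if (i:ℕ) < T then a ^ (n i) / ((n i).factorial : ℝ)
          else (if n i = 0 then 0 else a ^ (n i) / ((n i).factorial : ℝ))))
        * Real.exp (ν * Sfun d T l n)) := by
  apply Summable.of_nonneg_of_le
    (fun n => mul_nonneg (gB_nonneg d T a ha n) (Real.exp_pos _).le)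
    (fun n => mul_le_of_le_one_right (gB_nonneg d T a ha n) (exp_S_le_one d T l ν hν n))
    (summable_gB d T a)
/-- Series form of Proposition 3(b): the limit equals `2k - d + l`. -/
theorem second_order_correlation_series_limit
    (d k l : ℕ) (hd : 3 ≤ d) (hk1 : 1 ≤ k) (hk2 : k ≤ d - 1)
    (hl1 : d - 2 * k ≤ l) (hl2 : l ≤ d - k) (ν : ℝ) (hν : ν < 0) :
    Tendsto (fun a : ℝ =>
        Real.exp (-a * ((d : ℝ) - 1)) *
          ∑' n : Fin d → ℕ,
            (∏ i, a ^ (n i) / ((n i).factorial : ℝ)) *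
              Real.exp (ν *
                ∑ D ∈ (Finset.univ.filter
                    (fun i : Fin d => (i : ℕ) < 2 * d - 2 * k - l)).powerset,
                  (2 : ℝ) ^ (D.filter (fun i : Fin d => (i : ℕ) < l)).card *
                    ∏ m ∈ Finset.univ \ D, (n m : ℝ)))
      atTop (nhds (2 * (k : ℝ) + l - d)) := by
  classical
  set T := 2 * d - 2 * k - l with hT
  have hTd : T ≤ d := by omega
  have hlT : l ≤ T := by omega
  set J := d - T with hJdef
  have hTJ : T + J = d := by omega
  have hJval : ((J : ℕ) : ℝ) = 2 * (k : ℝ) + l - d := by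
    have h2 : d ≤ 2 * k + l := by omega
    have h1 : J = 2 * k + l - d := by omega
    rw [h1, Nat.cast_sub h2]
    push_cast
    ring
  have hdR : (0:ℝ) < d := by exact_mod_cast (by omega : 0 < d)
  -- rewrite the inner powerset sum into product form
  have hrw : ∀ (a : ℝ) (n : Fin d → ℕ),
      (∏ i, a ^ (n i) / ((n i).factorial : ℝ)) *
        Real.exp (ν * ∑ D ∈ (Finset.univ.filter (fun i : Fin d => (i : ℕ) < T)).powerset,
          (2 : ℝ) ^ (D.filter (fun i : Fin d => (i : ℕ) < l)).card *
            ∏ m ∈ Finset.univ \ D, (n m : ℝ))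
      = (∏ i, a ^ (n i) / ((n i).factorial : ℝ)) * Real.exp (ν * Sfun d T l n) := by
    intro a n
    rw [powerset_sum_eq_prod d T l hlT n]
    rfl
  -- the constant K and the slope μ
  set K : ℕ := ⌈((d:ℝ) * Real.log d) / (-ν)⌉₊ with hKdef
  have hμ1 : (d:ℝ) * Real.exp (ν * (K:ℝ) / (d:ℝ)) ≤ 1 := by
    have h1 : ((d:ℝ) * Real.log d) / (-ν) ≤ (K:ℝ) := Nat.le_ceil _
    have hν0 : (0:ℝ) < -ν := by linarith
    have h3 : (d:ℝ) * Real.log d ≤ (K:ℝ) * (-ν) := by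
      rw [div_le_iff₀ hν0] at h1
      linarith
    have h2 : ν * (K:ℝ) / (d:ℝ) ≤ -Real.log d := by
      rw [div_le_iff₀ hdR]
      nlinarith
    have h4 : Real.exp (ν * (K:ℝ) / (d:ℝ)) ≤ ((d:ℝ))⁻¹ := by
      calc Real.exp (ν * (K:ℝ) / (d:ℝ)) ≤ Real.exp (-Real.log d) := Real.exp_le_exp.mpr h2
        _ = ((d:ℝ))⁻¹ := by rw [Real.exp_neg, Real.exp_log hdR]
    calc (d:ℝ) * Real.exp (ν * (K:ℝ) / (d:ℝ)) ≤ (d:ℝ) * ((d:ℝ))⁻¹ :=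
          mul_le_mul_of_nonneg_left h4 hdR.le
      _ = 1 := mul_inv_cancel₀ (ne_of_gt hdR)
  -- the key split identity for a ≥ 0
  have key : ∀ a : ℝ, 0 ≤ a →
      Real.exp (-a * ((d:ℝ) - 1)) * (∑' n : Fin d → ℕ,
        (∏ i, a ^ (n i) / ((n i).factorial : ℝ)) * Real.exp (ν * Sfun d T l n))
      = (∑ i ∈ Finset.range J, (1 - Real.exp (-a)) ^ i)
        + Real.exp (-a * ((d:ℝ) - 1)) * (∑' n : Fin d → ℕ,
            (∏ i : Fin d, (if (i:ℕ) < T then a ^ (n i) / ((n i).factorial : ℝ)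
              else (if n i = 0 then 0 else a ^ (n i) / ((n i).factorial : ℝ))))
              * Real.exp (ν * Sfun d T l n)) := by
    intro a ha
    have hdecomp : ∀ n : Fin d → ℕ,
        (∏ i, a ^ (n i) / ((n i).factorial : ℝ)) * Real.exp (ν * Sfun d T l n)
        = ((∏ i, a ^ (n i) / ((n i).factorial : ℝ))
            - ∏ i : Fin d, (if (i:ℕ) < T then a ^ (n i) / ((n i).factorial : ℝ)
                else (if n i = 0 then 0 else a ^ (n i) / ((n i).factorial : ℝ))))
          + (∏ i : Fin d, (if (i:ℕ) < T then a ^ (n i) / ((n i).factorial : ℝ)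
                else (if n i = 0 then 0 else a ^ (n i) / ((n i).factorial : ℝ))))
            * Real.exp (ν * Sfun d T l n) := by
      intro n
      by_cases hP : ∀ i : Fin d, T ≤ (i:ℕ) → 1 ≤ n i
      · rw [gB_eq_plain d T a n hP]
        ring
      · push_neg at hP
        obtain ⟨i, hiT, hni⟩ := hP
        have hni0 : n i = 0 := by omega
        rw [gB_eq_zero d T a n i hiT hni0, S_eq_zero d T l hlT n i hiT hni0]
        rw [mul_zero, Real.exp_zero]
        ring
    have hsumm_plain := summable_plain d a
    have hsumm_gB := summable_gB d T a
    have hsumm_gBexp := summable_gBexp d T l a ν ha hν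
    rw [tsum_congr hdecomp, Summable.tsum_add (hsumm_plain.sub hsumm_gB) hsumm_gBexp,
      Summable.tsum_sub hsumm_plain hsumm_gB, tsum_plain d a, tsum_gB d T hTd a, mul_add]
    congr 1
    have hJd : d - T = J := hJdef.symm
    have hTcast : Real.exp a ^ T = Real.exp (a * (T:ℝ)) := by
      rw [mul_comm, Real.exp_nat_mul]
    have hdcast : (d:ℝ) = ((T + J : ℕ) : ℝ) := by rw [hTJ]
    rw [hJd, hTcast, hdcast]
    exact B0_formula a T J
  -- the error term tends to zero
  have hG0 : Tendsto (fun a : ℝ => Real.exp (-a * ((d:ℝ) - 1)) * (∑' n : Fin d → ℕ,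
      (∏ i : Fin d, (if (i:ℕ) < T then a ^ (n i) / ((n i).factorial : ℝ)
        else (if n i = 0 then 0 else a ^ (n i) / ((n i).factorial : ℝ))))
        * Real.exp (ν * Sfun d T l n))) atTop (nhds 0) := by
    have hlim : Tendsto (fun a : ℝ => Real.exp (-a)
        + ((d:ℝ) * ((K:ℝ) + 1) ^ (d-1)) * (a ^ (K*(d-1)) * Real.exp (-a)))
        atTop (nhds 0) := by
      have h1 := Real.tendsto_exp_neg_atTop_nhds_zero
      have h2 := (Real.tendsto_pow_mul_exp_neg_atTop_nhds_zero (K*(d-1))).const_mul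
        ((d:ℝ) * ((K:ℝ) + 1) ^ (d-1))
      simpa using h1.add h2
    apply tendsto_of_tendsto_of_tendsto_of_le_of_le' tendsto_const_nhds hlim
    · filter_upwards [eventually_ge_atTop (0:ℝ)] with a ha
      apply mul_nonneg (Real.exp_pos _).le
      apply tsum_nonneg
      intro n
      exact mul_nonneg (gB_nonneg d T a ha n) (Real.exp_pos _).le
    · filter_upwards [eventually_ge_atTop (1:ℝ)] with a ha
      have ha0 : (0:ℝ) ≤ a := by linarith
      have hsumm_lhs := summable_gBexp d T l a ν ha0 hν
      have hsumm_hp := summable_hprime d a (ν * (K:ℝ) / (d:ℝ))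
      have hsumm_each : ∀ i0 ∈ (Finset.univ : Finset (Fin d)),
          Summable (fun n : Fin d → ℕ => ∏ m : Fin d,
            (if m = i0 then a ^ (n m) / ((n m).factorial : ℝ) * Real.exp (ν * (n m))
              else (if n m ≤ K then a ^ (n m) / ((n m).factorial : ℝ) else 0))) :=
        fun i0 _ => summable_hK d K a ν i0
      have hsumm_hKs : Summable (fun n : Fin d → ℕ => ∑ i0 : Fin d, ∏ m : Fin d,
          (if m = i0 then a ^ (n m) / ((n m).factorial : ℝ) * Real.exp (ν * (n m))
            else (if n m ≤ K then a ^ (n m) / ((n m).factorial : ℝ) else 0))) :=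
        (hasSum_sum (fun i0 hi0 => (hsumm_each i0 hi0).hasSum)).summable
      have h4 : (∑' n : Fin d → ℕ,
          (∏ i : Fin d, (if (i:ℕ) < T then a ^ (n i) / ((n i).factorial : ℝ)
            else (if n i = 0 then 0 else a ^ (n i) / ((n i).factorial : ℝ))))
            * Real.exp (ν * Sfun d T l n))
          ≤ ∑' n : Fin d → ℕ,
            ((∏ i : Fin d, (a ^ (n i) / ((n i).factorial : ℝ)
                * Real.exp ((ν * (K:ℝ) / (d:ℝ)) * (n i))))
              + ∑ i0 : Fin d, ∏ m : Fin d,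
                  (if m = i0 then a ^ (n m) / ((n m).factorial : ℝ) * Real.exp (ν * (n m))
                    else (if n m ≤ K then a ^ (n m) / ((n m).factorial : ℝ) else 0))) :=
        Summable.tsum_le_tsum (pointwise_bound d T l K hd a ν ha0 hν) hsumm_lhs
          (hsumm_hp.add hsumm_hKs)
      rw [Summable.tsum_add hsumm_hp hsumm_hKs, Summable.tsum_finsetSum hsumm_each,
        tsum_hprime d a (ν * (K:ℝ) / (d:ℝ)),
        Finset.sum_congr rfl (fun i0 _ => tsum_hK d K a ν i0),
        Finset.sum_const, Finset.card_univ, Fintype.card_fin, nsmul_eq_mul] at h4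
      -- multiply by the prefactor
      have hexpf : (0:ℝ) < Real.exp (-a * ((d:ℝ) - 1)) := Real.exp_pos _
      have h5 : Real.exp (-a * ((d:ℝ) - 1)) * (∑' n : Fin d → ℕ,
          (∏ i : Fin d, (if (i:ℕ) < T then a ^ (n i) / ((n i).factorial : ℝ)
            else (if n i = 0 then 0 else a ^ (n i) / ((n i).factorial : ℝ))))
            * Real.exp (ν * Sfun d T l n))
          ≤ Real.exp (-a * ((d:ℝ) - 1)) *
            (Real.exp (a * Real.exp (ν * (K:ℝ) / (d:ℝ))) ^ d
              + (d:ℝ) * (Real.exp (a * Real.exp ν) *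
                  (∑ x ∈ Finset.range (K+1), a ^ x / (x.factorial : ℝ)) ^ (d - 1))) :=
        mul_le_mul_of_nonneg_left h4 hexpf.le
      -- bound the two pieces
      have hb1 : Real.exp (-a * ((d:ℝ) - 1)) * Real.exp (a * Real.exp (ν * (K:ℝ) / (d:ℝ))) ^ d
          ≤ Real.exp (-a) := exp_bound1 a d hd ha0 _ hμ1
      have hexpν1 : Real.exp ν ≤ 1 := by
        rw [show (1:ℝ) = Real.exp 0 by rw [Real.exp_zero]]
        exact Real.exp_le_exp.mpr hν.le
      have hb2' : Real.exp (-a * ((d:ℝ) - 1)) * Real.exp (a * Real.exp ν) ≤ Real.exp (-a) :=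
        exp_bound2 a d hd ha0 _ hexpν1
      have hPK0 : (0:ℝ) ≤ ∑ x ∈ Finset.range (K+1), a ^ x / (x.factorial : ℝ) :=
        Finset.sum_nonneg (fun x _ => by positivity)
      have hPKle := trunc_le a K ha
      have hPKpow : (∑ x ∈ Finset.range (K+1), a ^ x / (x.factorial : ℝ)) ^ (d-1)
          ≤ (((K:ℝ) + 1) * a ^ K) ^ (d-1) := by
        exact pow_le_pow_left₀ hPK0 hPKle _
      have hb2 : Real.exp (-a * ((d:ℝ) - 1)) * ((d:ℝ) * (Real.exp (a * Real.exp ν) *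
            (∑ x ∈ Finset.range (K+1), a ^ x / (x.factorial : ℝ)) ^ (d - 1)))
          ≤ ((d:ℝ) * ((K:ℝ) + 1) ^ (d-1)) * (a ^ (K*(d-1)) * Real.exp (-a)) := by
        have s2 : (0:ℝ) ≤ Real.exp (-a * ((d:ℝ) - 1)) * Real.exp (a * Real.exp ν) := by
          positivity
        have s4 : (d:ℝ) * (∑ x ∈ Finset.range (K+1), a ^ x / (x.factorial : ℝ)) ^ (d-1)
            ≤ (d:ℝ) * (((K:ℝ) + 1) * a ^ K) ^ (d-1) :=
          mul_le_mul_of_nonneg_left hPKpow hdR.le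
        have s5 : ((d:ℝ) * (∑ x ∈ Finset.range (K+1), a ^ x / (x.factorial : ℝ)) ^ (d-1))
              * (Real.exp (-a * ((d:ℝ) - 1)) * Real.exp (a * Real.exp ν))
            ≤ ((d:ℝ) * (((K:ℝ) + 1) * a ^ K) ^ (d-1)) * Real.exp (-a) := by
          apply mul_le_mul s4 hb2' s2
          positivity
        calc Real.exp (-a * ((d:ℝ) - 1)) * ((d:ℝ) * (Real.exp (a * Real.exp ν) *
              (∑ x ∈ Finset.range (K+1), a ^ x / (x.factorial : ℝ)) ^ (d - 1)))
            = ((d:ℝ) * (∑ x ∈ Finset.range (K+1), a ^ x / (x.factorial : ℝ)) ^ (d-1))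
              * (Real.exp (-a * ((d:ℝ) - 1)) * Real.exp (a * Real.exp ν)) := by ring
          _ ≤ ((d:ℝ) * (((K:ℝ) + 1) * a ^ K) ^ (d-1)) * Real.exp (-a) := s5
          _ = ((d:ℝ) * ((K:ℝ) + 1) ^ (d-1)) * (a ^ (K*(d-1)) * Real.exp (-a)) := by
              rw [mul_pow, mul_comm K (d-1), pow_mul]
              ring
      calc Real.exp (-a * ((d:ℝ) - 1)) * (∑' n : Fin d → ℕ,
            (∏ i : Fin d, (if (i:ℕ) < T then a ^ (n i) / ((n i).factorial : ℝ)
              else (if n i = 0 then 0 else a ^ (n i) / ((n i).factorial : ℝ))))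
              * Real.exp (ν * Sfun d T l n))
          ≤ Real.exp (-a * ((d:ℝ) - 1)) *
            (Real.exp (a * Real.exp (ν * (K:ℝ) / (d:ℝ))) ^ d
              + (d:ℝ) * (Real.exp (a * Real.exp ν) *
                  (∑ x ∈ Finset.range (K+1), a ^ x / (x.factorial : ℝ)) ^ (d - 1))) := h5
        _ ≤ Real.exp (-a)
            + ((d:ℝ) * ((K:ℝ) + 1) ^ (d-1)) * (a ^ (K*(d-1)) * Real.exp (-a)) := by
            rw [mul_add]
            exact add_le_add hb1 hb2
  -- conclude
  have hmain : Tendsto (fun a : ℝ =>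
      (∑ i ∈ Finset.range J, (1 - Real.exp (-a)) ^ i)
        + Real.exp (-a * ((d:ℝ) - 1)) * (∑' n : Fin d → ℕ,
            (∏ i : Fin d, (if (i:ℕ) < T then a ^ (n i) / ((n i).factorial : ℝ)
              else (if n i = 0 then 0 else a ^ (n i) / ((n i).factorial : ℝ))))
              * Real.exp (ν * Sfun d T l n)))
      atTop (nhds ((J:ℝ) + 0)) := (geom_tendsto J).add hG0
  have hval : (2 * (k : ℝ) + l - d) = ((J:ℝ) + 0) := by rw [hJval]; ring
  rw [hval]
  apply Tendsto.congr' _ hmain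
  filter_upwards [eventually_ge_atTop (0:ℝ)] with a ha
  rw [← key a ha]
  congr 1
  exact tsum_congr (fun n => (hrw a n).symm)
end

section
/- Let m ≥ 2 be an integer and ν < 0. Then lim_{a→∞} Σ_{n∈ℕ^m, n_i ≥ ⌈√a⌉ for all i} (Π_{i=1}^m a^{n_i}/n_i!) · exp(a·e^{ν·n_1⋯n_m} − a·m) = 1. -/
open Filter

namespace D1aux

lemma tsum_pow_div_factorial (a : ℝ) : ∑' n : ℕ, a ^ n / (n.factorial : ℝ) = Real.exp a := by
  rw [Real.exp_eq_exp_ℝ, NormedSpace.exp_eq_tsum_div]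

set_option maxHeartbeats 1000000 in
lemma hasSum_pi_prod (k : ℕ) (f : ℕ → ℝ) (hf0 : ∀ n, 0 ≤ f n) (hf : Summable f) :
    HasSum (fun n : Fin k → ℕ => ∏ i, f (n i)) ((∑' n, f n) ^ k) := by
  induction k with
  | zero =>
      have : HasSum (fun n : Fin 0 → ℕ => ∏ i, f (n i)) (∏ i : Fin 0, f ((fun _ => 0) i)) :=
        hasSum_single (fun _ : Fin 0 => 0)
          (fun b' hb' => absurd (funext fun i => i.elim0) hb')
      simpa using this
  | succ k ih =>
      have hnorm : Summable fun n => ‖f n‖ :=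
        hf.congr fun n => (Real.norm_of_nonneg (hf0 n)).symm
      have hFnorm : Summable fun p : Fin k → ℕ => ‖∏ i, f (p i)‖ :=
        ih.summable.congr fun p =>
          (Real.norm_of_nonneg (Finset.prod_nonneg fun i _ => hf0 _)).symm
      have hmul : Summable fun z : ℕ × (Fin k → ℕ) => f z.1 * ∏ i, f (z.2 i) :=
        (Summable.mul_norm (f := f) (g := fun p : Fin k → ℕ => ∏ i, f (p i))
          hnorm hFnorm).of_norm
      have h2 : HasSum (fun z : ℕ × (Fin k → ℕ) => f z.1 * ∏ i, f (z.2 i))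
          ((∑' n, f n) * (∑' n, f n) ^ k) :=
        HasSum.mul (f := f) (g := fun p : Fin k → ℕ => ∏ i, f (p i)) hf.hasSum ih hmul
      rw [← (Fin.consEquiv (fun _ : Fin (k + 1) => ℕ)).hasSum_iff]
      have hfun : ((fun n : Fin (k + 1) → ℕ => ∏ i, f (n i)) ∘
          (Fin.consEquiv (fun _ : Fin (k + 1) => ℕ))) =
          fun z : ℕ × (Fin k → ℕ) => f z.1 * ∏ i, f (z.2 i) := by
        funext z
        simp [Fin.consEquiv, Fin.prod_univ_succ]
      rw [hfun, pow_succ]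
      simpa [mul_comm] using h2

noncomputable def NN (a : ℝ) : ℕ := ⌈Real.sqrt a⌉₊

noncomputable def g (a : ℝ) (n : ℕ) : ℝ := a ^ n / (n.factorial : ℝ) * Real.exp (-a)

noncomputable def gt' (a : ℝ) : ℕ → ℝ := Set.indicator {n | NN a ≤ n} (g a)

noncomputable def T (a : ℝ) : ℝ := ∑' n, gt' a n

lemma summable_g (a : ℝ) : Summable (g a) :=
  (Real.summable_pow_div_factorial a).mul_right _

lemma tsum_g (a : ℝ) : ∑' n, g a n = 1 := by
  simp only [g]
  rw [tsum_mul_right, tsum_pow_div_factorial, ← Real.exp_add]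
  simp

lemma g_nonneg {a : ℝ} (ha : 0 ≤ a) (n : ℕ) : 0 ≤ g a n :=
  mul_nonneg (div_nonneg (pow_nonneg ha n) (Nat.cast_nonneg _)) (Real.exp_nonneg _)

lemma summable_gt (a : ℝ) : Summable (gt' a) := (summable_g a).indicator _

lemma gt_nonneg {a : ℝ} (ha : 0 ≤ a) (n : ℕ) : 0 ≤ gt' a n :=
  Set.indicator_nonneg (fun n _ => g_nonneg ha n) n

lemma gt_le_g {a : ℝ} (ha : 0 ≤ a) (n : ℕ) : gt' a n ≤ g a n :=
  Set.indicator_le_self' (fun n _ => g_nonneg ha n) n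

lemma T_nonneg {a : ℝ} (ha : 0 ≤ a) : 0 ≤ T a :=
  tsum_nonneg (gt_nonneg ha)

lemma T_le_one {a : ℝ} (ha : 0 ≤ a) : T a ≤ 1 := by
  rw [T, ← tsum_g a]
  exact Summable.tsum_le_tsum (gt_le_g ha) (summable_gt a) (summable_g a)

lemma T_eq (a : ℝ) : T a = 1 - ∑ n ∈ Finset.range (NN a), g a n := by
  have h1 : ∀ n, gt' a n = g a n - Set.indicator {n | n < NN a} (g a) n := by
    intro n
    by_cases h : NN a ≤ n
    · rw [gt', Set.indicator_of_mem (s := {n | NN a ≤ n}) h,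
        Set.indicator_of_notMem (s := {n | n < NN a}) (by simpa using h), sub_zero]
    · rw [gt', Set.indicator_of_notMem (s := {n | NN a ≤ n}) (by simpa using h),
        Set.indicator_of_mem (s := {n | n < NN a}) (by simpa using Nat.lt_of_not_le h),
        sub_self]
  have hs : Summable (Set.indicator {n | n < NN a} (g a)) := (summable_g a).indicator _
  rw [T, tsum_congr h1, Summable.tsum_sub (summable_g a) hs, tsum_g]
  congr 1
  rw [tsum_eq_sum (s := Finset.range (NN a))
    (fun b hb => Set.indicator_of_notMem (s := {n | n < NN a}) (by simpa using hb) _)]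
  exact Finset.sum_congr rfl fun b hb =>
    Set.indicator_of_mem (s := {n | n < NN a}) (by simpa using hb) _

lemma E_bound {a : ℝ} (ha : 0 ≤ a) :
    ∑ n ∈ Finset.range (NN a), g a n ≤
      Real.exp ((Real.sqrt a + 1) * Real.log 2 - a / 2) := by
  have ha2 : (0:ℝ) ≤ a / 2 := by linarith
  have hterm : ∀ n ∈ Finset.range (NN a),
      g a n ≤ 2 ^ NN a * ((a / 2) ^ n / (n.factorial : ℝ)) * Real.exp (-a) := by
    intro n hn
    have hn' : n ≤ NN a := (Finset.mem_range.mp hn).le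
    have hx : a ^ n ≤ 2 ^ NN a * (a / 2) ^ n := by
      have h1 : a ^ n = 2 ^ n * (a / 2) ^ n := by
        rw [← mul_pow]; ring_nf
      rw [h1]
      exact mul_le_mul_of_nonneg_right (pow_le_pow_right₀ (by norm_num) hn')
        (pow_nonneg ha2 n)
    simp only [g]
    have hmain : a ^ n / (n.factorial : ℝ) ≤ 2 ^ NN a * ((a / 2) ^ n / (n.factorial : ℝ)) := by
      rw [mul_div_assoc']
      gcongr
    exact mul_le_mul_of_nonneg_right hmain (Real.exp_nonneg _)
  calc ∑ n ∈ Finset.range (NN a), g a n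
      ≤ ∑ n ∈ Finset.range (NN a),
          2 ^ NN a * ((a / 2) ^ n / (n.factorial : ℝ)) * Real.exp (-a) :=
        Finset.sum_le_sum hterm
    _ = 2 ^ NN a * Real.exp (-a) *
          ∑ n ∈ Finset.range (NN a), (a / 2) ^ n / (n.factorial : ℝ) := by
        rw [Finset.mul_sum]
        exact Finset.sum_congr rfl fun n _ => by ring
    _ ≤ 2 ^ NN a * Real.exp (-a) * Real.exp (a / 2) := by
        have hsum : ∑ n ∈ Finset.range (NN a), (a / 2) ^ n / (n.factorial : ℝ)
            ≤ Real.exp (a / 2) := by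
          rw [← tsum_pow_div_factorial (a / 2)]
          exact Summable.sum_le_tsum _ (fun n _ => by positivity)
            (Real.summable_pow_div_factorial _)
        exact mul_le_mul_of_nonneg_left hsum (by positivity)
    _ ≤ Real.exp ((Real.sqrt a + 1) * Real.log 2) * Real.exp (-a) * Real.exp (a / 2) := by
        have h2 : (2:ℝ) ^ NN a ≤ Real.exp ((Real.sqrt a + 1) * Real.log 2) := by
          have hN : (NN a : ℝ) ≤ Real.sqrt a + 1 :=
            (Nat.ceil_lt_add_one (Real.sqrt_nonneg a)).le
          have h3 : (2:ℝ) ^ NN a = Real.exp ((NN a : ℝ) * Real.log 2) := by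
            rw [← Real.log_pow, Real.exp_log (by positivity)]
          rw [h3]
          exact Real.exp_le_exp.mpr
            (mul_le_mul_of_nonneg_right hN (Real.log_nonneg one_le_two))
        have := mul_le_mul_of_nonneg_right
          (mul_le_mul_of_nonneg_right h2 (Real.exp_nonneg (-a))) (Real.exp_nonneg (a / 2))
        exact this
    _ = Real.exp ((Real.sqrt a + 1) * Real.log 2 - a / 2) := by
        rw [← Real.exp_add, ← Real.exp_add]
        ring_nf

lemma tendsto_E : Tendsto (fun a => ∑ n ∈ Finset.range (NN a), g a n) atTop (nhds 0) := by
  have hub : Tendsto (fun a : ℝ => Real.exp ((Real.sqrt a + 1) * Real.log 2 - a / 2))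
      atTop (nhds 0) := by
    have hlin : Tendsto (fun a : ℝ => (Real.log 2 / 4 - 1 / 2) * a + 2 * Real.log 2)
        atTop atBot := by
      apply tendsto_atBot_add_const_right
      refine Tendsto.const_mul_atTop_of_neg ?_ tendsto_id
      have := Real.log_two_lt_d9
      norm_num at this ⊢
      linarith
    have hmono : ∀ᶠ a : ℝ in atTop,
        (Real.sqrt a + 1) * Real.log 2 - a / 2 ≤
          (Real.log 2 / 4 - 1 / 2) * a + 2 * Real.log 2 := by
      filter_upwards [eventually_ge_atTop (0:ℝ)] with a ha
      have hs : Real.sqrt a ≤ a / 4 + 1 := by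
        have h1 : a ≤ (a / 4 + 1) ^ 2 := by nlinarith [sq_nonneg (a / 4 - 1)]
        calc Real.sqrt a ≤ Real.sqrt ((a / 4 + 1) ^ 2) := Real.sqrt_le_sqrt h1
          _ = a / 4 + 1 := Real.sqrt_sq (by linarith)
      have hlog : (0:ℝ) ≤ Real.log 2 := Real.log_nonneg one_le_two
      nlinarith [mul_le_mul_of_nonneg_right hs hlog]
    have hinner : Tendsto (fun a : ℝ => (Real.sqrt a + 1) * Real.log 2 - a / 2)
        atTop atBot := tendsto_atBot_mono' atTop hmono hlin
    exact Real.tendsto_exp_atBot.comp hinner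
  apply squeeze_zero' ?_ ?_ hub
  · filter_upwards [eventually_ge_atTop (0:ℝ)] with a ha
    exact Finset.sum_nonneg fun n _ => g_nonneg ha n
  · filter_upwards [eventually_ge_atTop (0:ℝ)] with a ha
    exact E_bound ha

lemma tendsto_T : Tendsto T atTop (nhds 1) := by
  have : Tendsto (fun a => 1 - ∑ n ∈ Finset.range (NN a), g a n) atTop (nhds (1 - 0)) :=
    tendsto_const_nhds.sub tendsto_E
  rw [sub_zero] at this
  exact this.congr fun a => (T_eq a).symm

lemma tendsto_C {ν : ℝ} (hν : ν < 0) :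
    Tendsto (fun a : ℝ => Real.exp (a * Real.exp (ν * a))) atTop (nhds 1) := by
  have h0 : Tendsto (fun a : ℝ => a * Real.exp (ν * a)) atTop (nhds 0) := by
    have h1 : Tendsto (fun x : ℝ => x ^ 1 * Real.exp (-x)) atTop (nhds 0) :=
      Real.tendsto_pow_mul_exp_neg_atTop_nhds_zero 1
    have h2 : Tendsto (fun a : ℝ => -ν * a) atTop atTop :=
      Tendsto.const_mul_atTop (by linarith) tendsto_id
    have h3 := (h1.comp h2).const_mul ((-ν)⁻¹)
    rw [mul_zero] at h3
    refine h3.congr fun a => ?_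
    have hν' : ν ≠ 0 := ne_of_lt hν
    simp only [Function.comp_apply, pow_one, neg_mul, neg_neg]
    field_simp
  have := (Real.continuous_exp.continuousAt (x := 0)).tendsto.comp h0
  simpa [Function.comp_def] using this

end D1aux

open D1aux

/-- The contribution of the region `D₁` (all coordinates at least `⌈√a⌉`)
tends to `1` as `a → ∞`. -/
theorem region_D1_contribution_limit
    (m : ℕ) (hm : 2 ≤ m) (ν : ℝ) (hν : ν < 0) :
    Tendsto (fun a : ℝ =>
        ∑' n : Fin m → ℕ,
          Set.indicator {n : Fin m → ℕ | ∀ i, ⌈Real.sqrt a⌉₊ ≤ n i}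
            (fun n => (∏ i, a ^ (n i) / ((n i).factorial : ℝ)) *
              Real.exp (a * Real.exp (ν * ∏ i, (n i : ℝ)) - a * m)) n)
      atTop (nhds 1) := by
  have hlower : Tendsto (fun a : ℝ => T a ^ m) atTop (nhds 1) := by
    have := tendsto_T.pow m
    rwa [one_pow] at this
  have hupper : Tendsto (fun a : ℝ => Real.exp (a * Real.exp (ν * a))) atTop (nhds 1) :=
    tendsto_C hν
  refine tendsto_of_tendsto_of_tendsto_of_le_of_le' hlower hupper ?_ ?_
  all_goals {
    filter_upwards [eventually_ge_atTop (1:ℝ)] with a ha1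
    have ha : (0:ℝ) ≤ a := by linarith
    set C : ℝ := Real.exp (a * Real.exp (ν * a)) with hC
    have hCpos : 0 < C := Real.exp_pos _
    set F : (Fin m → ℕ) → ℝ := fun n =>
      Set.indicator {n : Fin m → ℕ | ∀ i, ⌈Real.sqrt a⌉₊ ≤ n i}
        (fun n => (∏ i, a ^ (n i) / ((n i).factorial : ℝ)) *
          Real.exp (a * Real.exp (ν * ∏ i, (n i : ℝ)) - a * m)) n with hF
    set G : (Fin m → ℕ) → ℝ := fun n => ∏ i, gt' a (n i) with hG
    have hN1 : (1:ℝ) ≤ (NN a : ℝ) := by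
      have h1 : (1:ℝ) ≤ Real.sqrt a := by
        have := Real.sqrt_le_sqrt ha1
        simpa using this
      exact le_trans h1 (Nat.le_ceil _)
    -- in-region facts
    have hkey : ∀ n : Fin m → ℕ, (∀ i, NN a ≤ n i) →
        G n = (∏ i, a ^ (n i) / ((n i).factorial : ℝ)) * Real.exp (-(a * m)) ∧
        a ≤ ∏ i, ((n i : ℝ)) := by
      intro n hn
      constructor
      · have h1 : G n = ∏ i, (a ^ (n i) / ((n i).factorial : ℝ) * Real.exp (-a)) := by
          refine Finset.prod_congr rfl fun i _ => ?_
          rw [gt', Set.indicator_of_mem (s := {n | NN a ≤ n}) (hn i), g]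
        rw [h1, Finset.prod_mul_distrib, Finset.prod_const, Finset.card_univ,
          Fintype.card_fin, ← Real.exp_nat_mul, show ((m:ℝ) * -a) = -(a * m) by ring]
      · have h1 : (NN a : ℝ) ^ m ≤ ∏ i, ((n i : ℝ)) := by
          calc (NN a : ℝ) ^ m = ∏ _i : Fin m, (NN a : ℝ) := by
                rw [Finset.prod_const, Finset.card_univ, Fintype.card_fin]
            _ ≤ ∏ i, ((n i : ℝ)) :=
                Finset.prod_le_prod (fun _ _ => by positivity)
                  (fun i _ => Nat.cast_le.mpr (hn i))
        have hle : Real.sqrt a ≤ (NN a : ℝ) := Nat.le_ceil _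
        have h2 : a ≤ (NN a : ℝ) ^ 2 := by
          nlinarith [Real.sq_sqrt ha, hle, Real.sqrt_nonneg a]
        have h3 : (NN a : ℝ) ^ 2 ≤ (NN a : ℝ) ^ m := pow_le_pow_right₀ hN1 hm
        linarith
    have hGF : ∀ n, G n ≤ F n := by
      intro n
      by_cases hn : ∀ i, NN a ≤ n i
      · obtain ⟨hGval, _⟩ := hkey n hn
        have hFval : F n = (∏ i, a ^ (n i) / ((n i).factorial : ℝ)) *
            Real.exp (a * Real.exp (ν * ∏ i, (n i : ℝ)) - a * m) := by
          simp only [hF]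
          exact Set.indicator_of_mem (s := {n : Fin m → ℕ | ∀ i, ⌈Real.sqrt a⌉₊ ≤ n i}) hn _
        rw [hGval, hFval]
        refine mul_le_mul_of_nonneg_left (Real.exp_le_exp.mpr ?_) ?_
        · have : 0 ≤ a * Real.exp (ν * ∏ i, (n i : ℝ)) :=
            mul_nonneg ha (Real.exp_nonneg _)
          linarith
        · exact Finset.prod_nonneg fun i _ =>
            div_nonneg (pow_nonneg ha _) (Nat.cast_nonneg _)
      · have hFval : F n = 0 := by
          simp only [hF]
          exact Set.indicator_of_notMem
            (s := {n : Fin m → ℕ | ∀ i, ⌈Real.sqrt a⌉₊ ≤ n i}) hn _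
        have hGval : G n = 0 := by
          push_neg at hn
          obtain ⟨i, hi⟩ := hn
          refine Finset.prod_eq_zero (Finset.mem_univ i) ?_
          rw [gt', Set.indicator_of_notMem (s := {n | NN a ≤ n}) (by simpa using hi)]
        rw [hFval, hGval]
    have hFC : ∀ n, F n ≤ C * G n := by
      intro n
      by_cases hn : ∀ i, NN a ≤ n i
      · obtain ⟨hGval, hprod⟩ := hkey n hn
        have hFval : F n = (∏ i, a ^ (n i) / ((n i).factorial : ℝ)) *
            Real.exp (a * Real.exp (ν * ∏ i, (n i : ℝ)) - a * m) := by
          simp only [hF]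
          exact Set.indicator_of_mem (s := {n : Fin m → ℕ | ∀ i, ⌈Real.sqrt a⌉₊ ≤ n i}) hn _
        have hP : 0 ≤ ∏ i, a ^ (n i) / ((n i).factorial : ℝ) :=
          Finset.prod_nonneg fun i _ =>
            div_nonneg (pow_nonneg ha _) (Nat.cast_nonneg _)
        have hexp : Real.exp (a * Real.exp (ν * ∏ i, (n i : ℝ)) - a * m) ≤
            C * Real.exp (-(a * m)) := by
          rw [hC, ← Real.exp_add]
          apply Real.exp_le_exp.mpr
          have h1 : Real.exp (ν * ∏ i, (n i : ℝ)) ≤ Real.exp (ν * a) := by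
            apply Real.exp_le_exp.mpr
            exact mul_le_mul_of_nonpos_left hprod hν.le
          have h2 : a * Real.exp (ν * ∏ i, (n i : ℝ)) ≤ a * Real.exp (ν * a) :=
            mul_le_mul_of_nonneg_left h1 ha
          linarith
        rw [hFval, hGval]
        calc (∏ i, a ^ (n i) / ((n i).factorial : ℝ)) *
              Real.exp (a * Real.exp (ν * ∏ i, (n i : ℝ)) - a * m)
            ≤ (∏ i, a ^ (n i) / ((n i).factorial : ℝ)) * (C * Real.exp (-(a * m))) :=
              mul_le_mul_of_nonneg_left hexp hP
          _ = C * ((∏ i, a ^ (n i) / ((n i).factorial : ℝ)) * Real.exp (-(a * m))) := by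
              ring
      · have hFval : F n = 0 := by
          simp only [hF]
          exact Set.indicator_of_notMem
            (s := {n : Fin m → ℕ | ∀ i, ⌈Real.sqrt a⌉₊ ≤ n i}) hn _
        have hGval : G n = 0 := by
          push_neg at hn
          obtain ⟨i, hi⟩ := hn
          refine Finset.prod_eq_zero (Finset.mem_univ i) ?_
          rw [gt', Set.indicator_of_notMem (s := {n | NN a ≤ n}) (by simpa using hi)]
        rw [hFval, hGval, mul_zero]
    have hGsum : HasSum G (T a ^ m) :=
      hasSum_pi_prod m (gt' a) (gt_nonneg ha) (summable_gt a)
    have hCGsum : Summable fun n => C * G n := hGsum.summable.mul_left C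
    have hF0 : ∀ n, 0 ≤ F n := by
      intro n
      simp only [hF]
      refine Set.indicator_nonneg (fun n _ => ?_) n
      exact mul_nonneg (Finset.prod_nonneg fun i _ =>
        div_nonneg (pow_nonneg ha _) (Nat.cast_nonneg _)) (Real.exp_nonneg _)
    have hFsum : Summable F := Summable.of_nonneg_of_le hF0 hFC hCGsum
    first
    | -- lower inequality : T a ^ m ≤ ∑' F
      calc T a ^ m = ∑' n, G n := hGsum.tsum_eq.symm
        _ ≤ ∑' n, F n := Summable.tsum_le_tsum hGF hGsum.summable hFsum
    | -- upper inequality : ∑' F ≤ C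
      calc (∑' n, F n) ≤ ∑' n, C * G n := Summable.tsum_le_tsum hFC hFsum hCGsum
        _ = C * (T a ^ m) := by rw [tsum_mul_left, hGsum.tsum_eq]
        _ ≤ C * 1 := by
            refine mul_le_mul_of_nonneg_left ?_ hCpos.le
            exact pow_le_one₀ (T_nonneg ha) (T_le_one ha)
        _ = C := mul_one C
  }
end

section
/- Let m ≥ 2 be an integer and ν < 0. Then lim_{a→∞} Σ_{n∈ℕ^m, n_i ≥ 1 for all i, and n_j < √a for some j} (Π_{i=1}^m a^{n_i}/n_i!) · exp(a·e^{ν·n_1⋯n_m} − a·m) = 0. -/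
open Filter Asymptotics ENNReal

lemma tsum_pi_fin {m : ℕ} (g : Fin m → ℕ → ℝ≥0∞) :
    ∑' n : Fin m → ℕ, ∏ i, g i (n i) = ∏ i, ∑' k, g i k := by
  induction m with
  | zero =>
    simp only [Finset.univ_eq_empty, Finset.prod_empty]
    exact tsum_eq_single (fun i => i.elim0)
      (by intro b hb; exact absurd (funext fun i => i.elim0) hb) |>.trans rfl
  | succ m ih =>
    set e : (Fin (m+1) → ℕ) ≃ ℕ × (Fin m → ℕ) := Fin.consEquiv (fun _ => ℕ) |>.symm with he
    rw [← e.symm.tsum_eq]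
    have key : ∀ p : ℕ × (Fin m → ℕ), ∏ i, g i (e.symm p i)
        = g 0 p.1 * ∏ i : Fin m, g i.succ (p.2 i) := by
      intro p
      rw [Fin.prod_univ_succ]
      simp [he, Fin.consEquiv]
    simp_rw [key]
    rw [ENNReal.tsum_prod (f := fun (k : ℕ) (q : Fin m → ℕ) => g 0 k * ∏ i : Fin m, g i.succ (q i))]
    simp_rw [ENNReal.tsum_mul_left, ENNReal.tsum_mul_right]
    rw [ih (fun i => g i.succ), Fin.prod_univ_succ]

lemma exp_ofReal_tsum (a : ℝ) (ha : 0 ≤ a) :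
    ∑' k : ℕ, ENNReal.ofReal (a ^ k / (k.factorial : ℝ)) = ENNReal.ofReal (Real.exp a) := by
  have h1 : (∑' k : ℕ, a ^ k / (k.factorial : ℝ)) = Real.exp a := by
    rw [Real.exp_eq_exp_ℝ, NormedSpace.exp_eq_tsum_div]
  rw [← h1, ← ENNReal.ofReal_tsum_of_nonneg (fun k => by positivity)
    (Real.summable_pow_div_factorial a)]

lemma tendsto_aux_atBot {c : ℝ} (hc : c < 0) :
    Tendsto (fun a : ℝ => (Real.sqrt a + 1) * (1 + Real.log a) + c * a) atTop atBot := by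
  have h1 : (fun a : ℝ => Real.sqrt a + 1) =O[atTop] Real.sqrt := by
    apply IsBigO.of_bound 2
    filter_upwards [eventually_ge_atTop (1:ℝ)] with a ha
    have h := Real.one_le_sqrt.mpr ha
    rw [Real.norm_eq_abs, Real.norm_eq_abs, abs_of_nonneg (by linarith), abs_of_nonneg (by linarith)]
    linarith
  have h2 : (fun a : ℝ => 1 + Real.log a) =O[atTop] Real.log := by
    apply IsBigO.of_bound 2
    filter_upwards [Real.tendsto_log_atTop.eventually_ge_atTop 1] with a ha
    rw [Real.norm_eq_abs, Real.norm_eq_abs, abs_of_nonneg (by linarith), abs_of_nonneg (by linarith)]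
    linarith
  have h3 : Real.log =o[atTop] Real.sqrt := by
    have h := isLittleO_log_rpow_atTop (by norm_num : (0:ℝ) < 1/2)
    refine h.congr' (EventuallyEq.refl _ _) ?_
    filter_upwards [eventually_ge_atTop (0:ℝ)] with a ha
    exact (Real.sqrt_eq_rpow a).symm
  have hv : (fun a : ℝ => (Real.sqrt a + 1) * (1 + Real.log a)) =o[atTop]
      (fun a : ℝ => Real.sqrt a * Real.sqrt a) := h1.mul_isLittleO (h2.trans_isLittleO h3)
  have hv' : (fun a : ℝ => (Real.sqrt a + 1) * (1 + Real.log a)) =o[atTop] (fun a : ℝ => a) := by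
    refine hv.trans_isBigO (IsBigO.of_bound 1 ?_)
    filter_upwards [eventually_ge_atTop (0:ℝ)] with a ha
    rw [Real.mul_self_sqrt ha]
    simp
  have hdiv := hv'.tendsto_div_nhds_zero
  have hb : Tendsto (fun a : ℝ => a * ((Real.sqrt a + 1) * (1 + Real.log a) / a + c))
      atTop atBot := tendsto_id.atTop_mul_neg (by linarith) (hdiv.add_const c)
  refine hb.congr' ?_
  filter_upwards [eventually_gt_atTop (0:ℝ)] with a ha
  field_simp

/-- The contribution of the region `D₃` (all coordinates positive, at least one
coordinate smaller than `√a`) tends to `0` as `a → ∞`. -/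
theorem region_D3_contribution_limit
    (m : ℕ) (hm : 2 ≤ m) (ν : ℝ) (hν : ν < 0) :
    Tendsto (fun a : ℝ =>
        ∑' n : Fin m → ℕ,
          Set.indicator
            {n : Fin m → ℕ | (∀ i, 1 ≤ n i) ∧ ∃ j, (n j : ℝ) < Real.sqrt a}
            (fun n => (∏ i, a ^ (n i) / ((n i).factorial : ℝ)) *
              Real.exp (a * Real.exp (ν * ∏ i, (n i : ℝ)) - a * m)) n)
      atTop (nhds 0) := by
  have hc : Real.exp ν - 1 < 0 := by
    have := Real.exp_lt_one_iff.mpr hν; linarith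
  set u : ℝ → ℝ := fun a => (Real.sqrt a + 1) * (1 + Real.log a) + (Real.exp ν - 1) * a with hu
  have hupper : Tendsto (fun a => (m:ℝ) * Real.exp (u a)) atTop (nhds 0) := by
    have h := Real.tendsto_exp_atBot.comp (tendsto_aux_atBot hc)
    have := h.const_mul (m:ℝ)
    simpa using this
  refine tendsto_of_tendsto_of_tendsto_of_le_of_le' tendsto_const_nhds hupper ?_ ?_
  · -- nonnegativity
    filter_upwards [eventually_ge_atTop (0:ℝ)] with a ha
    apply tsum_nonneg
    intro n
    apply Set.indicator_nonneg
    intro n _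
    have hP : (0:ℝ) ≤ ∏ i, a ^ (n i) / ((n i).factorial : ℝ) :=
      Finset.prod_nonneg fun i _ => by positivity
    positivity
  · -- main bound
    filter_upwards [eventually_ge_atTop (1:ℝ)] with a ha
    have ha0 : (0:ℝ) ≤ a := by linarith
    have ha0' : (0:ℝ) < a := by linarith
    have hloga : 0 ≤ Real.log a := Real.log_nonneg ha
    set N : ℕ := ⌈Real.sqrt a⌉₊ with hN
    have hNlt : (N : ℝ) < Real.sqrt a + 1 := Nat.ceil_lt_add_one (Real.sqrt_nonneg a)
    set F : (Fin m → ℕ) → ℝ := Set.indicator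
       {n : Fin m → ℕ | (∀ i, 1 ≤ n i) ∧ ∃ j, (n j : ℝ) < Real.sqrt a}
       (fun n => (∏ i, a ^ (n i) / ((n i).factorial : ℝ)) *
         Real.exp (a * Real.exp (ν * ∏ i, (n i : ℝ)) - a * m)) with hF
    have hFnonneg : ∀ n, 0 ≤ F n := by
      intro n
      apply Set.indicator_nonneg
      intro n _
      have hP : (0:ℝ) ≤ ∏ i, a ^ (n i) / ((n i).factorial : ℝ) :=
        Finset.prod_nonneg fun i _ => by positivity
      positivity
    set g : Fin m → Fin m → ℕ → ℝ≥0∞ := fun j i k =>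
      if i = j ∧ ¬(1 ≤ k ∧ (k:ℝ) < Real.sqrt a) then 0
      else ENNReal.ofReal (a ^ k / (k.factorial : ℝ)) with hg
    set C : ℝ≥0∞ := ENNReal.ofReal (Real.exp (a * Real.exp ν - a * m)) with hC
    -- pointwise bound
    have key : ∀ n : Fin m → ℕ,
        ENNReal.ofReal (F n) ≤ C * ∑ j : Fin m, ∏ i, g j i (n i) := by
      intro n
      by_cases hn : n ∈ {n : Fin m → ℕ | (∀ i, 1 ≤ n i) ∧ ∃ j, (n j : ℝ) < Real.sqrt a}
      · obtain ⟨hall, j₀, hj₀⟩ := hn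
        rw [hF, Set.indicator_of_mem (by exact ⟨hall, j₀, hj₀⟩)]
        have hPn : ∀ i ∈ Finset.univ (α := Fin m), (0:ℝ) ≤ a ^ (n i) / ((n i).factorial : ℝ) :=
          fun i _ => by positivity
        have hP : (0:ℝ) ≤ ∏ i, a ^ (n i) / ((n i).factorial : ℝ) := Finset.prod_nonneg hPn
        have hprod1 : (1:ℝ) ≤ ∏ i, ((n i : ℕ) : ℝ) := by
          calc (1:ℝ) = ∏ _i : Fin m, (1:ℝ) := by simp
            _ ≤ ∏ i, ((n i : ℕ) : ℝ) :=
              Finset.prod_le_prod (fun i _ => by norm_num)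
                (fun i _ => by exact_mod_cast hall i)
        have hE : Real.exp (a * Real.exp (ν * ∏ i, ((n i : ℕ):ℝ)) - a * m)
            ≤ Real.exp (a * Real.exp ν - a * m) := by
          apply Real.exp_le_exp.mpr
          have h1 : ν * ∏ i, ((n i : ℕ):ℝ) ≤ ν := by nlinarith
          have h2 := Real.exp_le_exp.mpr h1
          nlinarith
        calc ENNReal.ofReal ((∏ i, a ^ (n i) / ((n i).factorial : ℝ)) *
              Real.exp (a * Real.exp (ν * ∏ i, ((n i : ℕ):ℝ)) - a * m))
            = ENNReal.ofReal (∏ i, a ^ (n i) / ((n i).factorial : ℝ)) *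
              ENNReal.ofReal (Real.exp (a * Real.exp (ν * ∏ i, ((n i : ℕ):ℝ)) - a * m)) :=
              ENNReal.ofReal_mul hP
          _ ≤ ENNReal.ofReal (∏ i, a ^ (n i) / ((n i).factorial : ℝ)) * C := by
              exact mul_le_mul_right (ENNReal.ofReal_le_ofReal hE) _
          _ = (∏ i, g j₀ i (n i)) * C := by
              rw [ENNReal.ofReal_prod_of_nonneg hPn]
              congr 1
              refine Finset.prod_congr rfl fun i _ => ?_
              by_cases hij : i = j₀
              · rw [hij]
                have hcond : ¬(j₀ = j₀ ∧ ¬(1 ≤ n j₀ ∧ ((n j₀ : ℕ):ℝ) < Real.sqrt a)) :=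
                  fun h => h.2 ⟨hall j₀, hj₀⟩
                simp only [hg, if_neg hcond]
              · simp [hg, hij]
          _ ≤ (∑ j : Fin m, ∏ i, g j i (n i)) * C := by
              exact mul_le_mul_left
                (Finset.single_le_sum (f := fun j => ∏ i, g j i (n i))
                  (fun j _ => zero_le) (Finset.mem_univ j₀)) _
          _ = C * ∑ j : Fin m, ∏ i, g j i (n i) := mul_comm _ _
      · rw [hF, Set.indicator_of_notMem hn]
        simp
    -- per-coordinate tsums
    have hEq : ∀ j i : Fin m, i ≠ j → ∑' k, g j i k = ENNReal.ofReal (Real.exp a) := by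
      intro j i hij
      rw [← exp_ofReal_tsum a ha0]
      refine tsum_congr fun k => ?_
      simp [hg, hij]
    have hTail : ∀ j : Fin m, ∑' k, g j j k ≤ ENNReal.ofReal ((N:ℝ) * a ^ N) := by
      intro j
      have hzero : ∀ k ∉ Finset.Ico 1 N, g j j k = 0 := by
        intro k hk
        rw [Finset.mem_Ico] at hk
        push_neg at hk
        have hcond : ¬(1 ≤ k ∧ (k:ℝ) < Real.sqrt a) := by
          rintro ⟨h1, h2⟩
          have := Nat.lt_ceil.mpr h2
          omega
        simp [hg, hcond]
      calc ∑' k, g j j k = ∑ k ∈ Finset.Ico 1 N, g j j k := tsum_eq_sum hzero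
        _ ≤ ∑ _k ∈ Finset.Ico 1 N, ENNReal.ofReal (a ^ N) := by
            refine Finset.sum_le_sum fun k hk => ?_
            rw [Finset.mem_Ico] at hk
            have hbound : a ^ k / (k.factorial : ℝ) ≤ a ^ N := by
              have h1 : a ^ k / (k.factorial : ℝ) ≤ a ^ k :=
                div_le_self (by positivity) (by exact_mod_cast k.factorial_pos)
              have h2 : a ^ k ≤ a ^ N := pow_le_pow_right₀ ha (by omega)
              linarith
            simp only [hg]
            split
            · exact zero_le
            · exact ENNReal.ofReal_le_ofReal hbound
        _ = ((Finset.Ico 1 N).card : ℝ≥0∞) * ENNReal.ofReal (a ^ N) := by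
            rw [Finset.sum_const, nsmul_eq_mul]
        _ ≤ (N : ℝ≥0∞) * ENNReal.ofReal (a ^ N) := by
            have hcard : (Finset.Ico 1 N).card ≤ N := by rw [Nat.card_Ico]; omega
            exact mul_le_mul_left (by exact_mod_cast hcard) _
        _ = ENNReal.ofReal ((N:ℝ) * a ^ N) := by
            rw [ENNReal.ofReal_mul (by positivity), ENNReal.ofReal_natCast]
    -- product bound per j
    have hprodle : ∀ j : Fin m, ∏ i, ∑' k, g j i k
        ≤ ENNReal.ofReal ((N:ℝ) * a ^ N) * ENNReal.ofReal (Real.exp a) ^ (m - 1) := by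
      intro j
      rw [Finset.prod_eq_mul_prod_sdiff_singleton_of_mem (Finset.mem_univ j)
        (fun i => ∑' k, g j i k)]
      have hrest : ∏ i ∈ Finset.univ \ {j}, ∑' k, g j i k
          = ENNReal.ofReal (Real.exp a) ^ (m - 1) := by
        rw [Finset.prod_congr rfl (fun i hi => hEq j i (by
          rw [Finset.mem_sdiff, Finset.mem_singleton] at hi; exact hi.2))]
        rw [Finset.prod_const, Finset.card_univ_diff]
        simp
      rw [hrest]
      exact mul_le_mul_left (hTail j) _
    -- assemble in ℝ≥0∞
    have big : ENNReal.ofReal (∑' n, F n) ≤ ENNReal.ofReal ((m:ℝ) * Real.exp (u a)) := by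
      by_cases hsum : Summable F
      · rw [ENNReal.ofReal_tsum_of_nonneg hFnonneg hsum]
        have hreal : Real.exp (a * Real.exp ν - a * m) * ((m:ℝ) * ((N:ℝ) * a ^ N *
            Real.exp a ^ (m - 1))) ≤ (m:ℝ) * Real.exp (u a) := by
          have e1 : Real.exp a ^ (m - 1) = Real.exp (((m:ℝ) - 1) * a) := by
            rw [← Real.exp_nat_mul]
            congr 1
            have : ((m - 1 : ℕ) : ℝ) = (m:ℝ) - 1 := by
              have : (1:ℕ) ≤ m := by omega
              push_cast [Nat.cast_sub this]
              ring
            rw [this]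
          have e2 : (N:ℝ) ≤ Real.exp (Real.sqrt a + 1) := by
            have := Real.add_one_le_exp (Real.sqrt a + 1)
            linarith
          have e3 : a ^ N ≤ Real.exp ((Real.sqrt a + 1) * Real.log a) := by
            have ea : a ^ N = Real.exp ((N:ℝ) * Real.log a) := by
              rw [Real.exp_nat_mul, Real.exp_log ha0']
            rw [ea]
            apply Real.exp_le_exp.mpr
            exact mul_le_mul_of_nonneg_right hNlt.le hloga
          have e4 : (N:ℝ) * a ^ N ≤ Real.exp (Real.sqrt a + 1) *
              Real.exp ((Real.sqrt a + 1) * Real.log a) :=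
            mul_le_mul e2 e3 (by positivity) (by positivity)
          calc Real.exp (a * Real.exp ν - a * m) * ((m:ℝ) * ((N:ℝ) * a ^ N *
                Real.exp a ^ (m - 1)))
              ≤ Real.exp (a * Real.exp ν - a * m) * ((m:ℝ) * ((Real.exp (Real.sqrt a + 1) *
                Real.exp ((Real.sqrt a + 1) * Real.log a)) * Real.exp a ^ (m - 1))) := by
                have hm0 : (0:ℝ) ≤ m := by positivity
                refine mul_le_mul_of_nonneg_left ?_ (Real.exp_nonneg _)
                refine mul_le_mul_of_nonneg_left ?_ hm0
                exact mul_le_mul_of_nonneg_right e4 (by positivity)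
            _ = (m:ℝ) * Real.exp (u a) := by
                rw [e1, ← Real.exp_add, ← Real.exp_add, mul_left_comm, ← Real.exp_add]
                congr 1
                congr 1
                simp only [hu]
                ring
        calc ∑' n, ENNReal.ofReal (F n)
            ≤ ∑' n : Fin m → ℕ, (C * ∑ j : Fin m, ∏ i, g j i (n i)) :=
              ENNReal.tsum_le_tsum key
          _ = C * ∑ j : Fin m, ∑' n : Fin m → ℕ, ∏ i, g j i (n i) := by
              rw [ENNReal.tsum_mul_left]
              congr 1
              exact Summable.tsum_finsetSum fun j _ => ENNReal.summable
          _ = C * ∑ j : Fin m, ∏ i, ∑' k, g j i k := by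
              congr 1
              exact Finset.sum_congr rfl fun j _ => tsum_pi_fin (g j)
          _ ≤ C * ∑ _j : Fin m, (ENNReal.ofReal ((N:ℝ) * a ^ N) *
              ENNReal.ofReal (Real.exp a) ^ (m - 1)) :=
              mul_le_mul_right (Finset.sum_le_sum fun j _ => hprodle j) _
          _ = C * ((m : ℝ≥0∞) * (ENNReal.ofReal ((N:ℝ) * a ^ N) *
              ENNReal.ofReal (Real.exp a) ^ (m - 1))) := by
              rw [Finset.sum_const, Finset.card_univ, Fintype.card_fin, nsmul_eq_mul]
          _ = ENNReal.ofReal (Real.exp (a * Real.exp ν - a * m) * ((m:ℝ) * ((N:ℝ) * a ^ N *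
              Real.exp a ^ (m - 1)))) := by
              rw [hC, ← ENNReal.ofReal_pow (Real.exp_nonneg a),
                ← ENNReal.ofReal_mul (by positivity),
                ← ENNReal.ofReal_natCast m,
                ← ENNReal.ofReal_mul (by positivity),
                ← ENNReal.ofReal_mul (by positivity)]
          _ ≤ ENNReal.ofReal ((m:ℝ) * Real.exp (u a)) := ENNReal.ofReal_le_ofReal hreal
      · rw [tsum_eq_zero_of_not_summable hsum]
        simp
    have hrhs : (0:ℝ) ≤ (m:ℝ) * Real.exp (u a) := by positivity
    exact (ENNReal.ofReal_le_ofReal_iff hrhs).mp big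
end

section
/- Let α be a type, d ∈ ℕ, G : Finset α → ℝ^d a function, ν ∈ ℝ^d, and c > 0; define p(x) = c·exp(ν · G(x)) for finite sets x, where · is the inner product on ℝ^d. Define the difference operator componentwise by D_y G(x) = G(x ∪ {y}) − G(x), and iteratively D^n_{y_1,…,y_n} G = D_{y_1} (D^{n−1}_{y_2,…,y_n} G). Let m ≥ 1, let x be a finite subset of α, and let y_1,…,y_m ∉ x be pairwise distinct. Then p(x ∪ {y_1,…,y_m}) / p(x) = exp(ν · Q_m G(x)), where Q_m G(x) = Σ_{∅ ≠ J ⊆ {1,…,m}} D^{|J|}_{(y_j)_{j∈J}} G(x), i.e. the sum of the m-th order difference D^m_{y_1,…,y_m} G(x), all (m−1)-st order differences over (m−1)-element subsets of {y_1,…,y_m}, down to all first-order differences D_{y_i} G(x). -/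
/-- Iterated difference operator: `iterD F [y₁,…,yₙ] x = D^n_{y₁,…,yₙ} F (x)`, where
`D_y F (x) = F (x ∪ {y}) - F x` and `D^n_{y₁,…,yₙ} F = D_{y₁}(D^{n-1}_{y₂,…,yₙ} F)`. -/
noncomputable def iterD {α : Type*} [DecidableEq α] (F : Finset α → ℝ) :
    List α → Finset α → ℝ
  | [], x => F x
  | y :: ys, x => iterD F ys (insert y x) - iterD F ys x

/-- Signed-sum (inclusion-exclusion) form of the difference operator, indexed by a finset. -/
noncomputable def Dfin {α : Type*} [DecidableEq α] (F : Finset α → ℝ)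
    (z : Finset α) (J : Finset α) : ℝ :=
  ∑ K ∈ J.powerset, (-1 : ℝ) ^ (J.card - K.card) * F (z ∪ K)

lemma Dfin_insert {α : Type*} [DecidableEq α] (F : Finset α → ℝ)
    (z : Finset α) {a : α} {J : Finset α} (ha : a ∉ J) :
    Dfin F z (insert a J) = Dfin F (insert a z) J - Dfin F z J := by
  unfold Dfin
  rw [Finset.sum_powerset_insert ha]
  have hcard : (insert a J).card = J.card + 1 := Finset.card_insert_of_notMem ha
  have h1 : ∀ K ∈ J.powerset, (-1 : ℝ) ^ ((insert a J).card - K.card) * F (z ∪ K)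
      = -((-1 : ℝ) ^ (J.card - K.card) * F (z ∪ K)) := by
    intro K hK
    have hle : K.card ≤ J.card := Finset.card_le_card (Finset.mem_powerset.1 hK)
    rw [hcard]
    have : J.card + 1 - K.card = (J.card - K.card) + 1 := by omega
    rw [this, pow_succ]
    ring
  have h2 : ∀ K ∈ J.powerset, (-1 : ℝ) ^ ((insert a J).card - (insert a K).card) * F (z ∪ insert a K)
      = (-1 : ℝ) ^ (J.card - K.card) * F (insert a z ∪ K) := by
    intro K hK
    have hK' := Finset.mem_powerset.1 hK
    have haK : a ∉ K := fun h => ha (hK' h)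
    have hcK : (insert a K).card = K.card + 1 := Finset.card_insert_of_notMem haK
    rw [hcard, hcK]
    have : J.card + 1 - (K.card + 1) = J.card - K.card := by omega
    rw [this, Finset.union_insert, Finset.insert_union]
  rw [Finset.sum_congr rfl h1, Finset.sum_congr rfl h2, Finset.sum_neg_distrib]
  ring

lemma iterD_eq_Dfin {α : Type*} [DecidableEq α] (F : Finset α → ℝ) :
    ∀ (l : List α), l.Nodup → ∀ (z : Finset α), iterD F l z = Dfin F z l.toFinset := by
  intro l
  induction l with
  | nil => intro _ z; simp [iterD, Dfin]
  | cons a ys ih =>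
    intro hnd z
    have ha : a ∉ ys.toFinset := by
      simp only [List.mem_toFinset]; exact (List.nodup_cons.1 hnd).1
    have hys := (List.nodup_cons.1 hnd).2
    rw [show (a :: ys).toFinset = insert a ys.toFinset by simp]
    rw [Dfin_insert F z ha]
    show iterD F ys (insert a z) - iterD F ys z = _
    rw [ih hys, ih hys]

lemma sum_Dfin {α : Type*} [DecidableEq α] (F : Finset α → ℝ) :
    ∀ (T : Finset α), ∀ (z : Finset α), ∑ J ∈ T.powerset, Dfin F z J = F (z ∪ T) := by
  intro T
  induction T using Finset.induction_on with
  | empty => intro z; simp [Dfin]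
  | @insert a T ha ih =>
    intro z
    rw [Finset.sum_powerset_insert ha]
    have h2 : ∀ J ∈ T.powerset, Dfin F z (insert a J)
        = Dfin F (insert a z) J - Dfin F z J := by
      intro J hJ
      exact Dfin_insert F z (fun h => ha (Finset.mem_powerset.1 hJ h))
    rw [Finset.sum_congr rfl h2, Finset.sum_sub_distrib, ih, ih]
    rw [Finset.insert_union, Finset.union_insert]
    ring

/-- Proposition 1 of the paper: for the exponential-family density
`p(x) = c·exp(ν·G(x))`, the `m`-th order conditional intensity
`p(x ∪ {y₁,…,yₘ})/p(x)` equals `exp(ν · Q_m G(x))` where `Q_m G(x)` is the sum of all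
iterated differences of `G` over nonempty subsets of `{y₁,…,yₘ}`. -/
theorem conditional_intensity_exponential_form
    {α : Type*} [DecidableEq α] (d : ℕ) (G : Finset α → Fin d → ℝ)
    (ν : Fin d → ℝ) (c : ℝ) (hc : 0 < c) (p : Finset α → ℝ)
    (hp : ∀ s, p s = c * Real.exp (∑ i, ν i * G s i))
    (m : ℕ) (hm : 1 ≤ m) (x : Finset α) (y : Fin m → α)
    (hy : Function.Injective y) (hyx : ∀ j, y j ∉ x) :
    p (x ∪ Finset.image y Finset.univ) / p x =
      Real.exp (∑ i, ν i *
        ∑ J ∈ Finset.univ.powerset.filter (fun J : Finset (Fin m) => J.Nonempty),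
          iterD (fun s => G s i) ((J.sort (· ≤ ·)).map y) x) := by
  -- key: for each coordinate i, the sum of iterated differences equals G(x∪Y) i - G x i
  set Y : Finset α := Finset.image y Finset.univ with hY
  have key : ∀ i, ∑ J ∈ Finset.univ.powerset.filter (fun J : Finset (Fin m) => J.Nonempty),
      iterD (fun s => G s i) ((J.sort (· ≤ ·)).map y) x = G (x ∪ Y) i - G x i := by
    intro i
    set F : Finset α → ℝ := fun s => G s i with hF
    have hiter : ∀ J : Finset (Fin m),
        iterD F ((J.sort (· ≤ ·)).map y) x = Dfin F x (Finset.image y J) := by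
      intro J
      have hnd : ((J.sort (· ≤ ·)).map y).Nodup :=
        (Finset.sort_nodup J _).map hy
      rw [iterD_eq_Dfin F _ hnd]
      congr 1
      ext a
      simp
    -- full sum over all subsets
    have hfull : ∑ J ∈ (Finset.univ : Finset (Fin m)).powerset,
        iterD F ((J.sort (· ≤ ·)).map y) x = F (x ∪ Y) := by
      calc ∑ J ∈ (Finset.univ : Finset (Fin m)).powerset,
            iterD F ((J.sort (· ≤ ·)).map y) x
          = ∑ J ∈ (Finset.univ : Finset (Fin m)).powerset, Dfin F x (Finset.image y J) := by
            exact Finset.sum_congr rfl fun J _ => hiter J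
        _ = ∑ J' ∈ Y.powerset, Dfin F x J' := by
            refine Finset.sum_nbij' (fun J => Finset.image y J)
              (fun J' => J'.preimage y (hy.injOn)) ?_ ?_ ?_ ?_ ?_
            · intro J _
              exact Finset.mem_powerset.2 (Finset.image_subset_image (Finset.subset_univ J))
            · intro J' _
              exact Finset.mem_powerset.2 (Finset.subset_univ _)
            · intro J _
              ext j
              simp [Finset.mem_preimage, hy.eq_iff]
            · intro J' hJ'
              have hsub : J' ⊆ Y := Finset.mem_powerset.1 hJ'
              ext a
              simp only [Finset.mem_image, Finset.mem_preimage]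
              constructor
              · rintro ⟨j, hj, rfl⟩; exact hj
              · intro haJ'
                obtain ⟨j, -, rfl⟩ := Finset.mem_image.1 (hsub haJ')
                exact ⟨j, haJ', rfl⟩
            · intro J _; rfl
        _ = F (x ∪ Y) := sum_Dfin F Y x
    -- split off the empty set
    have hsplit := Finset.sum_filter_add_sum_filter_not
      (Finset.univ : Finset (Fin m)).powerset (fun J : Finset (Fin m) => J.Nonempty)
      (fun J => iterD F ((J.sort (· ≤ ·)).map y) x)
    have hempty : (Finset.univ : Finset (Fin m)).powerset.filter
        (fun J : Finset (Fin m) => ¬ J.Nonempty) = {∅} := by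
      ext J
      simp [Finset.not_nonempty_iff_eq_empty]
    rw [hempty] at hsplit
    have hzero : ∑ J ∈ ({∅} : Finset (Finset (Fin m))),
        iterD F ((J.sort (· ≤ ·)).map y) x = F x := by
      simp [iterD]
    rw [hzero, hfull] at hsplit
    linarith [hsplit]
  have hxY : ∑ i, ν i * ∑ J ∈ Finset.univ.powerset.filter
      (fun J : Finset (Fin m) => J.Nonempty),
      iterD (fun s => G s i) ((J.sort (· ≤ ·)).map y) x
      = (∑ i, ν i * G (x ∪ Y) i) - (∑ i, ν i * G x i) := by
    rw [← Finset.sum_sub_distrib]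
    refine Finset.sum_congr rfl fun i _ => ?_
    rw [key i]; ring
  rw [hp, hp, hxY, Real.exp_sub]
  rw [mul_div_mul_left _ _ (ne_of_gt hc)]
end

section
/- Let d ≥ 2 and 2 ≤ k ≤ d be integers and ν ≤ 0. For a finite set x of compact subsets of ℝ^d define G_k(x) = Σ H^{d−k}(x_1 ∩ ⋯ ∩ x_k), the sum over all k-element subsets {x_1,…,x_k} of x, where H^{d−k} denotes (d−k)-dimensional Hausdorff measure; assume all the Hausdorff measures H^{d−k}(x_1 ∩ ⋯ ∩ x_k) appearing below are finite. For a compact set y ∉ x define the conditional intensity λ*(y; x) = exp(ν · (G_k(x ∪ {y}) − G_k(x))). Then for any finite sets x₂ ⊆ x₁ of compact subsets of ℝ^d and any compact y ∉ x₁, one has λ*(y; x₁) ≤ λ*(y; x₂); equivalently, 0 ≤ G_k(x₂ ∪ {y}) − G_k(x₂) ≤ G_k(x₁ ∪ {y}) − G_k(x₁). -/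
open MeasureTheory

lemma sum_powerset_insert_filter {α : Type*} [DecidableEq α] (f : Finset α → ℝ) (k : ℕ)
    (y : α) (x : Finset α) (hy : y ∉ x) :
    ∑ t ∈ (insert y x).powerset.filter (fun t => t.card = k), f t
      = (∑ t ∈ x.powerset.filter (fun t => t.card = k), f t)
        + ∑ s ∈ x.powerset.filter (fun s => s.card + 1 = k), f (insert y s) := by
  rw [Finset.powerset_insert, Finset.filter_union, Finset.sum_union, Finset.filter_image,
    Finset.sum_image]
  · congr 2
    ext s
    simp only [Finset.mem_filter, Finset.mem_powerset, and_congr_right_iff]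
    intro hs
    rw [Finset.card_insert_of_notMem (fun h => hy (hs h))]
  · intro a ha b hb hab
    simp only [Finset.mem_coe, Finset.mem_filter, Finset.mem_powerset] at ha hb
    have : a = (insert y a).erase y := by
      rw [Finset.erase_insert (fun h => hy (ha.1 h))]
    rw [this, hab, Finset.erase_insert (fun h => hy (hb.1 h))]
  · rw [Finset.disjoint_left]
    intro t ht ht'
    simp only [Finset.mem_filter, Finset.mem_powerset, Finset.mem_image] at ht ht'
    obtain ⟨⟨s, hs, rfl⟩, -⟩ := ht'
    exact hy (ht.1 (Finset.mem_insert_self y s))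

/-- Proposition 2 of the paper, repulsiveness: for the facet submodel of order
`k` with `G_k(x) = Σ_{k-subsets s of x} H^{d-k}(⋂ s)` and `ν ≤ 0`, the conditional intensity
`λ*(y;x) = exp(ν(G_k(x∪{y}) - G_k(x)))` satisfies `λ*(y;x₁) ≤ λ*(y;x₂)` whenever `x₂ ⊆ x₁`;
equivalently `0 ≤ G_k(x₂∪{y}) - G_k(x₂) ≤ G_k(x₁∪{y}) - G_k(x₁)`. -/
theorem facet_process_repulsive
    (d k : ℕ) (hd : 2 ≤ d) (hk1 : 2 ≤ k) (hk2 : k ≤ d) (ν : ℝ) (hν : ν ≤ 0)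
    [DecidableEq (Set (EuclideanSpace ℝ (Fin d)))]
    (G : Finset (Set (EuclideanSpace ℝ (Fin d))) → ℝ)
    (hG : ∀ x, G x =
      ∑ s ∈ x.powerset.filter (fun s => s.card = k),
        (μH[((d : ℝ) - k)] (⋂₀ (s : Set (Set (EuclideanSpace ℝ (Fin d)))))).toReal)
    (x₁ x₂ : Finset (Set (EuclideanSpace ℝ (Fin d)))) (hx : x₂ ⊆ x₁)
    (y : Set (EuclideanSpace ℝ (Fin d))) (hy : y ∉ x₁)
    (hcpt : ∀ A ∈ insert y x₁, IsCompact A)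
    (hfin : ∀ s ∈ (insert y x₁).powerset, s.card = k →
      μH[((d : ℝ) - k)] (⋂₀ (s : Set (Set (EuclideanSpace ℝ (Fin d))))) ≠ ⊤) :
    Real.exp (ν * (G (insert y x₁) - G x₁)) ≤ Real.exp (ν * (G (insert y x₂) - G x₂)) ∧
      0 ≤ G (insert y x₂) - G x₂ ∧
        G (insert y x₂) - G x₂ ≤ G (insert y x₁) - G x₁ := by
  set f : Finset (Set (EuclideanSpace ℝ (Fin d))) → ℝ :=
    fun s => (μH[((d : ℝ) - k)] (⋂₀ (s : Set (Set (EuclideanSpace ℝ (Fin d)))))).toReal with hf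
  have hy₂ : y ∉ x₂ := fun h => hy (hx h)
  have key : ∀ (x : Finset (Set (EuclideanSpace ℝ (Fin d)))), y ∉ x →
      G (insert y x) - G x
        = ∑ s ∈ x.powerset.filter (fun s => s.card + 1 = k), f (insert y s) := by
    intro x hyx
    rw [hG, hG, sum_powerset_insert_filter f k y x hyx]
    ring
  have h1 := key x₁ hy
  have h2 := key x₂ hy₂
  have hnn : ∀ s, 0 ≤ f (insert y s) := fun s => ENNReal.toReal_nonneg
  have h0 : 0 ≤ G (insert y x₂) - G x₂ := by
    rw [h2]; exact Finset.sum_nonneg fun s _ => hnn s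
  have hmono : G (insert y x₂) - G x₂ ≤ G (insert y x₁) - G x₁ := by
    rw [h1, h2]
    refine Finset.sum_le_sum_of_subset_of_nonneg ?_ fun s _ _ => hnn s
    intro s hs
    simp only [Finset.mem_filter, Finset.mem_powerset] at hs ⊢
    exact ⟨hs.1.trans hx, hs.2⟩
  refine ⟨Real.exp_le_exp.2 ?_, h0, hmono⟩
  exact mul_le_mul_of_nonpos_left hmono hν
end
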